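/- arXiv:2103.02951 — 11 statements merged into one kernel-verified Lean document; each statement's English description precedes it below -/
import Mathlib

section
/- Let p be an odd prime and let α, z be p-adic integers such that ⟨−α⟩_p is even. Then Σ_{k=0}^{p−1} (α/2)_k ((3−α)/2)_k / (k!)² · z^k multiplied by Σ_{k=0}^{p−1} (α/2)_k ((1−α)/2)_k / (k!)² · z^k is congruent to Σ_{k=0}^{p−1} (α)_k (2−α)_k (1/2)_k / (k!)³ · z^k modulo p² (a congruence in ℤ_p, i.e. the difference lies in p²ℤ_p). -/
open Finset Polynomial

namespace OrrAux

variable {p : ℕ} [Fact p.Prime]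

noncomputable def P (n : ℕ) (x : ℚ_[p]) : ℚ_[p] := (ascPochhammer ℚ_[p] n).eval x

lemma P_zero (x : ℚ_[p]) : P 0 x = 1 := by simp [P]

lemma P_one (x : ℚ_[p]) : P 1 x = x := by simp [P]

lemma P_succ (n : ℕ) (x : ℚ_[p]) : P (n+1) x = P n x * (x + (n:ℚ_[p])) :=
  ascPochhammer_succ_eval n x

lemma P_succ_left (n : ℕ) (x : ℚ_[p]) : P (n+1) x = x * P n (x+1) := by
  unfold P
  rw [ascPochhammer_succ_left, eval_mul, eval_X, eval_comp, eval_add, eval_X, eval_one]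

lemma P_shift (x : ℚ_[p]) (n : ℕ) : x * P n (x+1) = P n x * (x + (n:ℚ_[p])) := by
  rw [← P_succ_left, P_succ]

lemma P_one_eval (n : ℕ) : P n (1 : ℚ_[p]) = n.factorial := by
  simp [P, ascPochhammer_eval_one]

lemma P_prod (n : ℕ) (x : ℚ_[p]) : P n x = ∏ m ∈ range n, (x + (m:ℚ_[p])) := by
  induction n with
  | zero => simp [P]
  | succ n ih => rw [P_succ, prod_range_succ, ih]

/-- The Clausen-type term. -/
noncomputable def u (A B : ℚ_[p]) (i j : ℕ) : ℚ_[p] :=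
  P i A * P i B * P j A * P j B / ((i.factorial : ℚ_[p])^2 * (j.factorial : ℚ_[p])^2)

/-- The Orr-type term. -/
noncomputable def v (A B : ℚ_[p]) (i j : ℕ) : ℚ_[p] :=
  P i A * P i (B+1) * P j A * P j B / ((i.factorial : ℚ_[p])^2 * (j.factorial : ℚ_[p])^2)

/-- Polynomial part of the WZ certificate. -/
noncomputable def Q2 (A B : ℚ_[p]) (i k : ℕ) : ℚ_[p] :=
  4*(i:ℚ_[p])^3 - 2*(7*(k:ℚ_[p])+4)*(i:ℚ_[p])^2
    + (16*(k:ℚ_[p])^2+17*(k:ℚ_[p])+3+4*(A*B))*(i:ℚ_[p])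
    - 3*(k:ℚ_[p])*((k:ℚ_[p])+1)*(2*(k:ℚ_[p])+1) - 6*((k:ℚ_[p])+1)*(A*B)

/-- The WZ certificate function; `g A B i j` corresponds to `G(k, i)` with `k = i + j`. -/
noncomputable def g (A B : ℚ_[p]) (i j : ℕ) : ℚ_[p] :=
  (i:ℚ_[p])^2 * Q2 A B i (i+j) * P i A * P i B * P j A * P j B /
    (2 * (i.factorial : ℚ_[p])^2 * ((j+1).factorial : ℚ_[p])^2)

lemma succ_cast_ne_zero (n : ℕ) : ((n:ℚ_[p]) + 1) ≠ 0 := by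
  have : (((n+1 : ℕ)):ℚ_[p]) ≠ 0 := Nat.cast_ne_zero.mpr (Nat.succ_ne_zero n)
  push_cast at this
  exact this

lemma fact_cast_ne_zero (n : ℕ) : ((n.factorial : ℚ_[p])) ≠ 0 :=
  Nat.cast_ne_zero.mpr n.factorial_ne_zero

lemma fact_sq_ne_zero (n m : ℕ) :
    ((n.factorial : ℚ_[p])^2 * (m.factorial : ℚ_[p])^2) ≠ 0 :=
  mul_ne_zero (pow_ne_zero _ (fact_cast_ne_zero n)) (pow_ne_zero _ (fact_cast_ne_zero m))

lemma Dc_ne_zero (n m : ℕ) :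
    (2 * (n.factorial : ℚ_[p])^2 * ((m.factorial : ℚ_[p]))^2) ≠ 0 :=
  mul_ne_zero (mul_ne_zero two_ne_zero (pow_ne_zero _ (fact_cast_ne_zero n)))
    (pow_ne_zero _ (fact_cast_ne_zero m))

/-- Rewrite `u` over a chosen common denominator. -/
lemma udiv (A B : ℚ_[p]) (i j : ℕ) (c D : ℚ_[p]) (hD : D ≠ 0)
    (h : (i.factorial : ℚ_[p])^2 * (j.factorial : ℚ_[p])^2 * c = D) :
    u A B i j = c * (P i A * P i B * P j A * P j B) / D := by
  unfold u
  rw [div_eq_div_iff (fact_sq_ne_zero i j) hD, ← h]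
  ring

/-- Rewrite `g` over a chosen common denominator. -/
lemma gdiv (A B : ℚ_[p]) (i j : ℕ) (c D : ℚ_[p]) (hD : D ≠ 0)
    (h : 2 * (i.factorial : ℚ_[p])^2 * ((j+1).factorial : ℚ_[p])^2 * c = D) :
    g A B i j = c * ((i:ℚ_[p])^2 * Q2 A B i (i+j) *
      (P i A * P i B * P j A * P j B)) / D := by
  unfold g
  rw [div_eq_div_iff (Dc_ne_zero i (j+1)) hD, ← h]
  ring

set_option maxHeartbeats 2000000 in
/-- The local WZ identity. -/
lemma local_id (A B : ℚ_[p]) (hB : B = 1/2 - A) (i j k : ℕ) (hk : i + j + 1 = k) :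
    ((k:ℚ_[p])+1)^3 * u A B i (j+2)
      - (2*A+(k:ℚ_[p]))*(2*B+(k:ℚ_[p]))*((k:ℚ_[p])+1/2) * u A B i (j+1)
      = g A B (i+1) j - g A B i (j+1) := by
  subst hB
  subst hk
  set Dc : ℚ_[p] := 2 * (((i+1).factorial : ℚ_[p]))^2 * (((j+2).factorial : ℚ_[p]))^2 with hDc
  have hDcne : Dc ≠ 0 := Dc_ne_zero (i+1) (j+2)
  rw [udiv _ _ i (j+2) (2*((i:ℚ_[p])+1)^2) Dc hDcne (by
    rw [hDc, Nat.factorial_succ i]; push_cast; ring)]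
  rw [udiv _ _ i (j+1) (2*((i:ℚ_[p])+1)^2*((j:ℚ_[p])+2)^2) Dc hDcne (by
    rw [hDc, Nat.factorial_succ i, Nat.factorial_succ (j+1)]; push_cast; ring)]
  rw [gdiv _ _ (i+1) j (((j:ℚ_[p])+2)^2) Dc hDcne (by
    rw [hDc, Nat.factorial_succ (j+1)]; push_cast; ring)]
  rw [gdiv _ _ i (j+1) (((i:ℚ_[p])+1)^2) Dc hDcne (by
    rw [hDc, Nat.factorial_succ i]; push_cast; ring)]
  rw [show j+2 = (j+1)+1 by ring]
  rw [P_succ (j+1), P_succ (j+1), P_succ j, P_succ j, P_succ i, P_succ i]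
  unfold Q2
  push_cast
  ring

set_option maxHeartbeats 1000000 in
/-- The boundary identity. -/
lemma boundary (A B : ℚ_[p]) (hB : B = 1/2 - A) (k : ℕ) :
    g A B k 0 + ((k:ℚ_[p])+1)^3 * (u A B k 1 + u A B (k+1) 0)
      - (2*A+(k:ℚ_[p]))*(2*B+(k:ℚ_[p]))*((k:ℚ_[p])+1/2) * u A B k 0 = 0 := by
  subst hB
  set Dc : ℚ_[p] := 2 * (((k+1).factorial : ℚ_[p]))^2 * ((Nat.factorial 1 : ℚ_[p]))^2 with hDc
  have hDcne : Dc ≠ 0 := Dc_ne_zero (k+1) 1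
  rw [udiv _ _ k 1 (2*((k:ℚ_[p])+1)^2) Dc hDcne (by
    rw [hDc, Nat.factorial_succ k]; push_cast; ring)]
  rw [udiv _ _ (k+1) 0 2 Dc hDcne (by
    rw [hDc]; simp [Nat.factorial_zero, Nat.factorial_one]; ring)]
  rw [udiv _ _ k 0 (2*((k:ℚ_[p])+1)^2) Dc hDcne (by
    rw [hDc, Nat.factorial_succ k]; simp [Nat.factorial_zero, Nat.factorial_one]; push_cast; ring)]
  rw [gdiv _ _ k 0 (((k:ℚ_[p])+1)^2) Dc hDcne (by
    rw [hDc, Nat.factorial_succ k]; push_cast; ring)]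
  rw [P_succ k, P_succ k]
  unfold Q2
  simp only [P_zero, P_one]
  push_cast
  ring

end OrrAux
namespace OrrAux

variable {p : ℕ} [Fact p.Prime]

/-- Truncated Clausen sum coefficient. -/
noncomputable def U (A B : ℚ_[p]) (k : ℕ) : ℚ_[p] :=
  ∑ ij ∈ Finset.HasAntidiagonal.antidiagonal k, u A B ij.1 ij.2

/-- Clausen ₃F₂ coefficient. -/
noncomputable def T (A B : ℚ_[p]) (k : ℕ) : ℚ_[p] :=
  P k (2*A) * P k (2*B) * P k (1/2) / ((k.factorial : ℚ_[p]))^3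

/-- Orr sum coefficient. -/
noncomputable def S (A B : ℚ_[p]) (k : ℕ) : ℚ_[p] :=
  ∑ ij ∈ Finset.HasAntidiagonal.antidiagonal k, v A B ij.1 ij.2

/-- Orr ₃F₂ coefficient. -/
noncomputable def T' (A B : ℚ_[p]) (k : ℕ) : ℚ_[p] :=
  P k (2*A) * P k (2*B+1) * P k (1/2) / ((k.factorial : ℚ_[p]))^3

lemma g_zero (A B : ℚ_[p]) (j : ℕ) : g A B 0 j = 0 := by
  unfold g
  simp

lemma U_rec (A B : ℚ_[p]) (hB : B = 1/2 - A) (k : ℕ) :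
    ((k:ℚ_[p])+1)^3 * U A B (k+1)
      = (2*A+(k:ℚ_[p]))*(2*B+(k:ℚ_[p]))*((k:ℚ_[p])+1/2) * U A B k := by
  unfold U
  rw [Finset.Nat.sum_antidiagonal_eq_sum_range_succ (fun i j => u A B i j) (k+1),
    Finset.Nat.sum_antidiagonal_eq_sum_range_succ (fun i j => u A B i j) k]
  rw [Finset.sum_range_succ (n := k+1), Finset.sum_range_succ (n := k),
    Finset.sum_range_succ (n := k)]
  simp only [Nat.sub_self, Nat.add_sub_cancel_left, Nat.add_sub_cancel]
  have key : ∑ i ∈ Finset.range k, (((k:ℚ_[p])+1)^3 * u A B i (k+1-i)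
      - (2*A+(k:ℚ_[p]))*(2*B+(k:ℚ_[p]))*((k:ℚ_[p])+1/2) * u A B i (k-i))
      = ∑ i ∈ Finset.range k, (g A B (i+1) (k-(i+1)) - g A B i (k-i)) := by
    apply Finset.sum_congr rfl
    intro i hi
    have hik : i < k := Finset.mem_range.mp hi
    have h1 : k + 1 - i = (k - 1 - i) + 2 := by omega
    have h2 : k - i = (k - 1 - i) + 1 := by omega
    have h3 : k - (i+1) = k - 1 - i := by omega
    rw [h1, h2, h3]
    exact local_id A B hB i (k-1-i) k (by omega)
  have tele : ∑ i ∈ Finset.range k, (g A B (i+1) (k-(i+1)) - g A B i (k-i))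
      = g A B k 0 - g A B 0 k := by
    have := Finset.sum_range_sub (f := fun i => g A B i (k-i)) k
    simpa using this
  have hb := boundary A B hB k
  have expand : ∑ i ∈ Finset.range k, (((k:ℚ_[p])+1)^3 * u A B i (k+1-i)
      - (2*A+(k:ℚ_[p]))*(2*B+(k:ℚ_[p]))*((k:ℚ_[p])+1/2) * u A B i (k-i))
      = ((k:ℚ_[p])+1)^3 * ∑ i ∈ Finset.range k, u A B i (k+1-i)
        - (2*A+(k:ℚ_[p]))*(2*B+(k:ℚ_[p]))*((k:ℚ_[p])+1/2)
          * ∑ i ∈ Finset.range k, u A B i (k-i) := by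
    rw [Finset.sum_sub_distrib, Finset.mul_sum, Finset.mul_sum]
  rw [expand, tele, g_zero] at key
  -- key : c1 * Σ' - c0 * Σ = g k 0 - 0
  -- goal : c1 * (Σ' + u k 1 + u (k+1) 0) = c0 * (Σ + u k 0)
  linear_combination key + hb

set_option maxHeartbeats 400000 in
lemma clausen (A B : ℚ_[p]) (hB : B = 1/2 - A) (k : ℕ) : U A B k = T A B k := by
  induction k with
  | zero =>
    unfold U T
    simp [u, P_zero]
  | succ k ih =>
    have hc : ((k:ℚ_[p])+1)^3 ≠ 0 := by
      apply pow_ne_zero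
      exact succ_cast_ne_zero k
    apply mul_left_cancel₀ hc
    rw [U_rec A B hB k, ih]
    unfold T
    rw [P_succ k (2*A), P_succ k (2*B), P_succ k (1/2), Nat.factorial_succ k]
    have hkf : ((k.factorial : ℚ_[p]))^3 ≠ 0 := pow_ne_zero _ (fact_cast_ne_zero k)
    have hk1 : ((k:ℚ_[p])+1) ≠ 0 := succ_cast_ne_zero k
    have h2 : ((((k+1)*k.factorial : ℕ)):ℚ_[p])^3 ≠ 0 :=
      pow_ne_zero _ (Nat.cast_ne_zero.mpr (Nat.mul_ne_zero (Nat.succ_ne_zero k) k.factorial_ne_zero))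
    rw [mul_div_assoc', mul_div_assoc', div_eq_div_iff hkf h2]
    push_cast
    ring
end OrrAux
namespace OrrAux

variable {p : ℕ} [Fact p.Prime]

lemma u_symm (A B : ℚ_[p]) (i j : ℕ) : u A B i j = u A B j i := by
  unfold u; ring

lemma Bv (A B : ℚ_[p]) (i j : ℕ) :
    B * v A B i j = (B + (i:ℚ_[p])) * u A B i j := by
  unfold u v
  rw [mul_div_assoc', mul_div_assoc']
  congr 1
  linear_combination (P i A * P j A * P j B) * P_shift B i

lemma sum_weighted (A B : ℚ_[p]) (k : ℕ) :
    2 * ∑ ij ∈ Finset.HasAntidiagonal.antidiagonal k, ((B + (ij.1:ℚ_[p])) * u A B ij.1 ij.2)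
      = (2*B + (k:ℚ_[p])) * U A B k := by
  have hswap : ∑ ij ∈ Finset.HasAntidiagonal.antidiagonal k, ((B + (ij.2:ℚ_[p])) * u A B ij.1 ij.2)
      = ∑ ij ∈ Finset.HasAntidiagonal.antidiagonal k, ((B + (ij.1:ℚ_[p])) * u A B ij.1 ij.2) := by
    have h := Finset.Nat.sum_antidiagonal_swap
      (n := k) (f := fun q => (B + (q.1:ℚ_[p])) * u A B q.1 q.2)
    rw [← h]
    apply Finset.sum_congr rfl
    intro q _
    simp only [Prod.fst_swap, Prod.snd_swap]
    rw [u_symm]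
  rw [two_mul]
  nth_rewrite 2 [← hswap]
  rw [← Finset.sum_add_distrib]
  unfold U
  rw [Finset.mul_sum]
  apply Finset.sum_congr rfl
  intro q hq
  have hk : q.1 + q.2 = k := Finset.HasAntidiagonal.mem_antidiagonal.mp hq
  have hc : ((q.1:ℚ_[p]) + (q.2:ℚ_[p])) = (k:ℚ_[p]) := by exact_mod_cast congrArg (Nat.cast (R := ℚ_[p])) hk
  linear_combination u A B q.1 q.2 * hc

lemma T_shift (A B : ℚ_[p]) (k : ℕ) :
    (2*B + (k:ℚ_[p])) * T A B k = 2*B * T' A B k := by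
  unfold T T'
  rw [mul_div_assoc', mul_div_assoc']
  congr 1
  linear_combination -(P k (2*A) * P k (1/2)) * P_shift (2*B) k

lemma ocoeff (A B : ℚ_[p]) (hB : B = 1/2 - A) (k : ℕ) : S A B k = T' A B k := by
  by_cases hB0 : B = 0
  · subst hB0
    have hA : A = 1/2 := by linear_combination hB
    subst hA
    unfold S T'
    rw [Finset.sum_eq_single (k, 0)]
    · unfold v
      have e1 : ((0:ℚ_[p])+1) = 1 := by ring
      have e2 : ((2:ℚ_[p])*(1/2)) = 1 := by norm_num
      have e3 : ((2:ℚ_[p])*0+1) = 1 := by norm_num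
      rw [P_zero, P_zero, e1, e2, e3, P_one_eval, Nat.factorial_zero]
      have hf : ((k.factorial : ℚ_[p])) ≠ 0 := fact_cast_ne_zero k
      field_simp
      ring
    · intro q hq hne
      have hk : q.1 + q.2 = k := Finset.HasAntidiagonal.mem_antidiagonal.mp hq
      have h2 : q.2 ≠ 0 := by
        intro h
        exact hne (by rw [Prod.ext_iff]; omega)
      unfold v
      rw [show P q.2 (0:ℚ_[p]) = 0 by
        unfold P; rw [ascPochhammer_eval_zero, if_neg h2]]
      simp
    · intro h
      exact absurd (Finset.HasAntidiagonal.mem_antidiagonal.mpr (by omega)) h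
  · have h2B : (2*B : ℚ_[p]) ≠ 0 := mul_ne_zero two_ne_zero hB0
    apply mul_left_cancel₀ h2B
    have step1 : 2*B * S A B k
        = 2 * ∑ ij ∈ Finset.HasAntidiagonal.antidiagonal k, ((B + (ij.1:ℚ_[p])) * u A B ij.1 ij.2) := by
      unfold S
      rw [Finset.mul_sum, Finset.mul_sum]
      apply Finset.sum_congr rfl
      intro q _
      linear_combination 2 * Bv A B q.1 q.2
    rw [step1, sum_weighted, clausen A B hB, T_shift]

end OrrAux
namespace OrrAux

variable {p : ℕ} [Fact p.Prime]

lemma norm_nat_le_one (m : ℕ) : ‖(m : ℚ_[p])‖ ≤ 1 := by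
  have := Padic.norm_int_le_one (p := p) (m : ℤ)
  push_cast at this
  exact this

lemma norm_nat_eq_one (m : ℕ) (hm : ¬ (p ∣ m)) : ‖(m : ℚ_[p])‖ = 1 := by
  refine le_antisymm (norm_nat_le_one m) ?_
  by_contra h
  push_neg at h
  have h2 : ‖((m : ℤ) : ℚ_[p])‖ < 1 := by push_cast; exact h
  rw [Padic.norm_intCast_lt_one_iff] at h2
  exact hm (by exact_mod_cast h2)

lemma norm_fact_eq_one (m : ℕ) (hm : m < p) : ‖((m.factorial : ℕ) : ℚ_[p])‖ = 1 := by
  apply norm_nat_eq_one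
  intro h
  have := (Nat.Prime.dvd_factorial (Fact.out)).mp h
  omega

lemma norm_two_eq_one (hp : Odd p) : ‖(2 : ℚ_[p])‖ = 1 := by
  have h2 : ((2:ℕ) : ℚ_[p]) = 2 := by norm_num
  rw [← h2]
  apply norm_nat_eq_one
  intro h
  have hple : p ≤ 2 := Nat.le_of_dvd (by norm_num) h
  have hp2 : 2 ≤ p := (Fact.out : p.Prime).two_le
  have : p = 2 := le_antisymm hple hp2
  rw [this] at hp
  exact (Nat.not_odd_iff_even.mpr (by norm_num)) hp

lemma norm_P_le_one (n : ℕ) (x : ℚ_[p]) (hx : ‖x‖ ≤ 1) : ‖P n x‖ ≤ 1 := by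
  rw [P_prod, norm_prod]
  apply Finset.prod_le_one
  · intro m _; exact norm_nonneg _
  · intro m _
    calc ‖x + (m:ℚ_[p])‖ ≤ max ‖x‖ ‖(m:ℚ_[p])‖ := Padic.nonarchimedean _ _
      _ ≤ 1 := max_le hx (norm_nat_le_one m)

lemma norm_P_small (n s : ℕ) (x : ℚ_[p]) (hx : ‖x‖ ≤ 1) (hsn : s < n)
    (hxs : ‖x + (s:ℚ_[p])‖ ≤ (p:ℝ)⁻¹) : ‖P n x‖ ≤ (p:ℝ)⁻¹ := by
  rw [P_prod]
  rw [← Finset.mul_prod_erase (Finset.range n) _ (Finset.mem_range.mpr hsn)]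
  rw [norm_mul]
  have h1 : ‖∏ m ∈ (Finset.range n).erase s, (x + (m:ℚ_[p]))‖ ≤ 1 := by
    rw [norm_prod]
    apply Finset.prod_le_one
    · intro m _; exact norm_nonneg _
    · intro m _
      calc ‖x + (m:ℚ_[p])‖ ≤ max ‖x‖ ‖(m:ℚ_[p])‖ := Padic.nonarchimedean _ _
        _ ≤ 1 := max_le hx (norm_nat_le_one m)
  calc ‖x + (s:ℚ_[p])‖ * ‖∏ m ∈ (Finset.range n).erase s, (x + (m:ℚ_[p]))‖
      ≤ (p:ℝ)⁻¹ * 1 := mul_le_mul hxs h1 (norm_nonneg _) (by positivity)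
    _ = (p:ℝ)⁻¹ := mul_one _

/-- The key per-term norm bound. -/
lemma term_bound (hp : Odd p) (A B zq : ℚ_[p]) (s t i j : ℕ)
    (hA : ‖A‖ ≤ 1) (hB : ‖B‖ ≤ 1) (hB1 : ‖B+1‖ ≤ 1) (hz : ‖zq‖ ≤ 1)
    (hAs : ‖A + (s:ℚ_[p])‖ ≤ (p:ℝ)⁻¹) (hBt : ‖B + (t:ℚ_[p])‖ ≤ (p:ℝ)⁻¹)
    (hstp : 2*s + 2*t + 1 = p)
    (hi : i < p) (hj : j < p) (hij : p ≤ i + j) :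
    ‖v A B i j * zq^(i+j)‖ ≤ (p:ℝ)^(-2 : ℤ) := by
  have hpR : (1:ℝ) < (p:ℝ) := by
    exact_mod_cast (Fact.out : p.Prime).one_lt
  have hp0 : (0:ℝ) < (p:ℝ)⁻¹ := by positivity
  -- group A : one of the two A-Pochhammers is small
  have hAgroup : ‖P i A‖ * ‖P j A‖ ≤ (p:ℝ)⁻¹ := by
    rcases (show s < i ∨ s < j by omega) with h | h
    · calc ‖P i A‖ * ‖P j A‖ ≤ (p:ℝ)⁻¹ * 1 :=
          mul_le_mul (norm_P_small i s A hA h hAs) (norm_P_le_one j A hA)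
            (norm_nonneg _) (le_of_lt hp0)
        _ = (p:ℝ)⁻¹ := mul_one _
    · calc ‖P i A‖ * ‖P j A‖ ≤ 1 * (p:ℝ)⁻¹ :=
          mul_le_mul (norm_P_le_one i A hA) (norm_P_small j s A hA h hAs)
            (norm_nonneg _) (by norm_num)
        _ = (p:ℝ)⁻¹ := one_mul _
  -- group B
  have hBgroup : ‖P i (B+1)‖ * ‖P j B‖ ≤ (p:ℝ)⁻¹ := by
    rcases (show (1 ≤ t ∧ t ≤ i) ∨ t < j by omega) with ⟨ht1, hti⟩ | h
    · have hcast : ((t - 1 : ℕ) : ℚ_[p]) = (t : ℚ_[p]) - 1 := by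
        have h' : t - 1 + 1 = t := by omega
        have := congrArg (Nat.cast (R := ℚ_[p])) h'
        push_cast at this
        linear_combination this
      have hsmall : ‖(B+1) + ((t-1:ℕ):ℚ_[p])‖ ≤ (p:ℝ)⁻¹ := by
        rw [hcast, show (B+1) + ((t:ℚ_[p]) - 1) = B + (t:ℚ_[p]) by ring]
        exact hBt
      calc ‖P i (B+1)‖ * ‖P j B‖ ≤ (p:ℝ)⁻¹ * 1 :=
          mul_le_mul (norm_P_small i (t-1) (B+1) hB1 (by omega) hsmall)
            (norm_P_le_one j B hB) (norm_nonneg _) (le_of_lt hp0)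
        _ = (p:ℝ)⁻¹ := mul_one _
    · calc ‖P i (B+1)‖ * ‖P j B‖ ≤ 1 * (p:ℝ)⁻¹ :=
          mul_le_mul (norm_P_le_one i (B+1) hB1) (norm_P_small j t B hB h hBt)
            (norm_nonneg _) (by norm_num)
        _ = (p:ℝ)⁻¹ := one_mul _
  -- assemble
  have hfact : ‖((i.factorial : ℚ_[p]))^2 * ((j.factorial : ℚ_[p]))^2‖ = 1 := by
    rw [norm_mul, norm_pow, norm_pow, norm_fact_eq_one i hi, norm_fact_eq_one j hj]
    norm_num
  have hzk : ‖zq^(i+j)‖ ≤ 1 := by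
    rw [norm_pow]
    exact pow_le_one₀ (norm_nonneg _) hz
  unfold v
  rw [norm_mul, norm_div, hfact, div_one]
  rw [norm_mul, norm_mul, norm_mul]
  have main : ‖P i A‖ * ‖P i (B+1)‖ * ‖P j A‖ * ‖P j B‖ ≤ (p:ℝ)⁻¹ * (p:ℝ)⁻¹ := by
    calc ‖P i A‖ * ‖P i (B+1)‖ * ‖P j A‖ * ‖P j B‖
        = (‖P i A‖ * ‖P j A‖) * (‖P i (B+1)‖ * ‖P j B‖) := by ring
      _ ≤ (p:ℝ)⁻¹ * (p:ℝ)⁻¹ :=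
          mul_le_mul hAgroup hBgroup (by positivity) (le_of_lt hp0)
  calc ‖P i A‖ * ‖P i (B+1)‖ * ‖P j A‖ * ‖P j B‖ * ‖zq^(i+j)‖
      ≤ ((p:ℝ)⁻¹ * (p:ℝ)⁻¹) * 1 := by
        apply mul_le_mul main hzk (norm_nonneg _) (by positivity)
    _ = (p:ℝ)^(-2 : ℤ) := by
        rw [mul_one]
        rw [show (-2 : ℤ) = -1 + -1 by norm_num, zpow_add₀ (by positivity)]
        rw [zpow_neg_one]

end OrrAux
open OrrAux in
/-- **Theorem 1.1 (Orr-type congruence).** For an odd prime `p` and `α, z ∈ ℤ_p` with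
`⟨-α⟩_p` even, the product of the truncated `₂F₁[α/2, (3-α)/2; 1 | z]` and
`₂F₁[α/2, (1-α)/2; 1 | z]` is congruent to the truncated `₃F₂[α, 2-α, 1/2; 1, 1 | z]`
modulo `p²` (the difference, computed in `ℚ_p`, lies in `p²ℤ_p`). -/
theorem orr_congruence (p : ℕ) [Fact p.Prime] (hp : Odd p) (α z : ℤ_[p])
    (hα : Even ((PadicInt.toZMod (-α)).val)) :
    ‖(∑ k ∈ Finset.range p,
          (ascPochhammer ℚ_[p] k).eval ((α : ℚ_[p]) / 2) *
            (ascPochhammer ℚ_[p] k).eval ((3 - (α : ℚ_[p])) / 2) /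
              ((k.factorial : ℚ_[p]))^2 * (z : ℚ_[p])^k) *
        (∑ k ∈ Finset.range p,
          (ascPochhammer ℚ_[p] k).eval ((α : ℚ_[p]) / 2) *
            (ascPochhammer ℚ_[p] k).eval ((1 - (α : ℚ_[p])) / 2) /
              ((k.factorial : ℚ_[p]))^2 * (z : ℚ_[p])^k) -
      ∑ k ∈ Finset.range p,
          (ascPochhammer ℚ_[p] k).eval (α : ℚ_[p]) *
            (ascPochhammer ℚ_[p] k).eval (2 - (α : ℚ_[p])) *
              (ascPochhammer ℚ_[p] k).eval (1 / 2) /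
                ((k.factorial : ℚ_[p]))^3 * (z : ℚ_[p])^k‖
      ≤ (p : ℝ) ^ (-2 : ℤ) := by
  classical
  obtain ⟨A, hA⟩ : ∃ A : ℚ_[p], A = (α : ℚ_[p])/2 := ⟨_, rfl⟩
  obtain ⟨B, hBd⟩ : ∃ B : ℚ_[p], B = (1 - (α : ℚ_[p]))/2 := ⟨_, rfl⟩
  have hB : B = 1/2 - A := by rw [hA, hBd]; ring
  -- rewrite the three sums in terms of P, A, B
  have earg1 : ((α : ℚ_[p]))/2 = A := hA.symm
  have earg2 : (3 - (α : ℚ_[p]))/2 = B + 1 := by rw [hBd]; ring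
  have earg3 : (1 - (α : ℚ_[p]))/2 = B := hBd.symm
  have earg4 : (α : ℚ_[p]) = 2*A := by rw [hA]; ring
  have earg5 : (2 : ℚ_[p]) - (α : ℚ_[p]) = 2*B+1 := by rw [hBd]; ring
  rw [show (∑ k ∈ Finset.range p,
          (ascPochhammer ℚ_[p] k).eval ((α : ℚ_[p]) / 2) *
            (ascPochhammer ℚ_[p] k).eval ((3 - (α : ℚ_[p])) / 2) /
              ((k.factorial : ℚ_[p]))^2 * (z : ℚ_[p])^k)
      = ∑ k ∈ Finset.range p, P k A * P k (B+1) / ((k.factorial : ℚ_[p]))^2 * (z : ℚ_[p])^k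
      from Finset.sum_congr rfl fun k _ => by rw [← earg1, ← earg2]; rfl]
  rw [show (∑ k ∈ Finset.range p,
          (ascPochhammer ℚ_[p] k).eval ((α : ℚ_[p]) / 2) *
            (ascPochhammer ℚ_[p] k).eval ((1 - (α : ℚ_[p])) / 2) /
              ((k.factorial : ℚ_[p]))^2 * (z : ℚ_[p])^k)
      = ∑ k ∈ Finset.range p, P k A * P k B / ((k.factorial : ℚ_[p]))^2 * (z : ℚ_[p])^k
      from Finset.sum_congr rfl fun k _ => by rw [← earg1, ← earg3]; rfl]
  rw [show (∑ k ∈ Finset.range p,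
          (ascPochhammer ℚ_[p] k).eval (α : ℚ_[p]) *
            (ascPochhammer ℚ_[p] k).eval (2 - (α : ℚ_[p])) *
              (ascPochhammer ℚ_[p] k).eval (1 / 2) /
                ((k.factorial : ℚ_[p]))^3 * (z : ℚ_[p])^k)
      = ∑ k ∈ Finset.range p, T' A B k * (z : ℚ_[p])^k
      from Finset.sum_congr rfl fun k _ => by unfold T' P; rw [earg5, earg4]]
  -- expand the product into a sum over pairs
  have hprod : (∑ k ∈ Finset.range p, P k A * P k (B+1) / ((k.factorial : ℚ_[p]))^2 * (z : ℚ_[p])^k) *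
      (∑ k ∈ Finset.range p, P k A * P k B / ((k.factorial : ℚ_[p]))^2 * (z : ℚ_[p])^k)
      = ∑ q ∈ Finset.range p ×ˢ Finset.range p,
          v A B q.1 q.2 * (z : ℚ_[p])^(q.1 + q.2) := by
    rw [Finset.sum_mul_sum]
    rw [← Finset.sum_product']
    apply Finset.sum_congr rfl
    intro q _
    unfold v
    rw [pow_add]
    field_simp
  rw [hprod]
  -- rewrite the truncated 3F2 as the sum over the small triangle
  have htri : (∑ k ∈ Finset.range p, T' A B k * (z : ℚ_[p])^k)
      = ∑ q ∈ (Finset.range p ×ˢ Finset.range p).filter (fun q => q.1 + q.2 < p),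
          v A B q.1 q.2 * (z : ℚ_[p])^(q.1 + q.2) := by
    have h1 : ∀ k ∈ Finset.range p, T' A B k * (z : ℚ_[p])^k
        = ∑ q ∈ Finset.HasAntidiagonal.antidiagonal k, v A B q.1 q.2 * (z : ℚ_[p])^(q.1 + q.2) := by
      intro k _
      rw [← ocoeff A B hB k]
      unfold S
      rw [Finset.sum_mul]
      apply Finset.sum_congr rfl
      intro q hq
      rw [Finset.HasAntidiagonal.mem_antidiagonal.mp hq]
    rw [Finset.sum_congr rfl h1]
    have hbi : ((Finset.range p).biUnion (fun k => Finset.HasAntidiagonal.antidiagonal k))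
        = (Finset.range p ×ˢ Finset.range p).filter (fun q => q.1 + q.2 < p) := by
      ext q
      simp only [Finset.mem_biUnion, Finset.mem_range, Finset.HasAntidiagonal.mem_antidiagonal,
        Finset.mem_filter, Finset.mem_product]
      constructor
      · rintro ⟨k, hk, rfl⟩
        omega
      · intro h
        exact ⟨q.1 + q.2, h.2, rfl⟩
    rw [← hbi, Finset.sum_biUnion]
    intro a _ b _ hab
    simp only [Function.onFun, Finset.disjoint_left]
    intro q hq hq2
    exact hab ((Finset.HasAntidiagonal.mem_antidiagonal.mp hq).symm.trans (Finset.HasAntidiagonal.mem_antidiagonal.mp hq2))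
  rw [htri]
  -- difference is the sum over the complement
  have hsplit : ∑ q ∈ Finset.range p ×ˢ Finset.range p,
        v A B q.1 q.2 * (z : ℚ_[p])^(q.1 + q.2)
      - ∑ q ∈ (Finset.range p ×ˢ Finset.range p).filter (fun q => q.1 + q.2 < p),
          v A B q.1 q.2 * (z : ℚ_[p])^(q.1 + q.2)
      = ∑ q ∈ (Finset.range p ×ˢ Finset.range p).filter (fun q => ¬ (q.1 + q.2 < p)),
          v A B q.1 q.2 * (z : ℚ_[p])^(q.1 + q.2) := by
    rw [← Finset.sum_filter_add_sum_filter_not (Finset.range p ×ˢ Finset.range p)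
      (fun q => q.1 + q.2 < p)]
    ring
  rw [hsplit]
  -- residue bookkeeping
  obtain ⟨m, hm⟩ := hp
  obtain ⟨n, hn⟩ := hα
  have hrlt : (PadicInt.toZMod (-α)).val < p := ZMod.val_lt _
  have hnm : n ≤ m := by omega
  -- the fundamental congruence ‖α + r‖ ≤ p⁻¹
  have hmem := PadicInt.toZMod_spec (-α)
  rw [PadicInt.maximalIdeal_eq_span_p, Ideal.mem_span_singleton] at hmem
  have hcast : (ZMod.cast (PadicInt.toZMod (-α)) : ℤ_[p])
      = (((PadicInt.toZMod (-α)).val : ℕ) : ℤ_[p]) := (ZMod.natCast_val _).symm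
  rw [hcast] at hmem
  have hnorm1 : ‖(-α - (((PadicInt.toZMod (-α)).val : ℕ) : ℤ_[p]) : ℤ_[p])‖ ≤ (p:ℝ)⁻¹ := by
    have h1 := (PadicInt.norm_lt_one_iff_dvd _).mpr hmem
    have h2 := (PadicInt.norm_le_pow_iff_norm_lt_pow_add_one
      (-α - (((PadicInt.toZMod (-α)).val : ℕ) : ℤ_[p])) (-1)).mpr (by simpa using h1)
    simpa using h2
  have hkey : ‖(α : ℚ_[p]) + (((PadicInt.toZMod (-α)).val : ℕ) : ℚ_[p])‖ ≤ (p:ℝ)⁻¹ := by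
    have hc : ((-α - (((PadicInt.toZMod (-α)).val : ℕ) : ℤ_[p]) : ℤ_[p]) : ℚ_[p])
        = -((α : ℚ_[p]) + (((PadicInt.toZMod (-α)).val : ℕ) : ℚ_[p])) := by
      push_cast
      ring
    calc ‖(α : ℚ_[p]) + (((PadicInt.toZMod (-α)).val : ℕ) : ℚ_[p])‖
        = ‖((-α - (((PadicInt.toZMod (-α)).val : ℕ) : ℤ_[p]) : ℤ_[p]) : ℚ_[p])‖ := by
          rw [hc, norm_neg]
      _ = ‖(-α - (((PadicInt.toZMod (-α)).val : ℕ) : ℤ_[p]) : ℤ_[p])‖ :=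
          PadicInt.padic_norm_e_of_padicInt _
      _ ≤ (p:ℝ)⁻¹ := hnorm1
  -- norms of A, B, B+1, z
  have hz1 : ‖(z : ℚ_[p])‖ ≤ 1 := by
    rw [PadicInt.padic_norm_e_of_padicInt]; exact z.norm_le_one
  have hα1 : ‖(α : ℚ_[p])‖ ≤ 1 := by
    rw [PadicInt.padic_norm_e_of_padicInt]; exact α.norm_le_one
  have h2n : ‖(2 : ℚ_[p])‖ = 1 := norm_two_eq_one ⟨m, hm⟩
  have hA1 : ‖A‖ ≤ 1 := by
    rw [hA, norm_div, h2n, div_one]; exact hα1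
  have hB1 : ‖B‖ ≤ 1 := by
    rw [hBd, norm_div, h2n, div_one]
    have hc : ((1 - α : ℤ_[p]) : ℚ_[p]) = 1 - (α:ℚ_[p]) := by
      rw [PadicInt.coe_sub, show ((1:ℤ_[p]):ℚ_[p]) = 1 from rfl]
    rw [← hc, PadicInt.padic_norm_e_of_padicInt]
    exact PadicInt.norm_le_one _
  have hB11 : ‖B + 1‖ ≤ 1 := by
    have hc : B + 1 = ((3 - α : ℤ_[p]) : ℚ_[p])/2 := by
      rw [hBd, PadicInt.coe_sub, show ((3:ℤ_[p]):ℚ_[p]) = 3 from rfl]; ring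
    rw [hc, norm_div, h2n, div_one, PadicInt.padic_norm_e_of_padicInt]
    exact PadicInt.norm_le_one _
  -- the two shifted smallness facts
  have hAs : ‖A + (n : ℚ_[p])‖ ≤ (p:ℝ)⁻¹ := by
    have hc : A + (n : ℚ_[p])
        = ((α : ℚ_[p]) + (((PadicInt.toZMod (-α)).val : ℕ) : ℚ_[p]))/2 := by
      rw [hA, hn]
      push_cast
      ring
    rw [hc, norm_div, h2n, div_one]
    exact hkey
  have hBt : ‖B + ((m - n : ℕ) : ℚ_[p])‖ ≤ (p:ℝ)⁻¹ := by
    have hc : B + ((m - n : ℕ) : ℚ_[p])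
        = ((p : ℚ_[p]) + (-((α : ℚ_[p]) + (((PadicInt.toZMod (-α)).val : ℕ) : ℚ_[p]))))/2 := by
      rw [hBd, Nat.cast_sub hnm, hn, show ((p:ℕ):ℚ_[p]) = ((2*m+1 : ℕ) : ℚ_[p]) by rw [← hm]]
      push_cast
      ring
    rw [hc, norm_div, h2n, div_one]
    calc ‖(p : ℚ_[p]) + (-((α : ℚ_[p]) + (((PadicInt.toZMod (-α)).val : ℕ) : ℚ_[p])))‖
        ≤ max ‖(p : ℚ_[p])‖ ‖-((α : ℚ_[p]) + (((PadicInt.toZMod (-α)).val : ℕ) : ℚ_[p]))‖ :=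
          Padic.nonarchimedean _ _
      _ ≤ (p:ℝ)⁻¹ := by
          apply max_le
          · rw [Padic.norm_p]
          · rw [norm_neg]; exact hkey
  -- final estimate
  apply IsUltrametricDist.norm_sum_le_of_forall_le_of_nonneg
  · apply zpow_nonneg
    exact_mod_cast Nat.zero_le p
  · intro q hq
    rw [Finset.mem_filter, Finset.mem_product, Finset.mem_range, Finset.mem_range] at hq
    exact term_bound ⟨m, hm⟩ A B (z : ℚ_[p]) n (m - n) q.1 q.2
      hA1 hB1 hB11 hz1 hAs hBt (by omega) hq.1.1 hq.1.2 (by omega)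
end

section
/- Let b be a positive integer and let p be a prime with p ≡ 1 (mod b) or p ≡ −1 (mod b), such that ⟨−1/b⟩_p is even. Then Σ_{k=0}^{p−1} (b²k + b − 1) · (C(2k,k)/4^k) · C(−1/b, k) · C(1/b − 1, k) ≡ 0 (mod p²), where the sum is a rational number that is a p-adic integer and the congruence is in ℤ_p. -/
open Finset

/-- The generalized binomial coefficient `C(x, k) = x(x-1)⋯(x-k+1)/k!` for `x : ℚ`. -/
noncomputable def genBinom (x : ℚ) (k : ℕ) : ℚ :=
  (descPochhammer ℚ k).eval x / (k.factorial : ℚ)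

namespace SunAux

noncomputable def uc (k : ℕ) : ℚ := (Nat.choose (2*k) k : ℚ) / 4^k

noncomputable def T (m k : ℕ) : ℚ :=
  ((k:ℚ) - ((m:ℚ)+1)*(m:ℚ)) * uc k * (-1)^k * ((m+k).choose k : ℚ) * (m.choose k : ℚ)

noncomputable def Mk (m k : ℕ) : ℚ :=
  (k:ℚ)^3*((k:ℚ)^2 - ((m:ℚ)^2+4*(m:ℚ)+6)*(k:ℚ)
    - (2*(m:ℚ)^4+16*(m:ℚ)^3+48*(m:ℚ)^2+64*(m:ℚ)+31))

noncomputable def G (m k : ℕ) : ℚ :=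
  4 * uc k * (-1)^k * ((m+k).choose k : ℚ) * ((m+3).choose k : ℚ) * Mk m k
    / (((m:ℚ)+1)*((m:ℚ)+2)*((m:ℚ)+3))

lemma choose_right_q (n k : ℕ) :
    ((n+1).choose k : ℚ) * ((n:ℚ)+1-(k:ℚ)) = (n.choose k : ℚ) * ((n:ℚ)+1) := by
  rcases le_or_gt k (n+1) with h | h
  · have := Nat.choose_mul_succ_eq n k
    have hcast : (((n+1).choose k : ℚ)) * (((n+1-k : ℕ) : ℚ)) = (n.choose k : ℚ) * ((n:ℚ)+1) := by
      exact_mod_cast congrArg (Nat.cast (R := ℚ)) this.symm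
    rw [Nat.cast_sub h] at hcast
    push_cast at hcast ⊢
    linarith [hcast]
  · rw [Nat.choose_eq_zero_of_lt h, Nat.choose_eq_zero_of_lt (by omega)]
    simp

lemma choose_diag_q (m k : ℕ) :
    ((m+k+1).choose k : ℚ) * ((m:ℚ)+1) = ((m+k).choose k : ℚ) * ((m:ℚ)+(k:ℚ)+1) := by
  have := Nat.choose_mul_succ_eq (m+k) k
  have h2 : m + k + 1 - k = m + 1 := by omega
  rw [h2] at this
  exact_mod_cast congrArg (Nat.cast (R := ℚ)) this.symm

lemma choose_succ_succ_diag_q (m k : ℕ) :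
    ((m+k+1).choose (k+1) : ℚ) * ((k:ℚ)+1) = ((m+k).choose k : ℚ) * ((m:ℚ)+(k:ℚ)+1) := by
  have h := congrArg (Nat.cast (R := ℚ)) (Nat.add_one_mul_choose_eq (m+k) k)
  push_cast [Nat.succ_eq_add_one] at h
  linear_combination -h

lemma choose_top_succ_q (n k : ℕ) :
    (n.choose (k+1) : ℚ) * ((k:ℚ)+1) = (n.choose k : ℚ) * ((n:ℚ) - (k:ℚ)) := by
  rcases le_or_gt k n with h | h
  · have := Nat.choose_succ_right_eq n k
    have hcast : ((n.choose (k+1) : ℚ)) * ((k:ℚ)+1) = (n.choose k : ℚ) * (((n-k : ℕ):ℚ)) := by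
      exact_mod_cast congrArg (Nat.cast (R := ℚ)) this
    rw [Nat.cast_sub h] at hcast
    exact hcast
  · rw [Nat.choose_eq_zero_of_lt h, Nat.choose_eq_zero_of_lt (by omega)]
    simp

lemma uc_succ (k : ℕ) : uc (k+1) * (2*((k:ℚ)+1)) = uc k * (2*(k:ℚ)+1) := by
  have h := Nat.succ_mul_centralBinom_succ k
  rw [Nat.centralBinom, Nat.centralBinom] at h
  have hcast : ((k:ℚ)+1) * ((2*(k+1)).choose (k+1) : ℚ)
      = 2*(2*(k:ℚ)+1) * ((2*k).choose k : ℚ) := by exact_mod_cast congrArg (Nat.cast (R := ℚ)) h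
  have h4 : (4:ℚ)^(k+1) = 4^k * 4 := by ring
  rw [uc, uc, h4]
  rw [div_mul_eq_mul_div, div_mul_eq_mul_div, div_eq_div_iff (by positivity) (by positivity)]
  linear_combination (4:ℚ)^k * 2 * hcast


lemma cert (m k : ℕ) :
    ((m:ℚ)+2)^2 * T m k + ((m:ℚ)+3)^2 * T (m+1) k - ((m:ℚ)+1)^2 * T (m+2) k
      - ((m:ℚ)+2)^2 * T (m+3) k = G m (k+1) - G m k := by
  have hM1 : ((m:ℚ)+1) ≠ 0 := by positivity
  have hM2 : ((m:ℚ)+2) ≠ 0 := by positivity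
  have hM3 : ((m:ℚ)+3) ≠ 0 := by positivity
  have hK1 : ((k:ℚ)+1) ≠ 0 := by positivity
  have e1 : ((m+1+k).choose k : ℚ) * ((m:ℚ)+1) = ((m+k).choose k : ℚ)*((m:ℚ)+(k:ℚ)+1) := by
    rw [show m+1+k = m+k+1 from by omega]; exact choose_diag_q m k
  have g2 := choose_diag_q (m+1) k
  push_cast at g2
  have e2 : ((m+2+k).choose k : ℚ) * (((m:ℚ)+1)*((m:ℚ)+2))
      = ((m+k).choose k : ℚ)*(((m:ℚ)+(k:ℚ)+1)*((m:ℚ)+(k:ℚ)+2)) := by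
    rw [show m+2+k = m+1+k+1 from by omega]
    linear_combination ((m:ℚ)+1)*g2 + ((m:ℚ)+(k:ℚ)+2)*e1
  have g3 := choose_diag_q (m+2) k
  push_cast at g3
  have e3 : ((m+3+k).choose k : ℚ) * (((m:ℚ)+1)*((m:ℚ)+2)*((m:ℚ)+3))
      = ((m+k).choose k : ℚ)*(((m:ℚ)+(k:ℚ)+1)*((m:ℚ)+(k:ℚ)+2)*((m:ℚ)+(k:ℚ)+3)) := by
    rw [show m+3+k = m+2+k+1 from by omega]
    linear_combination (((m:ℚ)+1)*((m:ℚ)+2))*g3 + ((m:ℚ)+(k:ℚ)+3)*e2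
  have q2 := choose_right_q (m+2) k
  push_cast at q2
  have b2 : ((m+2).choose k : ℚ) * ((m:ℚ)+3) = ((m+3).choose k : ℚ)*((m:ℚ)+3-(k:ℚ)) := by
    linear_combination -q2
  have q1 := choose_right_q (m+1) k
  push_cast at q1
  have b1 : ((m+1).choose k : ℚ) * (((m:ℚ)+3)*((m:ℚ)+2))
      = ((m+3).choose k : ℚ)*(((m:ℚ)+3-(k:ℚ))*((m:ℚ)+2-(k:ℚ))) := by
    linear_combination -((m:ℚ)+3)*q1 + ((m:ℚ)+2-(k:ℚ))*b2
  have q0 := choose_right_q m k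
  push_cast at q0
  have b0 : (m.choose k : ℚ) * (((m:ℚ)+3)*((m:ℚ)+2)*((m:ℚ)+1))
      = ((m+3).choose k : ℚ)*(((m:ℚ)+3-(k:ℚ))*((m:ℚ)+2-(k:ℚ))*((m:ℚ)+1-(k:ℚ))) := by
    linear_combination -(((m:ℚ)+3)*((m:ℚ)+2))*q0 + ((m:ℚ)+1-(k:ℚ))*b1
  have hu1 := uc_succ k
  have a1 : ((m+(k+1)).choose (k+1) : ℚ) * ((k:ℚ)+1)
      = ((m+k).choose k : ℚ)*((m:ℚ)+(k:ℚ)+1) := by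
    rw [show m+(k+1) = m+k+1 from by omega]; exact choose_succ_succ_diag_q m k
  have bb := choose_top_succ_q (m+3) k
  push_cast at bb
  -- now unfold and normalize
  have hf1 : ((m+1+k).choose k : ℚ) = ((m+k).choose k : ℚ)*((m:ℚ)+(k:ℚ)+1)/((m:ℚ)+1) := by
    rw [eq_div_iff hM1]; exact e1
  have hf2 : ((m+2+k).choose k : ℚ)
      = ((m+k).choose k : ℚ)*(((m:ℚ)+(k:ℚ)+1)*((m:ℚ)+(k:ℚ)+2))/(((m:ℚ)+1)*((m:ℚ)+2)) := by
    rw [eq_div_iff (by positivity)]; exact e2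
  have hf3 : ((m+3+k).choose k : ℚ)
      = ((m+k).choose k : ℚ)*(((m:ℚ)+(k:ℚ)+1)*((m:ℚ)+(k:ℚ)+2)*((m:ℚ)+(k:ℚ)+3))
        /(((m:ℚ)+1)*((m:ℚ)+2)*((m:ℚ)+3)) := by
    rw [eq_div_iff (by positivity)]; exact e3
  have hb2 : ((m+2).choose k : ℚ) = ((m+3).choose k : ℚ)*((m:ℚ)+3-(k:ℚ))/((m:ℚ)+3) := by
    rw [eq_div_iff hM3]; exact b2
  have hb1 : ((m+1).choose k : ℚ)
      = ((m+3).choose k : ℚ)*(((m:ℚ)+3-(k:ℚ))*((m:ℚ)+2-(k:ℚ)))/(((m:ℚ)+3)*((m:ℚ)+2)) := by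
    rw [eq_div_iff (by positivity)]; exact b1
  have hb0 : (m.choose k : ℚ)
      = ((m+3).choose k : ℚ)*(((m:ℚ)+3-(k:ℚ))*((m:ℚ)+2-(k:ℚ))*((m:ℚ)+1-(k:ℚ)))
        /(((m:ℚ)+3)*((m:ℚ)+2)*((m:ℚ)+1)) := by
    rw [eq_div_iff (by positivity)]; exact b0
  have hhu : uc (k+1) = uc k * (2*(k:ℚ)+1)/(2*((k:ℚ)+1)) := by
    rw [eq_div_iff (by positivity)]; exact hu1
  have ha1 : ((m+(k+1)).choose (k+1) : ℚ)
      = ((m+k).choose k : ℚ)*((m:ℚ)+(k:ℚ)+1)/((k:ℚ)+1) := by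
    rw [eq_div_iff hK1]; exact a1
  have hbb : ((m+3).choose (k+1) : ℚ) = ((m+3).choose k : ℚ)*((m:ℚ)+3-(k:ℚ))/((k:ℚ)+1) := by
    rw [eq_div_iff hK1]; exact bb
  simp only [T, G, Mk]
  push_cast
  rw [hf1, hf2, hf3, hb0, hb1, hb2, hhu, ha1, hbb, pow_succ (-1:ℚ) k]
  field_simp
  ring

noncomputable def SU (m : ℕ) : ℚ := ∑ k ∈ Finset.range (m+1), T m k

lemma T_eq_zero {m k : ℕ} (h : m < k) : T m k = 0 := by
  simp [T, Nat.choose_eq_zero_of_lt h]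

lemma sum_T (m K : ℕ) (h : m+1 ≤ K) : ∑ k ∈ Finset.range K, T m k = SU m := by
  rw [SU]
  exact (Finset.sum_subset (Finset.range_subset_range.2 h)
    (fun x _ hx => T_eq_zero (by simp only [Finset.mem_range, not_lt] at hx; omega))).symm

lemma G_zero (m : ℕ) : G m 0 = 0 := by simp [G, Mk]

lemma G_top (m : ℕ) : G m (m+4) = 0 := by
  have : (m+3).choose (m+4) = 0 := Nat.choose_eq_zero_of_lt (by omega)
  simp [G, this]

lemma SU_rec (m : ℕ) :
    ((m:ℚ)+2)^2 * SU m + ((m:ℚ)+3)^2 * SU (m+1) - ((m:ℚ)+1)^2 * SU (m+2)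
      - ((m:ℚ)+2)^2 * SU (m+3) = 0 := by
  have h := Finset.sum_congr rfl (fun k (_ : k ∈ Finset.range (m+4)) => cert m k)
  rw [Finset.sum_range_sub (G m)] at h
  rw [G_zero, G_top] at h
  have hs : ∀ j, j + 1 ≤ m + 4 →
      ∑ k ∈ Finset.range (m+4), T j k = SU j := fun j hj => sum_T j (m+4) hj
  simp only [Finset.sum_add_distrib, Finset.sum_sub_distrib, ← Finset.mul_sum] at h
  rw [hs m (by omega), hs (m+1) (by omega), hs (m+2) (by omega), hs (m+3) (by omega)] at h
  linarith [h]

lemma SU_zero : SU 0 = 0 := by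
  simp [SU, T]

lemma SU_one : SU 1 = -((2*(0:ℚ)+1)^2 * (uc 0)^2) := by
  rw [SU]
  simp [Finset.sum_range_succ, T, uc]
  norm_num

lemma SU_two : SU 2 = 0 := by
  rw [SU]
  simp [Finset.sum_range_succ, T, uc]
  norm_num [Nat.choose]

lemma SU_closed : ∀ j : ℕ, SU (2*j) = 0 ∧ SU (2*j+1) = -((2*(j:ℚ)+1)^2 * (uc j)^2)
    ∧ SU (2*j+2) = 0 := by
  intro j
  induction j with
  | zero => exact ⟨SU_zero, SU_one, SU_two⟩
  | succ j ih =>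
    obtain ⟨h0, h1, h2⟩ := ih
    have hrec1 := SU_rec (2*j)
    have hrec2 := SU_rec (2*j+1)
    have hu := uc_succ j
    have huc2 : (uc (j+1))^2*(2*(j:ℚ)+2)^2 = (uc j)^2*(2*(j:ℚ)+1)^2 := by
      linear_combination (uc (j+1)*(2*(j:ℚ)+2) + uc j*(2*(j:ℚ)+1))*hu
    rw [show 2*j+1+1 = 2*j+2 from by omega, show 2*j+1+2 = 2*j+3 from by omega,
      show 2*j+1+3 = 2*j+4 from by omega] at hrec2
    rw [h0, h1, h2] at hrec1
    push_cast at hrec1 hrec2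
    -- SU (2j+3)
    have key3 : SU (2*j+3) = -((2*((j:ℚ)+1)+1)^2 * (uc (j+1))^2) := by
      have hmul : ((2*(j:ℚ)+2))^2 * SU (2*j+3)
          = ((2*(j:ℚ)+2))^2 * (-((2*((j:ℚ)+1)+1)^2 * (uc (j+1))^2)) := by
        linear_combination -hrec1 + (2*(j:ℚ)+3)^2*huc2
      exact mul_left_cancel₀ (pow_ne_zero 2 (by positivity)) hmul
    refine ⟨h2, by exact_mod_cast key3, ?_⟩
    -- SU (2j+4)
    rw [h1, h2, key3] at hrec2
    have hmul : ((2*(j:ℚ)+3))^2 * SU (2*j+4) = ((2*(j:ℚ)+3))^2 * 0 := by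
      linear_combination -hrec2 + (2*(j:ℚ)+3)^2*huc2
    have hz := mul_left_cancel₀ (pow_ne_zero 2 (show ((2*(j:ℚ)+3)) ≠ 0 by positivity)) hmul
    rw [show 2*(j+1)+2 = 2*j+4 from by omega]
    exact hz

lemma SU_even {m : ℕ} (h : Even m) : SU m = 0 := by
  obtain ⟨j, rfl⟩ := h
  have := (SU_closed j).1
  rwa [two_mul] at this

/-! ### Part B : the truncated sum as polynomial evaluation -/

lemma prod_asc (m k : ℕ) :
    ∏ j ∈ Finset.range k, ((m:ℚ)+1+(j:ℚ)) = (k.factorial : ℚ) * ((m+k).choose k : ℚ) := by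
  induction k with
  | zero => simp
  | succ k ih =>
    rw [Finset.prod_range_succ, ih]
    have h := choose_succ_succ_diag_q m k
    have hfac : ((k+1).factorial : ℚ) = (k.factorial:ℚ)*((k:ℚ)+1) := by
      push_cast [Nat.factorial_succ]; ring
    rw [show m+(k+1) = m+k+1 from by omega, hfac]
    linear_combination -(k.factorial:ℚ) * h

lemma prod_desc (m k : ℕ) :
    ∏ j ∈ Finset.range k, (1-((m:ℚ)+1)+(j:ℚ))
      = (-1)^k * (k.factorial : ℚ) * (m.choose k : ℚ) := by
  induction k with
  | zero => simp
  | succ k ih =>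
    rw [Finset.prod_range_succ, ih]
    have h := choose_top_succ_q m k
    have hfac : ((k+1).factorial : ℚ) = (k.factorial:ℚ)*((k:ℚ)+1) := by
      push_cast [Nat.factorial_succ]; ring
    rw [hfac, pow_succ]
    linear_combination ((-1:ℚ)^k * (k.factorial:ℚ)) * h

noncomputable def Psi (p : ℕ) (y : ℚ) : ℚ :=
  ∑ k ∈ Finset.range p, ((k:ℚ) + y - y^2) * uc k
    * ((∏ j ∈ Finset.range k, (y + (j:ℚ))) * (∏ j ∈ Finset.range k, (1 - y + (j:ℚ))))
    / ((k.factorial : ℚ))^2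

lemma Psi_symm (p : ℕ) (y : ℚ) : Psi p (1-y) = Psi p y := by
  unfold Psi
  refine Finset.sum_congr rfl fun k _ => ?_
  have h1 : ∏ j ∈ Finset.range k, (1-(1-y) + (j:ℚ)) = ∏ j ∈ Finset.range k, (y + (j:ℚ)) :=
    Finset.prod_congr rfl fun j _ => by ring
  rw [h1]
  ring

lemma Psi_nat (p m : ℕ) (h : m+1 ≤ p) : Psi p ((m:ℚ)+1) = SU m := by
  unfold Psi
  rw [← sum_T m p h]
  refine Finset.sum_congr rfl fun k _ => ?_
  rw [prod_asc m k]
  have h2 : ∏ j ∈ Finset.range k, (1 - ((m:ℚ)+1) + (j:ℚ))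
      = (-1)^k * (k.factorial : ℚ) * (m.choose k : ℚ) := prod_desc m k
  rw [h2, T]
  have hf : ((k.factorial : ℚ)) ≠ 0 := by positivity
  field_simp
  ring

/-- The common denominator. -/
def dd (p : ℕ) : ℕ := 4^(p-1) * ((p-1).factorial)^2

/-- Integer coefficients. -/
def ee (p k : ℕ) : ℕ := (2*k).choose k * 4^(p-1-k) * ((p-1).factorial / k.factorial)^2

lemma ee_cast (p k : ℕ) (hk : k < p) :
    ((ee p k : ℕ) : ℚ) = (dd p : ℚ) * uc k / (k.factorial:ℚ)^2 := by
  have hk1 : k ≤ p - 1 := by omega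
  have hdvd : k.factorial ∣ (p-1).factorial := Nat.factorial_dvd_factorial hk1
  have hfq : (((p-1).factorial / k.factorial : ℕ) : ℚ)
      = ((p-1).factorial : ℚ) / (k.factorial : ℚ) := by
    rw [Nat.cast_div hdvd (by positivity)]
  have hpow : ((4:ℚ))^(p-1-k) = 4^(p-1) / 4^k := by
    rw [pow_sub₀ (4:ℚ) (by norm_num) hk1]
    rw [div_eq_mul_inv]
  rw [ee, dd, uc]
  push_cast [hfq]
  rw [hpow]
  have hf : ((k.factorial : ℚ)) ≠ 0 := by positivity
  field_simp

/-- The integer polynomial `(k + X - X²)·∏ (X+j)((j+1)-X)`. -/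
noncomputable def W (k : ℕ) : Polynomial ℤ :=
  (Polynomial.C (k:ℤ) + Polynomial.X - Polynomial.X^2)
    * ∏ j ∈ Finset.range k,
        ((Polynomial.X + Polynomial.C (j:ℤ)) * (Polynomial.C ((j:ℤ)+1) - Polynomial.X))

noncomputable def Fz (p : ℕ) : Polynomial ℤ :=
  ∑ k ∈ Finset.range p, Polynomial.C ((ee p k : ℤ)) * W k

lemma aeval_W (y : ℚ) (k : ℕ) :
    Polynomial.aeval y (W k)
      = ((k:ℚ) + y - y^2) *
        ((∏ j ∈ Finset.range k, (y + (j:ℚ))) * (∏ j ∈ Finset.range k, (1 - y + (j:ℚ)))) := by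
  rw [W, map_mul, map_prod]
  have h1 : (Polynomial.aeval y) (Polynomial.C (k:ℤ) + Polynomial.X - Polynomial.X^2)
      = (k:ℚ) + y - y^2 := by
    simp
  rw [h1]
  congr 1
  rw [← Finset.prod_mul_distrib]
  refine Finset.prod_congr rfl fun j _ => ?_
  simp only [map_mul, map_add, map_sub, Polynomial.aeval_X, Polynomial.aeval_C]
  push_cast
  ring

lemma aeval_Fz (p : ℕ) (y : ℚ) :
    Polynomial.aeval y (Fz p) = (dd p : ℚ) * Psi p y := by
  rw [Fz, map_sum, Psi, Finset.mul_sum]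
  refine Finset.sum_congr rfl fun k hk => ?_
  have hkp : k < p := Finset.mem_range.mp hk
  rw [map_mul, aeval_W, Polynomial.aeval_C]
  have : ((algebraMap ℤ ℚ) ((ee p k : ℕ) : ℤ)) = ((ee p k : ℕ) : ℚ) := by
    simp
  rw [this, ee_cast p k hkp]
  ring

lemma eval_int_cast_q (q : Polynomial ℤ) (z : ℤ) :
    (((q.eval z) : ℤ) : ℚ) = Polynomial.aeval ((z:ℚ)) q := by
  rw [Polynomial.aeval_def, Polynomial.eval]
  have := Polynomial.hom_eval₂ q (RingHom.id ℤ) (Int.castRingHom ℚ) z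
  simpa using this

lemma norm_sum_le_one {p : ℕ} [Fact p.Prime] {ι : Type*} (s : Finset ι) (f : ι → ℚ_[p])
    (h : ∀ i ∈ s, ‖f i‖ ≤ 1) : ‖∑ i ∈ s, f i‖ ≤ 1 := by
  classical
  induction s using Finset.cons_induction with
  | empty => simp
  | cons a s ha ih =>
    rw [Finset.sum_cons]
    refine le_trans (Padic.nonarchimedean _ _) (max_le ?_ ?_)
    · exact h a (Finset.mem_cons_self a s)
    · exact ih fun i hi => h i (Finset.mem_cons_of_mem hi)

lemma norm_nat_eq_one {p : ℕ} [Fact p.Prime] {b : ℕ} (hpb : ¬ p ∣ b) :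
    ‖((b:ℕ) : ℚ_[p])‖ = 1 := by
  have h1 : ‖(((b:ℤ)) : ℚ_[p])‖ ≤ 1 := Padic.norm_int_le_one _
  have h2 : ¬ ‖(((b:ℤ)) : ℚ_[p])‖ < 1 := by
    rw [Padic.norm_intCast_lt_one_iff]
    exact_mod_cast hpb
  push_cast at h1 h2 ⊢
  linarith [lt_or_eq_of_le h1]

lemma aeval_int_le_one {p : ℕ} [Fact p.Prime] (q : Polynomial ℤ) (y : ℚ_[p])
    (hy : ‖y‖ ≤ 1) : ‖Polynomial.aeval y q‖ ≤ 1 := by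
  rw [Polynomial.aeval_eq_sum_range]
  refine norm_sum_le_one _ _ fun i _ => ?_
  rw [zsmul_eq_mul, norm_mul]
  calc ‖((q.coeff i : ℤ) : ℚ_[p])‖ * ‖y ^ i‖
      ≤ 1 * 1 := by
        refine mul_le_mul (Padic.norm_int_le_one _) ?_ (norm_nonneg _) zero_le_one
        rw [norm_pow]
        exact pow_le_one₀ (norm_nonneg _) hy
    _ = 1 := by norm_num

end SunAux



open SunAux

lemma descPochhammer_eval_prod (k : ℕ) (x : ℚ) :
    (descPochhammer ℚ k).eval x = ∏ j ∈ Finset.range k, (x - (j:ℚ)) := by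
  induction k with
  | zero => simp
  | succ k ih => rw [descPochhammer_succ_eval, ih, Finset.prod_range_succ]

/-- **Corollary 1.1.** Let `b` be a positive integer and `p` a prime with `p ≡ ±1 (mod b)`
and `⟨-1/b⟩_p` even. Then
`Σ_{k=0}^{p-1} (b²k + b - 1) (C(2k,k)/4^k) C(-1/b,k) C(1/b-1,k) ≡ 0 (mod p²)`,
the sum being a rational number viewed in `ℚ_p` and the congruence holding in `ℤ_p`. -/
theorem sun_conjecture_n_eq_one (b : ℕ) (hb : 0 < b) (p : ℕ) [Fact p.Prime]
    (hpb : (p : ℤ) ≡ 1 [ZMOD (b : ℤ)] ∨ (p : ℤ) ≡ -1 [ZMOD (b : ℤ)])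
    (heven : Even ((-(b : ZMod p)⁻¹ : ZMod p)).val) :
    ‖((∑ k ∈ Finset.range p,
        ((b : ℚ)^2 * k + b - 1) * ((Nat.choose (2 * k) k : ℚ) / 4 ^ k) *
          genBinom (-1 / b) k * genBinom (1 / b - 1) k : ℚ) : ℚ_[p])‖
      ≤ (p : ℝ) ^ (-2 : ℤ) := by
  have hp : p.Prime := Fact.out
  have hp2 : 2 ≤ p := hp.two_le
  -- p does not divide b
  have hpdvd : ¬ p ∣ b := by
    rcases hpb with h | h
    · intro hd
      have hd1 : (b:ℤ) ∣ 1 - (p:ℤ) := Int.ModEq.dvd h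
      have hd2 : (p:ℤ) ∣ 1 - (p:ℤ) := dvd_trans (Int.natCast_dvd_natCast.mpr hd) hd1
      have hd3 : (p:ℤ) ∣ 1 := by
        have : (p:ℤ) ∣ (1 - (p:ℤ)) + (p:ℤ) := dvd_add hd2 dvd_rfl
        simpa using this
      have := Int.le_of_dvd one_pos hd3
      omega
    · intro hd
      have hd1 : (b:ℤ) ∣ -1 - (p:ℤ) := Int.ModEq.dvd h
      have hd2 : (p:ℤ) ∣ -1 - (p:ℤ) := dvd_trans (Int.natCast_dvd_natCast.mpr hd) hd1
      have hd3 : (p:ℤ) ∣ 1 := by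
        have : (p:ℤ) ∣ -((-1 - (p:ℤ)) + (p:ℤ)) := (dvd_add hd2 dvd_rfl).neg_right
        simpa using this
      have := Int.le_of_dvd one_pos hd3
      omega
  have hbZ : (b : ZMod p) ≠ 0 := by
    rw [Ne, ZMod.natCast_eq_zero_iff]
    exact hpdvd
  -- the residue r
  set x : ZMod p := -(b : ZMod p)⁻¹ with hxdef
  set r : ℕ := x.val with hrdef
  have hrne : r ≠ 0 := by
    rw [hrdef, Ne, ZMod.val_eq_zero, hxdef, neg_eq_zero, inv_eq_zero]
    exact hbZ
  have hrlt : r < p := ZMod.val_lt x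
  have hreven : r % 2 = 0 := Nat.even_iff.mp heven
  -- p is odd
  have hpne2 : p ≠ 2 := by rintro rfl; omega
  have hpodd : p % 2 = 1 := Nat.odd_iff.mp (hp.odd_of_ne_two hpne2)
  -- m := p - r - 1
  set m : ℕ := p - r - 1 with hmdef
  have hm1 : m + 1 = p - r := by omega
  have hmp : m + 1 ≤ p := by omega
  have hmeven : Even m := by rw [Nat.even_iff]; omega
  -- congruence : p ∣ 1 - (m+1) b
  have hcast_m : ((m+1 : ℕ) : ZMod p) = (b : ZMod p)⁻¹ := by
    have h1 : ((m+1 : ℕ) : ZMod p) = ((p - r : ℕ) : ZMod p) := by rw [hm1]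
    rw [h1, Nat.cast_sub hrlt.le, ZMod.natCast_self, zero_sub]
    have h2 : ((r:ℕ) : ZMod p) = x := ZMod.natCast_rightInverse x
    rw [h2, hxdef, neg_neg]
  have hcong1 : (p:ℤ) ∣ 1 - ((m:ℤ)+1) * (b:ℤ) := by
    rw [← ZMod.intCast_zmod_eq_zero_iff_dvd]
    push_cast
    have : ((m : ZMod p) + 1) = ((m+1 : ℕ) : ZMod p) := by push_cast; ring
    rw [this, hcast_m]
    rw [inv_mul_cancel₀ hbZ]
    ring
  have hcong2 : (p:ℤ) ∣ 1 - (((m:ℤ)+1) - (p:ℤ)) * (b:ℤ) := by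
    have : 1 - (((m:ℤ)+1) - (p:ℤ)) * (b:ℤ) = (1 - ((m:ℤ)+1) * (b:ℤ)) + (p:ℤ) * b := by ring
    rw [this]
    exact dvd_add hcong1 (dvd_mul_right _ _)
  -- roots of Fz
  have hroot1 : (Fz p).eval ((m:ℤ)+1) = 0 := by
    have hq : (((Fz p).eval ((m:ℤ)+1) : ℤ) : ℚ) = (dd p : ℚ) * Psi p ((m:ℚ)+1) := by
      rw [eval_int_cast_q]
      push_cast
      exact aeval_Fz p ((m:ℚ)+1)
    rw [Psi_nat p m hmp, SU_even hmeven, mul_zero] at hq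
    exact_mod_cast hq
  have hroot2 : (Fz p).eval (((m:ℤ)+1) - (p:ℤ)) = 0 := by
    have hq : (((Fz p).eval (((m:ℤ)+1) - (p:ℤ)) : ℤ) : ℚ)
        = (dd p : ℚ) * Psi p (((m:ℚ)+1) - (p:ℚ)) := by
      rw [eval_int_cast_q]
      push_cast
      exact aeval_Fz p (((m:ℚ)+1) - (p:ℚ))
    have hy : ((m:ℚ)+1) - (p:ℚ) = 1 - ((r:ℚ)+1) := by
      have : ((m+1:ℕ) : ℚ) = ((p - r : ℕ) : ℚ) := by rw [hm1]
      rw [Nat.cast_sub hrlt.le] at this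
      push_cast at this
      linarith
    have hy2 : Psi p (((m:ℚ)+1) - (p:ℚ)) = 0 := by
      rw [hy, Psi_symm]
      have : ((r:ℚ)+1) = ((r:ℕ):ℚ)+1 := by ring
      rw [this, Psi_nat p r (by omega), SU_even heven]
    rw [hy2, mul_zero] at hq
    exact_mod_cast hq
  -- factorization
  obtain ⟨F1, hF1⟩ := (Polynomial.dvd_iff_isRoot.mpr hroot1 :
    (Polynomial.X - Polynomial.C ((m:ℤ)+1)) ∣ Fz p)
  have hF1beta : F1.eval (((m:ℤ)+1) - (p:ℤ)) = 0 := by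
    have h := hroot2
    rw [hF1, Polynomial.eval_mul, Polynomial.eval_sub, Polynomial.eval_X,
      Polynomial.eval_C] at h
    have hne : (((m:ℤ)+1) - (p:ℤ)) - ((m:ℤ)+1) ≠ 0 := by
      intro hc
      have : (p:ℤ) = 0 := by linarith [hc]
      omega
    rcases mul_eq_zero.mp h with h' | h'
    · exact absurd h' hne
    · exact h'
  obtain ⟨Hz, hHz⟩ := (Polynomial.dvd_iff_isRoot.mpr hF1beta :
    (Polynomial.X - Polynomial.C (((m:ℤ)+1) - (p:ℤ))) ∣ F1)
  rw [hHz] at hF1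
  -- evaluate at a = 1/b over ℚ
  set a : ℚ := 1 / (b:ℚ) with hadef
  have hbq : (b:ℚ) ≠ 0 := by positivity
  have hkey : (dd p : ℚ) * Psi p a
      = (a - ((m:ℚ)+1)) * ((a - (((m:ℚ)+1) - (p:ℚ))) * Polynomial.aeval a Hz) := by
    have := congrArg (Polynomial.aeval a) hF1
    rw [aeval_Fz] at this
    rw [this]
    simp only [map_mul, map_sub, Polynomial.aeval_X, Polynomial.aeval_C]
    push_cast
    ring
  -- the sum equals b² * Psi p a
  have hsum : (∑ k ∈ Finset.range p,
      ((b : ℚ)^2 * k + b - 1) * ((Nat.choose (2 * k) k : ℚ) / 4 ^ k) *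
        genBinom (-1 / b) k * genBinom (1 / b - 1) k : ℚ) = (b:ℚ)^2 * Psi p a := by
    rw [Psi, Finset.mul_sum]
    refine Finset.sum_congr rfl fun k _ => ?_
    rw [genBinom, genBinom, descPochhammer_eval_prod, descPochhammer_eval_prod]
    have hprod : (∏ j ∈ Finset.range k, (-1/(b:ℚ) - (j:ℚ)))
        * (∏ j ∈ Finset.range k, (1/(b:ℚ) - 1 - (j:ℚ)))
        = (∏ j ∈ Finset.range k, (a + (j:ℚ))) * (∏ j ∈ Finset.range k, (1 - a + (j:ℚ))) := by
      rw [← Finset.prod_mul_distrib, ← Finset.prod_mul_distrib]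
      refine Finset.prod_congr rfl fun j _ => ?_
      rw [hadef]
      field_simp
      ring
    have hscal : (b:ℚ)^2*(k:ℚ) + (b:ℚ) - 1 = (b:ℚ)^2 * ((k:ℚ) + a - a^2) := by
      rw [hadef]; field_simp
    calc ((b : ℚ)^2 * k + b - 1) * ((Nat.choose (2 * k) k : ℚ) / 4 ^ k) *
          ((∏ j ∈ Finset.range k, (-1/(b:ℚ) - (j:ℚ))) / (k.factorial : ℚ)) *
          ((∏ j ∈ Finset.range k, (1/(b:ℚ) - 1 - (j:ℚ))) / (k.factorial : ℚ))
        = (((b : ℚ)^2 * k + b - 1) * ((Nat.choose (2 * k) k : ℚ) / 4 ^ k)) *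
            ((∏ j ∈ Finset.range k, (-1/(b:ℚ) - (j:ℚ)))
              * (∏ j ∈ Finset.range k, (1/(b:ℚ) - 1 - (j:ℚ)))) / (k.factorial : ℚ)^2 := by
          ring
      _ = (((b : ℚ)^2 * k + b - 1) * ((Nat.choose (2 * k) k : ℚ) / 4 ^ k)) *
            ((∏ j ∈ Finset.range k, (a + (j:ℚ)))
              * (∏ j ∈ Finset.range k, (1 - a + (j:ℚ)))) / (k.factorial : ℚ)^2 := by
          rw [hprod]
      _ = (b:ℚ)^2 * (((k:ℚ) + a - a^2) * uc k *
            ((∏ j ∈ Finset.range k, (a + (j:ℚ)))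
              * (∏ j ∈ Finset.range k, (1 - a + (j:ℚ)))) / (k.factorial : ℚ)^2) := by
          rw [hscal, uc]; ring
  -- now pass to ℚ_p
  rw [hsum]
  -- cast hkey to ℚ_p
  have hcast := congrArg (fun q : ℚ => (q : ℚ_[p])) hkey
  simp only [Rat.cast_mul, Rat.cast_sub, Rat.cast_add, Rat.cast_one, Rat.cast_natCast] at hcast
  -- auxiliary norms
  have hnormb : ‖((b:ℕ) : ℚ_[p])‖ = 1 := norm_nat_eq_one hpdvd
  have hnormdd : ‖((dd p : ℕ) : ℚ_[p])‖ = 1 := by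
    refine norm_nat_eq_one ?_
    rw [dd]
    intro h
    rcases (Nat.Prime.dvd_mul hp).mp h with h' | h'
    · rw [show (4:ℕ) = 2^2 from rfl, ← pow_mul] at h'
      have := (Nat.prime_dvd_prime_iff_eq hp Nat.prime_two).mp (hp.dvd_of_dvd_pow h')
      exact hpne2 this
    · rw [pow_two] at h'
      rcases (Nat.Prime.dvd_mul hp).mp h' with h'' | h'' <;>
      · have := (Nat.Prime.dvd_factorial hp).mp h''
        omega
  -- norms of the two linear factors
  have hfac1 : (a - ((m:ℚ)+1)) = ((1 - ((m:ℤ)+1)*(b:ℤ) : ℤ) : ℚ) / ((b:ℕ):ℚ) := by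
    rw [hadef]; push_cast; field_simp
  have hfac2 : (a - (((m:ℚ)+1) - (p:ℚ)))
      = ((1 - (((m:ℤ)+1) - (p:ℤ))*(b:ℤ) : ℤ) : ℚ) / ((b:ℕ):ℚ) := by
    rw [hadef]; push_cast; field_simp
  have hnf1 : ‖((a - ((m:ℚ)+1) : ℚ) : ℚ_[p])‖ ≤ (p:ℝ)^(-1:ℤ) := by
    rw [hfac1, Rat.cast_div, Rat.cast_intCast, Rat.cast_natCast, norm_div, hnormb, div_one]
    have hle := (Padic.norm_int_le_pow_iff_dvd (1 - ((m:ℤ)+1)*(b:ℤ)) 1).mpr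
      (by simpa using hcong1)
    simpa using hle
  have hnf2 : ‖((a - (((m:ℚ)+1) - (p:ℚ)) : ℚ) : ℚ_[p])‖ ≤ (p:ℝ)^(-1:ℤ) := by
    rw [hfac2, Rat.cast_div, Rat.cast_intCast, Rat.cast_natCast, norm_div, hnormb, div_one]
    have hle := (Padic.norm_int_le_pow_iff_dvd (1 - (((m:ℤ)+1) - (p:ℤ))*(b:ℤ)) 1).mpr
      (by simpa using hcong2)
    simpa using hle
  -- norm of the aeval factor
  have haH : ((Polynomial.aeval a Hz : ℚ) : ℚ_[p]) = Polynomial.aeval ((a:ℚ) : ℚ_[p]) Hz := by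
    rw [Polynomial.aeval_def, Polynomial.aeval_def]
    have := Polynomial.hom_eval₂ Hz (Int.castRingHom ℚ) (Rat.castHom ℚ_[p]) a
    have hcomp : (Rat.castHom ℚ_[p]).comp (Int.castRingHom ℚ) = Int.castRingHom ℚ_[p] := by
      ext z
      simp
    rw [hcomp] at this
    simpa [algebraMap_int_eq] using this
  have hna : ‖((a:ℚ) : ℚ_[p])‖ ≤ 1 := by
    rw [hadef]
    push_cast
    rw [norm_div, hnormb, div_one]
    simp
  have hnH : ‖((Polynomial.aeval a Hz : ℚ) : ℚ_[p])‖ ≤ 1 := by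
    rw [haH]
    exact aeval_int_le_one Hz _ hna
  -- combine
  have hprodnorm : ‖((Psi p a : ℚ) : ℚ_[p])‖ ≤ (p:ℝ)^(-2:ℤ) := by
    have hmuln := congrArg (fun y : ℚ_[p] => ‖y‖) hcast
    simp only [norm_mul] at hmuln
    rw [hnormdd, one_mul] at hmuln
    rw [hmuln]
    have hp0 : (0:ℝ) < (p:ℝ) := by exact_mod_cast hp.pos
    calc ‖((a:ℚ):ℚ_[p]) - ((m:ℚ_[p]) + 1)‖ *
          (‖((a:ℚ):ℚ_[p]) - ((m:ℚ_[p]) + 1 - (p:ℚ_[p]))‖ * ‖((Polynomial.aeval a Hz : ℚ) : ℚ_[p])‖)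
        ≤ (p:ℝ)^(-1:ℤ) * ((p:ℝ)^(-1:ℤ) * 1) := by
          refine mul_le_mul ?_ (mul_le_mul ?_ hnH (norm_nonneg _) (by positivity))
            (by positivity) (by positivity)
          · have : (((a - ((m:ℚ)+1)) : ℚ) : ℚ_[p]) = ((a:ℚ):ℚ_[p]) - ((m:ℚ_[p]) + 1) := by
              push_cast; ring
            rw [← this]; exact hnf1
          · have : (((a - (((m:ℚ)+1) - (p:ℚ))) : ℚ) : ℚ_[p])
                = ((a:ℚ):ℚ_[p]) - ((m:ℚ_[p]) + 1 - (p:ℚ_[p])) := by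
              push_cast; ring
            rw [← this]; exact hnf2
      _ = (p:ℝ)^(-2:ℤ) := by
          rw [mul_one, ← zpow_add₀ (ne_of_gt hp0)]
          norm_num
  -- final
  calc ‖(((b:ℚ)^2 * Psi p a : ℚ) : ℚ_[p])‖
      = ‖((b:ℚ) : ℚ_[p])‖^2 * ‖((Psi p a : ℚ) : ℚ_[p])‖ := by
        push_cast
        rw [norm_mul, norm_pow]
    _ ≤ 1 * ((p:ℝ)^(-2:ℤ)) := by
        refine mul_le_mul ?_ hprodnorm (norm_nonneg _) zero_le_one
        have : ‖((b:ℚ) : ℚ_[p])‖ = 1 := by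
          have h2 : (((b:ℕ):ℚ) : ℚ_[p]) = ((b:ℕ) : ℚ_[p]) := by push_cast; rfl
          rw [show ((b:ℚ) : ℚ_[p]) = (((b:ℕ):ℚ) : ℚ_[p]) from rfl, h2, hnormb]
        rw [this]; norm_num
    _ = (p:ℝ)^(-2:ℤ) := one_mul _
end

section
/- Let p > 3 be a prime and let x be a p-adic integer. Then (Σ_{k=1}^{p−1} C(2k,k) x^k) · (Σ_{k=1}^{p−1} C(2k,k) x^k / k) ≡ 2 Σ_{k=1}^{p−1} C(2k,k) (H_{2k−1} − H_k) x^k (mod p), a congruence in ℤ_p. -/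
open Finset


private lemma choose_eq_catalan (m : ℕ) :
    ((2 * m).choose m : ℚ) = (m + 1) * (catalan m : ℚ) := by
  have h := succ_mul_catalan_eq_centralBinom m
  rw [Nat.centralBinom_eq_two_mul_choose] at h
  exact_mod_cast h.symm

private lemma cat_conv (n : ℕ) :
    ∑ j ∈ range (n + 1), ((2 * j).choose j : ℚ) / (j + 1) * ((2 * (n - j)).choose (n - j)) =
      ((2 * (n + 1)).choose (n + 1) : ℚ) / 2 := by
  have hs : ∀ j ∈ range (n + 1),
      ((2 * j).choose j : ℚ) / (j + 1) * ((2 * (n - j)).choose (n - j))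
        = (catalan j : ℚ) * ((n - j : ℕ) + 1) * (catalan (n - j) : ℚ) := by
    intro j _
    rw [choose_eq_catalan, choose_eq_catalan]
    have : ((j : ℚ) + 1) ≠ 0 := by positivity
    field_simp
  rw [Finset.sum_congr rfl hs]
  have hrefl := Finset.sum_range_reflect
    (fun j => (catalan j : ℚ) * ((n - j : ℕ) + 1) * (catalan (n - j) : ℚ)) (n + 1)
  have hcat : ∑ j ∈ range (n + 1), (catalan j : ℚ) * (catalan (n - j) : ℚ)
      = (catalan (n + 1) : ℚ) := by
    have h := catalan_succ n
    rw [Fin.sum_univ_eq_sum_range (fun i => catalan i * catalan (n - i))] at h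
    rw [h]
    push_cast
    rfl
  have key : (2 : ℚ) * ∑ j ∈ range (n + 1),
      (catalan j : ℚ) * ((n - j : ℕ) + 1) * (catalan (n - j) : ℚ)
      = ((n : ℚ) + 2) * (catalan (n + 1) : ℚ) := by
    simp only [Nat.add_sub_cancel] at hrefl
    rw [two_mul]
    nth_rewrite 2 [← hrefl]
    rw [← hcat, ← Finset.sum_add_distrib, Finset.mul_sum]
    refine Finset.sum_congr rfl fun j hj => ?_
    have hj' : j ≤ n := Nat.lt_succ_iff.mp (Finset.mem_range.mp hj)
    have h1 : n - (n - j) = j := Nat.sub_sub_self hj'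
    rw [h1]
    have h2 : ((n - j : ℕ) : ℚ) = (n : ℚ) - j := by
      push_cast [Nat.cast_sub hj']; ring
    rw [h2]
    ring
  rw [choose_eq_catalan (n + 1)]
  push_cast
  linarith [key]

private lemma hrecQ (m : ℕ) :
    ((m : ℚ) + 1) * ((2 * (m + 1)).choose (m + 1) : ℚ)
      = 2 * (2 * m + 1) * ((2 * m).choose m : ℚ) := by
  have h := Nat.succ_mul_centralBinom_succ m
  rw [Nat.centralBinom_eq_two_mul_choose, Nat.centralBinom_eq_two_mul_choose] at h
  exact_mod_cast h

private lemma key_ident (n : ℕ) (hn : 1 ≤ n) :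
    ∑ k ∈ Ico 1 n, ((2 * (n - k)).choose (n - k) : ℚ) * (((2 * k).choose k : ℚ) / k)
      = 2 * (((2 * n).choose n : ℚ) * (harmonic (2 * n - 1) - harmonic n)) := by
  induction n, hn using Nat.le_induction with
  | base => norm_num
  | succ n hn ih =>
    have hN : (1 : ℚ) ≤ (n : ℚ) := by exact_mod_cast hn
    have hNne : (n : ℚ) ≠ 0 := by linarith
    have hN1 : (n : ℚ) + 1 ≠ 0 := by linarith
    -- pointwise rewrite of the summands over `Ico 1 n`
    have hpt : ∀ k ∈ Ico 1 n,
        ((2 * (n + 1 - k)).choose (n + 1 - k) : ℚ) * (((2 * k).choose k : ℚ) / k)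
          = 2 * (2 * (n : ℚ) + 1) / ((n : ℚ) + 1) *
              (((2 * (n - k)).choose (n - k) : ℚ) * (((2 * k).choose k : ℚ) / k))
            - 2 / ((n : ℚ) + 1) *
              (((2 * k).choose k : ℚ) * ((2 * (n - k)).choose (n - k) : ℚ)
                / (((n - k : ℕ) : ℚ) + 1)) := by
      intro k hk
      obtain ⟨hk1, hk2⟩ := mem_Ico.mp hk
      have h1 : n + 1 - k = (n - k) + 1 := by omega
      rw [h1]
      have hkQ : (1 : ℚ) ≤ (k : ℚ) := by exact_mod_cast hk1
      have hkne : (k : ℚ) ≠ 0 := by linarith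
      have hmQ : ((n - k : ℕ) : ℚ) = (n : ℚ) - (k : ℚ) := by
        have : k ≤ n := le_of_lt hk2
        push_cast [this]; ring
      have hm1 : (1 : ℚ) ≤ ((n - k : ℕ) : ℚ) := by
        have : 1 ≤ n - k := by omega
        exact_mod_cast this
      have hmne : ((n - k : ℕ) : ℚ) + 1 ≠ 0 := by linarith
      have hrec := hrecQ (n - k)
      have ha : ((2 * ((n - k) + 1)).choose ((n - k) + 1) : ℚ)
          = 2 * (2 * ((n - k : ℕ) : ℚ) + 1) * ((2 * (n - k)).choose (n - k) : ℚ)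
              / (((n - k : ℕ) : ℚ) + 1) := by
        rw [eq_div_iff hmne]; linarith [hrec]
      have h3 : (n : ℚ) - k + 1 ≠ 0 := by
        rw [hmQ] at hm1; linarith
      rw [ha, hmQ]
      field_simp
      ring
    -- split off the top term `k = n`
    rw [Finset.sum_Ico_succ_top (by omega : 1 ≤ n)]
    rw [Finset.sum_congr rfl hpt]
    have htop : n + 1 - n = 1 := by omega
    rw [htop]
    -- the Catalan convolution sum over `Ico 1 n`
    have hU : ∑ k ∈ Ico 1 n,
        (((2 * k).choose k : ℚ) * ((2 * (n - k)).choose (n - k) : ℚ)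
          / (((n - k : ℕ) : ℚ) + 1))
        = ((2 * (n + 1)).choose (n + 1) : ℚ) / 2 - ((2 * n).choose n : ℚ)
            - ((2 * n).choose n : ℚ) / ((n : ℚ) + 1) := by
      have hrefl : ∑ k ∈ Ico 1 n,
          (((2 * k).choose k : ℚ) * ((2 * (n - k)).choose (n - k) : ℚ)
            / (((n - k : ℕ) : ℚ) + 1))
          = ∑ j ∈ Ico 1 n, ((2 * j).choose j : ℚ) / ((j : ℚ) + 1)
              * ((2 * (n - j)).choose (n - j) : ℚ) := by
        refine Finset.sum_nbij' (fun k => n - k) (fun j => n - j) ?_ ?_ ?_ ?_ ?_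
        · intro k hk; simp only [mem_Ico] at hk ⊢; omega
        · intro j hj; simp only [mem_Ico] at hj ⊢; omega
        · intro k hk; simp only [mem_Ico] at hk; omega
        · intro j hj; simp only [mem_Ico] at hj; omega
        · intro k hk
          simp only [mem_Ico] at hk
          have h3 : n - (n - k) = k := by omega
          rw [h3]
          ring
      rw [hrefl]
      have hfull := cat_conv n
      rw [Finset.range_eq_Ico] at hfull
      rw [Finset.sum_eq_sum_Ico_succ_bot (by omega : 0 < n + 1)] at hfull
      rw [Finset.sum_Ico_succ_top (by omega : 1 ≤ n)] at hfull
      have e0 : ((2 * 0).choose 0 : ℚ) / ((0 : ℕ) + 1) * ((2 * (n - 0)).choose (n - 0) : ℚ)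
          = ((2 * n).choose n : ℚ) := by norm_num
      have en : ((2 * n).choose n : ℚ) / ((n : ℚ) + 1) * ((2 * (n - n)).choose (n - n) : ℚ)
          = ((2 * n).choose n : ℚ) / ((n : ℚ) + 1) := by
        have : n - n = 0 := by omega
        rw [this]; norm_num
      push_cast at hfull
      push_cast
      linarith [hfull]
    rw [Finset.sum_sub_distrib, ← Finset.mul_sum, ← Finset.mul_sum, ih, hU]
    have e : 2 * n - 1 + 1 = 2 * n := by omega
    have hh1 := harmonic_succ (2 * n - 1)
    rw [e] at hh1
    have hh2 := harmonic_succ (2 * n)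
    have e2 : 2 * (n + 1) - 1 = 2 * n + 1 := by omega
    rw [e2, hh2, hh1, harmonic_succ n]
    have hA : ((2 * (n + 1)).choose (n + 1) : ℚ)
        = 2 * (2 * (n : ℚ) + 1) * ((2 * n).choose n : ℚ) / ((n : ℚ) + 1) := by
      rw [eq_div_iff hN1]; linarith [hrecQ n]
    rw [hA]
    have h2N : (2 : ℚ) * n ≠ 0 := by positivity
    have h2N1 : (2 : ℚ) * n + 1 ≠ 0 := by positivity
    simp only [Nat.choose_one_right]
    push_cast
    field_simp
    ring


private lemma choose_central_dvd {p k : ℕ} (hpp : p.Prime) (h1 : p ≤ 2 * k) (h2 : k < p) :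
    p ∣ (2 * k).choose k := by
  have hfac : (2 * k).choose k * Nat.factorial k * Nat.factorial (2 * k - k) = Nat.factorial (2 * k) :=
    Nat.choose_mul_factorial_mul_factorial (by omega)
  have hkk : 2 * k - k = k := by omega
  rw [hkk] at hfac
  have hdvd : p ∣ Nat.factorial (2 * k) := Nat.dvd_factorial hpp.pos h1
  rw [← hfac] at hdvd
  rcases (hpp.dvd_mul.mp hdvd) with h | h
  · rcases hpp.dvd_mul.mp h with h' | h'
    · exact h'
    · exact absurd ((Nat.Prime.dvd_factorial hpp).mp h') (by omega)
  · exact absurd ((Nat.Prime.dvd_factorial hpp).mp h) (by omega)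

private lemma norm_choose_le {p : ℕ} [Fact p.Prime] {k : ℕ} (h1 : p ≤ 2 * k) (h2 : k < p) :
    ‖((2 * k).choose k : ℚ_[p])‖ ≤ (p : ℝ) ^ (-1 : ℤ) := by
  have hdvd : ((p : ℤ) ^ 1) ∣ ((2 * k).choose k : ℤ) := by
    simpa using Int.natCast_dvd_natCast.mpr (choose_central_dvd Fact.out h1 h2)
  have := (Padic.norm_int_le_pow_iff_dvd ((2 * k).choose k : ℤ) 1).mpr hdvd
  simpa using this

private lemma norm_nat_eq_one {p : ℕ} [Fact p.Prime] {k : ℕ} (h1 : 1 ≤ k) (h2 : k < p) :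
    ‖(k : ℚ_[p])‖ = 1 := by
  have hnd : ¬ ((p : ℤ) ∣ (k : ℤ)) := by
    rw [Int.natCast_dvd_natCast]
    intro h
    have := Nat.le_of_dvd (by omega) h
    omega
  have hlt := Padic.norm_intCast_lt_one_iff (p := p) (k := (k : ℤ))
  have hle := Padic.norm_int_le_one (p := p) (k : ℤ)
  have : ¬ ‖((k : ℤ) : ℚ_[p])‖ < 1 := fun h => hnd (hlt.mp h)
  have heq : ‖((k : ℤ) : ℚ_[p])‖ = 1 := le_antisymm hle (not_lt.mp this)
  simpa using heq


/-- **Lemma 2.1 (Tauraso).** For a prime `p > 3` and `x ∈ ℤ_p`,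
`(Σ_{k=1}^{p-1} C(2k,k) x^k) (Σ_{k=1}^{p-1} C(2k,k) x^k / k)
  ≡ 2 Σ_{k=1}^{p-1} C(2k,k)(H_{2k-1} - H_k) x^k (mod p)` in `ℤ_p`. -/
theorem tauraso_lemma (p : ℕ) [Fact p.Prime] (hp : 3 < p) (x : ℤ_[p]) :
    ‖(∑ k ∈ Finset.Icc 1 (p - 1), (Nat.choose (2 * k) k : ℚ_[p]) * (x : ℚ_[p]) ^ k) *
        (∑ k ∈ Finset.Icc 1 (p - 1),
          (((Nat.choose (2 * k) k : ℚ) / k : ℚ) : ℚ_[p]) * (x : ℚ_[p]) ^ k) -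
      2 * ∑ k ∈ Finset.Icc 1 (p - 1),
          (((Nat.choose (2 * k) k : ℚ) * (harmonic (2 * k - 1) - harmonic k) : ℚ) : ℚ_[p]) *
            (x : ℚ_[p]) ^ k‖
      ≤ (p : ℝ) ^ (-1 : ℤ) := by
  have hp2 : 2 ≤ p := by omega
  set s : Finset ℕ := Finset.Icc 1 (p - 1) with hs
  set F : ℕ × ℕ → ℚ_[p] := fun q =>
    ((2 * q.1).choose q.1 : ℚ_[p]) * ((((2 * q.2).choose q.2 : ℚ) / (q.2 : ℚ) : ℚ) : ℚ_[p]) *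
      (x : ℚ_[p]) ^ (q.1 + q.2) with hF
  have hAB : (∑ k ∈ s, ((2 * k).choose k : ℚ_[p]) * (x : ℚ_[p]) ^ k) *
      (∑ k ∈ s, ((((2 * k).choose k : ℚ) / (k : ℚ) : ℚ) : ℚ_[p]) * (x : ℚ_[p]) ^ k)
      = ∑ q ∈ s ×ˢ s, F q := by
    rw [Finset.sum_mul_sum, Finset.sum_product]
    refine Finset.sum_congr rfl fun i _ => Finset.sum_congr rfl fun j _ => ?_
    simp only [hF]
    rw [pow_add]; ring
  have h2C : (2 : ℚ_[p]) * ∑ k ∈ s,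
        ((((2 * k).choose k : ℚ) * (harmonic (2 * k - 1) - harmonic k) : ℚ) : ℚ_[p]) *
          (x : ℚ_[p]) ^ k
      = ∑ q ∈ (s ×ˢ s).filter (fun q => q.1 + q.2 ≤ p - 1), F q := by
    rw [Finset.mul_sum]
    have step1 : ∀ k ∈ s,
        (2 : ℚ_[p]) * (((((2 * k).choose k : ℚ) * (harmonic (2 * k - 1) - harmonic k) : ℚ) : ℚ_[p])
            * (x : ℚ_[p]) ^ k)
          = ∑ j ∈ Ico 1 k, F (k - j, j) := by
      intro k hk
      obtain ⟨hk1, hk2⟩ := Finset.mem_Icc.mp hk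
      have e1 : (2 : ℚ_[p]) * (((((2 * k).choose k : ℚ) * (harmonic (2 * k - 1) - harmonic k) : ℚ) : ℚ_[p])
            * (x : ℚ_[p]) ^ k)
          = (((2 : ℚ) * (((2 * k).choose k : ℚ) * (harmonic (2 * k - 1) - harmonic k)) : ℚ) : ℚ_[p])
            * (x : ℚ_[p]) ^ k := by push_cast; ring
      rw [e1, ← key_ident k hk1, Rat.cast_sum, Finset.sum_mul]
      refine Finset.sum_congr rfl fun j hj => ?_
      obtain ⟨hj1, hj2⟩ := Finset.mem_Ico.mp hj
      simp only [hF]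
      have e2 : k - j + j = k := by omega
      rw [e2]
      push_cast
      ring
    rw [Finset.sum_congr rfl step1, Finset.sum_sigma']
    refine Finset.sum_nbij' (fun q => (q.1 - q.2, q.2)) (fun q => ⟨q.1 + q.2, q.2⟩)
      ?_ ?_ ?_ ?_ ?_
    · intro q hq
      simp only [Finset.mem_sigma, Finset.mem_Icc, Finset.mem_Ico, hs] at hq
      simp only [Finset.mem_filter, Finset.mem_product, Finset.mem_Icc, hs]
      omega
    · intro q hq
      simp only [Finset.mem_filter, Finset.mem_product, Finset.mem_Icc, hs] at hq
      simp only [Finset.mem_sigma, Finset.mem_Icc, Finset.mem_Ico, hs]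
      omega
    · intro q hq
      simp only [Finset.mem_sigma, Finset.mem_Icc, Finset.mem_Ico, hs] at hq
      dsimp only
      ext <;> simp <;> omega
    · intro q hq
      simp only [Finset.mem_filter, Finset.mem_product, Finset.mem_Icc, hs] at hq
      dsimp only
      ext <;> simp <;> omega
    · intro q hq
      rfl
  rw [hAB, h2C,
    ← Finset.sum_filter_add_sum_filter_not (s ×ˢ s) (fun q => q.1 + q.2 ≤ p - 1) F,
    add_sub_cancel_left]
  refine IsUltrametricDist.norm_sum_le_of_forall_le_of_nonneg (by positivity) ?_
  intro q hq
  simp only [Finset.mem_filter, Finset.mem_product, Finset.mem_Icc, hs, not_le] at hq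
  obtain ⟨⟨⟨hi1, hi2⟩, hj1, hj2⟩, hsum⟩ := hq
  have hxn : ‖(x : ℚ_[p]) ^ (q.1 + q.2)‖ ≤ 1 := by
    rw [norm_pow]
    exact pow_le_one₀ (norm_nonneg _) (by simpa using x.norm_le_one)
  have hBsplit : ((((2 * q.2).choose q.2 : ℚ) / (q.2 : ℚ) : ℚ) : ℚ_[p])
      = ((2 * q.2).choose q.2 : ℚ_[p]) / (q.2 : ℚ_[p]) := by push_cast; ring
  have hnj : ‖((q.2 : ℕ) : ℚ_[p])‖ = 1 := norm_nat_eq_one hj1 (by omega)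
  have hone : (0:ℝ) ≤ (p : ℝ) ^ (-1 : ℤ) := by positivity
  have hnorm : ‖F q‖ = ‖((2 * q.1).choose q.1 : ℚ_[p])‖ *
      (‖((2 * q.2).choose q.2 : ℚ_[p])‖ / ‖((q.2 : ℕ) : ℚ_[p])‖) *
      ‖(x : ℚ_[p]) ^ (q.1 + q.2)‖ := by
    simp only [hF, hBsplit, norm_mul, norm_div]
  have hA1 : ‖((2 * q.1).choose q.1 : ℚ_[p])‖ ≤ 1 := by
    have := Padic.norm_int_le_one (p := p) (((2 * q.1).choose q.1 : ℕ) : ℤ)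
    simpa using this
  have hB1 : ‖((2 * q.2).choose q.2 : ℚ_[p])‖ ≤ 1 := by
    have := Padic.norm_int_le_one (p := p) (((2 * q.2).choose q.2 : ℕ) : ℤ)
    simpa using this
  rw [hnorm, hnj, div_one]
  rcases (by omega : p ≤ 2 * q.1 ∨ p ≤ 2 * q.2) with hcase | hcase
  · have hA : ‖((2 * q.1).choose q.1 : ℚ_[p])‖ ≤ (p : ℝ) ^ (-1 : ℤ) :=
      norm_choose_le hcase (by omega)
    calc ‖((2 * q.1).choose q.1 : ℚ_[p])‖ * ‖((2 * q.2).choose q.2 : ℚ_[p])‖ *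
          ‖(x : ℚ_[p]) ^ (q.1 + q.2)‖
        ≤ (p : ℝ) ^ (-1 : ℤ) * 1 * 1 := by
          refine mul_le_mul (mul_le_mul hA hB1 (norm_nonneg _) hone) hxn (norm_nonneg _) ?_
          positivity
      _ = (p : ℝ) ^ (-1 : ℤ) := by ring
  · have hB : ‖((2 * q.2).choose q.2 : ℚ_[p])‖ ≤ (p : ℝ) ^ (-1 : ℤ) :=
      norm_choose_le hcase (by omega)
    calc ‖((2 * q.1).choose q.1 : ℚ_[p])‖ * ‖((2 * q.2).choose q.2 : ℚ_[p])‖ *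
          ‖(x : ℚ_[p]) ^ (q.1 + q.2)‖
        ≤ 1 * ((p : ℝ) ^ (-1 : ℤ)) * 1 := by
          refine mul_le_mul (mul_le_mul hA1 hB (norm_nonneg _) zero_le_one) hxn (norm_nonneg _) ?_
          positivity
      _ = (p : ℝ) ^ (-1 : ℤ) := by ring
end

section
/- Let p be an odd prime and let α, z be p-adic integers such that ⟨−α⟩_p is even. Then (Σ_{k=0}^{p−1} (α/2)_k ((1−α)/2)_k / (k!)² · z^k)² ≡ Σ_{k=0}^{p−1} (α)_k (1−α)_k (1/2)_k / (k!)³ · z^k (mod p²), a congruence in ℤ_p. -/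
set_option maxHeartbeats 1000000
set_option maxRecDepth 8000

open Finset

section Identity
variable {K : Type*} [Field K] [CharZero K]

noncomputable def pk (y : K) (k : ℕ) : K := (ascPochhammer K k).eval y

@[simp] lemma pk_zero (y : K) : pk y 0 = 1 := by simp [pk]

omit [CharZero K] in
lemma pk_succ (y : K) (k : ℕ) : pk y (k+1) = pk y k * (y + k) := by
  simp [pk, ascPochhammer_succ_eval]

omit [CharZero K] in
lemma pk_prod (y : K) (k : ℕ) : pk y k = ∏ t ∈ range k, (y + t) := by
  induction k with
  | zero => simp [pk]
  | succ m ih => rw [pk_succ, ih, prod_range_succ]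

noncomputable def uu (a b : K) (i j : ℕ) : K :=
  pk a i * pk b i * pk a j * pk b j / ((i.factorial : K)^2 * (j.factorial : K)^2)

lemma core (a b : K) (hab : a + b = 1/2) (i m : ℕ) :
    ((i:K) + m + 1)^3 * uu a b i (m+1)
      - ((2*a + ((i:K)+m+1) - 1) * (((i:K)+m+1) - 2*a) * (((i:K)+m+1) - 1/2)) * uu a b i m
    = (((i:K)+1)^2 * (2*((i:K)+1) - 3*((i:K)+m+1))) * uu a b (i+1) m
      - ((i:K)^2 * (2*(i:K) - 3*((i:K)+m+1))) * uu a b i (m+1) := by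
  have hb : b = 1/2 - a := by linear_combination hab
  subst hb
  have hi1 : ((i:K)+1) ≠ 0 := by exact_mod_cast (Nat.cast_ne_zero (R := K)).mpr (Nat.succ_ne_zero i)
  have hm1 : ((m:K)+1) ≠ 0 := by exact_mod_cast (Nat.cast_ne_zero (R := K)).mpr (Nat.succ_ne_zero m)
  have hfi : ((i.factorial : K)) ≠ 0 := Nat.cast_ne_zero.mpr i.factorial_ne_zero
  have hfm : ((m.factorial : K)) ≠ 0 := Nat.cast_ne_zero.mpr m.factorial_ne_zero
  set A : K := uu a (1/2 - a) i m with hA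
  have e1 : uu a (1/2-a) i (m+1) = A * ((a+m)*((1/2-a)+m)/(((m:K)+1)^2)) := by
    rw [hA]; simp only [uu, pk_succ, Nat.factorial_succ, Nat.cast_mul, Nat.cast_add, Nat.cast_one]
    field_simp
  have e2 : uu a (1/2-a) (i+1) m = A * ((a+i)*((1/2-a)+i)/(((i:K)+1)^2)) := by
    rw [hA]; simp only [uu, pk_succ, Nat.factorial_succ, Nat.cast_mul, Nat.cast_add, Nat.cast_one]
    field_simp
  have hs : ((i:K) + m + 1)^3 * ((a+m)*((1/2-a)+m)/(((m:K)+1)^2))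
      - ((2*a + ((i:K)+m+1) - 1) * (((i:K)+m+1) - 2*a) * (((i:K)+m+1) - 1/2))
    = (((i:K)+1)^2 * (2*((i:K)+1) - 3*((i:K)+m+1))) * ((a+i)*((1/2-a)+i)/(((i:K)+1)^2))
      - ((i:K)^2 * (2*(i:K) - 3*((i:K)+m+1))) * ((a+m)*((1/2-a)+m)/(((m:K)+1)^2)) := by
    field_simp
    ring
  rw [e1, e2]
  linear_combination A * hs

lemma sum_u (a b : K) (hab : a + b = 1/2) (n : ℕ) :
    ∑ i ∈ range (n+1), uu a b i (n - i)
      = pk (2*a) n * pk (2*b) n * pk (1/2 : K) n / ((n.factorial : K)^3) := by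
  induction n with
  | zero => simp [uu]
  | succ m ih =>
    have hm1 : ((m:K)+1) ≠ 0 := by exact_mod_cast (Nat.cast_ne_zero (R := K)).mpr (Nat.succ_ne_zero m)
    have h3 : (((m:K)+1)^3) ≠ 0 := pow_ne_zero _ hm1
    set C : K := (2*a + ((m:K)+1) - 1) * (((m:K)+1) - 2*a) * (((m:K)+1) - 1/2) with hC
    set G : ℕ → K := fun i => ((i:K)^2 * (2*(i:K) - 3*((m:K)+1))) * uu a b i (m+1-i) with hG
    have tele : ∑ i ∈ range (m+1),
        (((m:K)+1)^3 * uu a b i (m+1-i) - C * uu a b i (m-i))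
        = G (m+1) - G 0 := by
      rw [← Finset.sum_range_sub G (m+1)]
      refine Finset.sum_congr rfl fun i hi => ?_
      rw [Finset.mem_range] at hi
      have hk : (m - i) + 1 = m + 1 - i := by omega
      have hc : ((i:K) + ((m - i : ℕ) : K) + 1) = ((m:K)+1) := by
        have h : (i + (m - i) : ℕ) = m := by omega
        calc (i:K) + ((m - i : ℕ) : K) + 1 = ((i + (m - i) : ℕ) : K) + 1 := by push_cast; ring
          _ = ((m:K)+1) := by rw [h]
      have hcore := core a b hab i (m - i)
      rw [hc, hk] at hcore
      have hG1 : G (i+1) = (((i:K)+1)^2 * (2*((i:K)+1) - 3*((m:K)+1))) * uu a b (i+1) (m-i) := by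
        rw [hG]; push_cast [Nat.succ_sub_succ]; ring_nf
      have hG2 : G i = ((i:K)^2 * (2*(i:K) - 3*((m:K)+1))) * uu a b i (m+1-i) := by rw [hG]
      rw [hG1, hG2]
      linear_combination hcore
    have hG0 : G 0 = 0 := by simp [hG]
    have hGm : G (m+1) = -(((m:K)+1)^3) * uu a b (m+1) 0 := by
      simp only [hG, Nat.sub_self, Nat.add_sub_cancel_left]
      push_cast
      ring
    rw [Finset.sum_sub_distrib, ← Finset.mul_sum, ← Finset.mul_sum, hG0, hGm, sub_zero] at tele
    have key : (((m:K)+1)^3) * ∑ i ∈ range (m+2), uu a b i (m+1-i)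
        = C * ∑ i ∈ range (m+1), uu a b i (m-i) := by
      rw [Finset.sum_range_succ, Nat.sub_self]
      linear_combination tele
    apply mul_left_cancel₀ h3
    rw [key, ih]
    have hb : b = 1/2 - a := by linear_combination hab
    subst hb
    simp only [hC, pk_succ, Nat.factorial_succ, Nat.cast_mul, Nat.cast_add, Nat.cast_one]
    have hfm : ((m.factorial : K)) ≠ 0 := Nat.cast_ne_zero.mpr m.factorial_ne_zero
    field_simp
    ring
end Identity


section Padic
variable {p : ℕ} [hp : Fact p.Prime]

lemma norm_nat_le_one (t : ℕ) : ‖((t : ℚ_[p]))‖ ≤ 1 := by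
  have := Padic.norm_int_le_one (p := p) (t : ℤ)
  push_cast at this
  exact this

lemma norm_fact_eq_one {k : ℕ} (h : k < p) : ‖((k.factorial : ℚ_[p]))‖ = 1 := by
  have h1 : ‖((k.factorial : ℚ_[p]))‖ ≤ 1 := norm_nat_le_one _
  rcases lt_or_eq_of_le h1 with h2 | h2
  · exfalso
    have h3 : ((p : ℤ)) ∣ (k.factorial : ℤ) := by
      have := (Padic.norm_intCast_lt_one_iff (p := p) (k := (k.factorial : ℤ))).mp (by push_cast; exact h2)
      exact_mod_cast this
    have h4 : p ∣ k.factorial := by exact_mod_cast h3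
    have := (Nat.Prime.dvd_factorial hp.out).mp h4
    omega
  · exact h2

lemma norm_pk_le_one {y : ℚ_[p]} (hy : ‖y‖ ≤ 1) (k : ℕ) : ‖pk y k‖ ≤ 1 := by
  rw [pk_prod, norm_prod]
  refine Finset.prod_le_one (fun t _ => norm_nonneg _) (fun t _ => ?_)
  exact le_trans (Padic.nonarchimedean _ _) (max_le hy (norm_nat_le_one t))

lemma norm_pk_le_inv {y : ℚ_[p]} (hy : ‖y‖ ≤ 1) {t0 k : ℕ} (ht : t0 < k)
    (hsmall : ‖y + (t0 : ℚ_[p])‖ ≤ (p:ℝ)⁻¹) : ‖pk y k‖ ≤ (p:ℝ)⁻¹ := by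
  rw [pk_prod, norm_prod]
  rw [← Finset.prod_erase_mul _ _ (Finset.mem_range.mpr ht)]
  calc (∏ t ∈ (range k).erase t0, ‖y + (t:ℚ_[p])‖) * ‖y + (t0:ℚ_[p])‖
      ≤ 1 * (p:ℝ)⁻¹ := by
        refine mul_le_mul ?_ hsmall (norm_nonneg _) zero_le_one
        refine Finset.prod_le_one (fun t _ => norm_nonneg _) (fun t _ => ?_)
        exact le_trans (Padic.nonarchimedean _ _) (max_le hy (norm_nat_le_one t))
    _ = (p:ℝ)⁻¹ := one_mul _

end Padic


/-- **Mao–Pan congruence (1.3), a Clausen-type congruence.** For an odd prime `p` and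
`α, z ∈ ℤ_p` with `⟨-α⟩_p` even,
`(₂F₁[α/2, (1-α)/2; 1 | z]_{p-1})² ≡ ₃F₂[α, 1-α, 1/2; 1, 1 | z]_{p-1} (mod p²)` in `ℤ_p`. -/
theorem clausen_congruence (p : ℕ) [Fact p.Prime] (hp : Odd p) (α z : ℤ_[p])
    (hα : Even ((PadicInt.toZMod (-α)).val)) :
    ‖(∑ k ∈ Finset.range p,
          (ascPochhammer ℚ_[p] k).eval ((α : ℚ_[p]) / 2) *
            (ascPochhammer ℚ_[p] k).eval ((1 - (α : ℚ_[p])) / 2) /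
              ((k.factorial : ℚ_[p]))^2 * (z : ℚ_[p])^k)^2 -
      ∑ k ∈ Finset.range p,
          (ascPochhammer ℚ_[p] k).eval (α : ℚ_[p]) *
            (ascPochhammer ℚ_[p] k).eval (1 - (α : ℚ_[p])) *
              (ascPochhammer ℚ_[p] k).eval (1 / 2) /
                ((k.factorial : ℚ_[p]))^3 * (z : ℚ_[p])^k‖
      ≤ (p : ℝ) ^ (-2 : ℤ) := by
  have hpk : ∀ (k : ℕ) (y : ℚ_[p]), (ascPochhammer ℚ_[p] k).eval y = pk y k := fun _ _ => rfl
  simp only [hpk]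
  haveI : NeZero p := ⟨(Fact.out : p.Prime).ne_zero⟩
  set y1 : ℚ_[p] := (α : ℚ_[p]) / 2 with hy1def
  set y2 : ℚ_[p] := (1 - (α : ℚ_[p])) / 2 with hy2def
  set A : ℕ → ℚ_[p] := fun k => pk y1 k * pk y2 k / ((k.factorial : ℚ_[p]))^2 with hAdef
  set B : ℕ → ℚ_[p] := fun n =>
    pk (α : ℚ_[p]) n * pk (1 - (α : ℚ_[p])) n * pk (1/2 : ℚ_[p]) n / ((n.factorial : ℚ_[p]))^3
    with hBdef
  -- basic parameters
  obtain ⟨c, hc⟩ := hα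
  obtain ⟨d, hd0⟩ := hp
  have hd : p = 2*d + 1 := by omega
  have ha0lt : (PadicInt.toZMod (-α)).val < p := ZMod.val_lt _
  have hcd : c ≤ d := by omega
  have hp2 : 2 < p := by
    have := (Fact.out : p.Prime).two_le; omega
  -- norm facts
  have h2 : ‖(2 : ℚ_[p])‖ = 1 := by
    have : ((Nat.factorial 2 : ℕ) : ℚ_[p]) = (2 : ℚ_[p]) := by norm_num [Nat.factorial]
    rw [← this]; exact norm_fact_eq_one hp2
  have hy1n : ‖y1‖ ≤ 1 := by
    rw [hy1def, norm_div, h2, div_one]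
    rw [PadicInt.padic_norm_e_of_padicInt]; exact PadicInt.norm_le_one α
  have hy2n : ‖y2‖ ≤ 1 := by
    rw [hy2def, norm_div, h2, div_one]
    have : (1 - (α : ℚ_[p])) = (((1 - α : ℤ_[p]) : ℚ_[p])) := by push_cast; ring
    rw [this, PadicInt.padic_norm_e_of_padicInt]; exact PadicInt.norm_le_one _
  have hαa : ‖(α : ℚ_[p]) + ((PadicInt.toZMod (-α)).val : ℚ_[p])‖ ≤ (p:ℝ)⁻¹ := by
    have hspec := PadicInt.toZMod_spec (-α)
    rw [PadicInt.maximalIdeal_eq_span_p, Ideal.mem_span_singleton] at hspec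
    obtain ⟨w, hw⟩ := hspec
    have hcast : (ZMod.cast (PadicInt.toZMod (-α)) : ℤ_[p])
        = (((PadicInt.toZMod (-α)).val : ℕ) : ℤ_[p]) := (ZMod.natCast_val _).symm
    rw [hcast] at hw
    have heq : (α : ℚ_[p]) + ((PadicInt.toZMod (-α)).val : ℚ_[p])
        = -(((p : ℤ_[p]) * w : ℤ_[p]) : ℚ_[p]) := by
      rw [← hw]; push_cast; ring
    rw [heq, norm_neg, PadicInt.padic_norm_e_of_padicInt, norm_mul, PadicInt.norm_p]
    calc (p:ℝ)⁻¹ * ‖w‖ ≤ (p:ℝ)⁻¹ * 1 := by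
          refine mul_le_mul_of_nonneg_left (PadicInt.norm_le_one w) (by positivity)
      _ = (p:ℝ)⁻¹ := mul_one _
  have hs1 : ‖y1 + ((c : ℕ) : ℚ_[p])‖ ≤ (p:ℝ)⁻¹ := by
    have heq : y1 + ((c : ℕ) : ℚ_[p])
        = ((α : ℚ_[p]) + ((PadicInt.toZMod (-α)).val : ℚ_[p])) / 2 := by
      rw [hy1def, hc]; push_cast; ring
    rw [heq, norm_div, h2, div_one]; exact hαa
  have hs2 : ‖y2 + ((d - c : ℕ) : ℚ_[p])‖ ≤ (p:ℝ)⁻¹ := by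
    have hdc : ((d - c : ℕ) : ℚ_[p]) = (d : ℚ_[p]) - (c : ℚ_[p]) := by
      push_cast [Nat.cast_sub hcd]; ring
    have hpcast : ((p : ℕ) : ℚ_[p]) = 2*(d : ℚ_[p]) + 1 := by
      exact_mod_cast congrArg (fun n : ℕ => (n : ℚ_[p])) hd
    have hc2 : (PadicInt.toZMod (-α)).val = 2 * c := by omega
    have ha0cast : (((PadicInt.toZMod (-α)).val : ℕ) : ℚ_[p]) = 2*(c : ℚ_[p]) := by
      exact_mod_cast congrArg (fun n : ℕ => (n : ℚ_[p])) hc2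
    have heq : y2 + ((d - c : ℕ) : ℚ_[p])
        = (((p : ℕ) : ℚ_[p]) - ((α : ℚ_[p]) + ((PadicInt.toZMod (-α)).val : ℚ_[p]))) / 2 := by
      rw [hy2def, hdc]
      linear_combination ((-1 : ℚ_[p])/2) * hpcast + ((1 : ℚ_[p])/2) * ha0cast
    rw [heq, norm_div, h2, div_one]
    have hsub : (((p : ℕ) : ℚ_[p]) - ((α : ℚ_[p]) + ((PadicInt.toZMod (-α)).val : ℚ_[p])))
        = ((p : ℕ) : ℚ_[p]) + -(((α : ℚ_[p]) + ((PadicInt.toZMod (-α)).val : ℚ_[p]))) := by ring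
    rw [hsub]
    refine le_trans (Padic.nonarchimedean _ _) (max_le ?_ ?_)
    · exact le_of_eq Padic.norm_p
    · rw [norm_neg]; exact hαa
  -- norm bounds on A
  have hAnorm : ∀ k, k < p → ‖A k‖ = ‖pk y1 k‖ * ‖pk y2 k‖ := by
    intro k hk
    rw [hAdef]
    simp only []
    rw [norm_div, norm_mul, norm_pow, norm_fact_eq_one hk, one_pow, div_one]
  have hpk1 : ∀ k, ‖pk y1 k‖ ≤ 1 := norm_pk_le_one hy1n
  have hpk2 : ∀ k, ‖pk y2 k‖ ≤ 1 := norm_pk_le_one hy2n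
  have hpk1' : ∀ k, c < k → ‖pk y1 k‖ ≤ (p:ℝ)⁻¹ := fun k hk => norm_pk_le_inv hy1n hk hs1
  have hpk2' : ∀ k, d - c < k → ‖pk y2 k‖ ≤ (p:ℝ)⁻¹ := fun k hk => norm_pk_le_inv hy2n hk hs2
  have hzn : ‖(z : ℚ_[p])‖ ≤ 1 := by
    rw [PadicInt.padic_norm_e_of_padicInt]; exact PadicInt.norm_le_one z
  have hpinv : (0:ℝ) ≤ (p:ℝ)⁻¹ := by positivity
  have htail : ∀ i j : ℕ, i < p → j < p → p ≤ i + j →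
      ‖A i * A j * (z : ℚ_[p])^(i+j)‖ ≤ (p : ℝ) ^ (-2 : ℤ) := by
    intro i j hi hj hij
    have hzpow : ‖(z : ℚ_[p])^(i+j)‖ ≤ 1 := by
      rw [norm_pow]; exact pow_le_one₀ (norm_nonneg _) hzn
    have hABle : ‖A i‖ * ‖A j‖ ≤ (p:ℝ)⁻¹ * (p:ℝ)⁻¹ := by
      have hcases : (c + 1 ≤ i ∧ (d - c) + 1 ≤ i) ∨ (c + 1 ≤ i ∧ c + 1 ≤ j)
          ∨ ((d - c) + 1 ≤ i ∧ (d - c) + 1 ≤ j) ∨ (c + 1 ≤ j ∧ (d - c) + 1 ≤ j) := by omega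
      have bnd : ∀ k, k < p → (c + 1 ≤ k) → (d - c + 1 ≤ k) → ‖A k‖ ≤ (p:ℝ)⁻¹ * (p:ℝ)⁻¹ := by
        intro k hk h1 h2
        rw [hAnorm k hk]
        exact mul_le_mul (hpk1' k (by omega)) (hpk2' k (by omega)) (norm_nonneg _) hpinv
      have bnd1 : ∀ k, k < p → (c + 1 ≤ k) → ‖A k‖ ≤ (p:ℝ)⁻¹ := by
        intro k hk h1
        rw [hAnorm k hk]
        calc ‖pk y1 k‖ * ‖pk y2 k‖ ≤ (p:ℝ)⁻¹ * 1 :=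
              mul_le_mul (hpk1' k (by omega)) (hpk2 k) (norm_nonneg _) hpinv
          _ = (p:ℝ)⁻¹ := mul_one _
      have bnd2 : ∀ k, k < p → (d - c + 1 ≤ k) → ‖A k‖ ≤ (p:ℝ)⁻¹ := by
        intro k hk h2
        rw [hAnorm k hk]
        calc ‖pk y1 k‖ * ‖pk y2 k‖ ≤ 1 * (p:ℝ)⁻¹ :=
              mul_le_mul (hpk1 k) (hpk2' k (by omega)) (norm_nonneg _) zero_le_one
          _ = (p:ℝ)⁻¹ := one_mul _
      have bnd0 : ∀ k, k < p → ‖A k‖ ≤ 1 := by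
        intro k hk
        rw [hAnorm k hk]
        calc ‖pk y1 k‖ * ‖pk y2 k‖ ≤ 1 * 1 :=
              mul_le_mul (hpk1 k) (hpk2 k) (norm_nonneg _) zero_le_one
          _ = 1 := one_mul _
      rcases hcases with ⟨h1, h2⟩ | ⟨h1, h2⟩ | ⟨h1, h2⟩ | ⟨h1, h2⟩
      · calc ‖A i‖ * ‖A j‖ ≤ ((p:ℝ)⁻¹ * (p:ℝ)⁻¹) * 1 :=
              mul_le_mul (bnd i hi h1 h2) (bnd0 j hj) (norm_nonneg _) (by positivity)
          _ = (p:ℝ)⁻¹ * (p:ℝ)⁻¹ := mul_one _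
      · exact mul_le_mul (bnd1 i hi h1) (bnd1 j hj h2) (norm_nonneg _) hpinv
      · exact mul_le_mul (bnd2 i hi h1) (bnd2 j hj h2) (norm_nonneg _) hpinv
      · calc ‖A i‖ * ‖A j‖ ≤ 1 * ((p:ℝ)⁻¹ * (p:ℝ)⁻¹) :=
              mul_le_mul (bnd0 i hi) (bnd j hj h1 h2) (norm_nonneg _) (by positivity)
          _ = (p:ℝ)⁻¹ * (p:ℝ)⁻¹ := one_mul _
    have hz2 : ((p:ℝ)) ^ (-2 : ℤ) = (p:ℝ)⁻¹ * (p:ℝ)⁻¹ := by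
      rw [zpow_neg, zpow_two, mul_inv]
    rw [hz2, norm_mul, norm_mul]
    calc ‖A i‖ * ‖A j‖ * ‖(z : ℚ_[p])^(i+j)‖ ≤ ((p:ℝ)⁻¹ * (p:ℝ)⁻¹) * 1 :=
          mul_le_mul hABle hzpow (norm_nonneg _) (by positivity)
      _ = (p:ℝ)⁻¹ * (p:ℝ)⁻¹ := mul_one _
  -- the Cauchy-product decomposition
  have hab : y1 + y2 = 1/2 := by rw [hy1def, hy2def]; ring
  have hgood : ∑ x ∈ (range p ×ˢ range p).filter (fun x => x.1 + x.2 < p),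
      ((A x.1 * (z:ℚ_[p])^x.1) * (A x.2 * (z:ℚ_[p])^x.2))
      = ∑ n ∈ range p, B n * (z:ℚ_[p])^n := by
    have hset : (range p ×ˢ range p).filter (fun x => x.1 + x.2 < p)
        = (range p).biUnion (fun n => Finset.HasAntidiagonal.antidiagonal n) := by
      ext x
      simp only [mem_filter, mem_product, mem_biUnion, mem_range, Finset.HasAntidiagonal.mem_antidiagonal]
      constructor
      · rintro ⟨⟨h1, h2⟩, h3⟩; exact ⟨x.1 + x.2, h3, rfl⟩
      · rintro ⟨n, hn, hxn⟩; omega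
    have hdisj : (↑(range p) : Set ℕ).PairwiseDisjoint (fun n => Finset.HasAntidiagonal.antidiagonal n) := by
      intro m _ n _ hmn
      refine Finset.disjoint_left.mpr (fun x hx1 hx2 => hmn ?_)
      rw [← Finset.HasAntidiagonal.mem_antidiagonal.mp hx1, ← Finset.HasAntidiagonal.mem_antidiagonal.mp hx2]
    rw [hset, Finset.sum_biUnion hdisj]
    refine Finset.sum_congr rfl (fun n hn => ?_)
    have step1 : ∑ x ∈ Finset.HasAntidiagonal.antidiagonal n, ((A x.1 * (z:ℚ_[p])^x.1) * (A x.2 * (z:ℚ_[p])^x.2))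
        = ∑ x ∈ Finset.HasAntidiagonal.antidiagonal n, (A x.1 * A x.2) * (z:ℚ_[p])^n := by
      refine Finset.sum_congr rfl (fun x hx => ?_)
      have hxn := Finset.HasAntidiagonal.mem_antidiagonal.mp hx
      rw [← hxn, pow_add]; ring
    rw [step1, ← Finset.sum_mul]
    have step2 : ∑ x ∈ Finset.HasAntidiagonal.antidiagonal n, A x.1 * A x.2 = B n := by
      rw [Finset.Nat.sum_antidiagonal_eq_sum_range_succ_mk]
      have hterm : ∀ i ∈ range (n+1), A i * A (n - i) = uu y1 y2 i (n - i) := by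
        intro i _
        rw [hAdef]
        simp only [uu]
        ring
      rw [Finset.sum_congr rfl hterm, sum_u y1 y2 hab n]
      have h2y1 : 2 * y1 = (α : ℚ_[p]) := by rw [hy1def]; ring
      have h2y2 : 2 * y2 = 1 - (α : ℚ_[p]) := by rw [hy2def]; ring
      rw [hBdef]
      simp only []
      rw [h2y1, h2y2]
    rw [step2]
  have hmain : (∑ k ∈ range p, A k * (z:ℚ_[p])^k)^2 - (∑ n ∈ range p, B n * (z:ℚ_[p])^n)
      = ∑ x ∈ (range p ×ˢ range p).filter (fun x => ¬ x.1 + x.2 < p),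
          ((A x.1 * (z:ℚ_[p])^x.1) * (A x.2 * (z:ℚ_[p])^x.2)) := by
    have hsq : (∑ k ∈ range p, A k * (z:ℚ_[p])^k)^2
        = ∑ x ∈ range p ×ˢ range p, ((A x.1 * (z:ℚ_[p])^x.1) * (A x.2 * (z:ℚ_[p])^x.2)) := by
      rw [sq, Finset.sum_mul_sum]
      rw [Finset.sum_product]
    have hsplit := Finset.sum_filter_add_sum_filter_not (range p ×ˢ range p)
      (fun x => x.1 + x.2 < p) (fun x => (A x.1 * (z:ℚ_[p])^x.1) * (A x.2 * (z:ℚ_[p])^x.2))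
    rw [hsq, ← hsplit, hgood]
    ring
  rw [hmain]
  refine IsUltrametricDist.norm_sum_le_of_forall_le_of_nonneg (by positivity) (fun x hx => ?_)
  rw [Finset.mem_filter, Finset.mem_product] at hx
  obtain ⟨⟨hx1, hx2⟩, hx3⟩ := hx
  rw [Finset.mem_range] at hx1 hx2
  have heq : (A x.1 * (z:ℚ_[p])^x.1) * (A x.2 * (z:ℚ_[p])^x.2)
      = A x.1 * A x.2 * (z:ℚ_[p])^(x.1 + x.2) := by rw [pow_add]; ring
  rw [heq]
  exact htail x.1 x.2 hx1 hx2 (by omega)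
end

section
/- Let p > 3 be a prime and let t, z be p-adic integers. Then Σ_{k=0}^{p−1} ((1+pt)/2)_k (1 − pt/2)_k / (k!)² · z^k ≡ Σ_{k=0}^{p−1} C(2k,k) (1 + pt·H_{2k} − pt·H_k) (z/4)^k (mod p²), a congruence in ℤ_p (each summand on both sides is a p-adic integer; in particular p·C(2k,k)·H_{2k} ∈ ℤ_p for all 0 ≤ k ≤ p−1). -/
open Finset

section Aux

lemma asc_prod' {R : Type*} [CommSemiring R] (x : R) (k : ℕ) :
    (ascPochhammer R k).eval x = ∏ j ∈ range k, (x + j) := by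
  induction k with
  | zero => simp
  | succ n ih => rw [ascPochhammer_succ_eval, prod_range_succ, ih]

lemma central_q' (k : ℕ) :
    (Nat.choose (2 * k) k : ℚ) * (k.factorial : ℚ)^2
      = 4 ^ k * ∏ i ∈ range k, (((i : ℚ) + 1/2) * ((i : ℚ) + 1)) := by
  induction k with
  | zero => simp
  | succ n ih =>
    have h := Nat.succ_mul_centralBinom_succ n
    rw [Nat.centralBinom, Nat.centralBinom] at h
    have hq : ((n + 1 : ℕ) : ℚ) * ((2 * (n+1)).choose (n+1) : ℚ)
        = 2 * (2 * (n:ℚ) + 1) * ((2 * n).choose n : ℚ) := by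
      exact_mod_cast congrArg (Nat.cast : ℕ → ℚ) h
    rw [prod_range_succ, Nat.factorial_succ]
    push_cast at hq ⊢
    linear_combination ((n:ℚ)+1) * (n.factorial:ℚ)^2 * hq + 2*(2*(n:ℚ)+1)*((n:ℚ)+1) * ih

lemma harm_q' (k : ℕ) :
    ∑ i ∈ range k, (((i : ℚ) + 1/2) * ((i : ℚ) + 1))⁻¹
      = 4 * (harmonic (2 * k) - harmonic k) := by
  induction k with
  | zero => simp
  | succ n ih =>
    have e2 : 2 * (n + 1) = (2 * n + 1) + 1 := by ring
    rw [sum_range_succ, ih, e2, harmonic_succ, harmonic_succ, harmonic_succ]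
    have h1 : ((2 * n + 1 : ℕ) : ℚ) ≠ 0 := by positivity
    have h2 : ((2 * n + 1 + 1 : ℕ) : ℚ) ≠ 0 := by positivity
    have h3 : ((n + 1 : ℕ) : ℚ) ≠ 0 := by positivity
    have h4 : ((n:ℚ) + 1/2) ≠ 0 := by positivity
    have h5 : ((n:ℚ) + 1) ≠ 0 := by positivity
    field_simp
    push_cast
    ring

variable {p : ℕ} [hp : Fact p.Prime]

lemma natnorm_le' (n : ℕ) : ‖(n : ℚ_[p])‖ ≤ 1 := by
  have := Padic.norm_int_le_one (p := p) (n : ℤ); simpa using this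

lemma natnorm_eq_one' {n : ℕ} (hn : ¬ p ∣ n) : ‖(n : ℚ_[p])‖ = 1 := by
  refine le_antisymm (natnorm_le' n) ?_
  by_contra h
  push_neg at h
  have : ‖((n : ℤ) : ℚ_[p])‖ < 1 := by simpa using h
  rw [Padic.norm_intCast_lt_one_iff] at this
  exact hn (by exact_mod_cast this)

lemma sum_norm_le' {s : Finset ℕ} {f : ℕ → ℚ_[p]} {C : ℝ} (h0 : 0 ≤ C)
    (h : ∀ i ∈ s, ‖f i‖ ≤ C) : ‖∑ i ∈ s, f i‖ ≤ C :=
  IsUltrametricDist.norm_sum_le_of_forall_le_of_nonneg h0 h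

lemma B_bound' {c : ℕ → ℚ_[p]} (hc : ∀ i, ‖c i‖ ≤ 1) (hc0 : ∀ i, c i ≠ 0) (k : ℕ) :
    ‖(∏ i ∈ range k, c i) * ∑ i ∈ range k, (c i)⁻¹‖ ≤ 1 := by
  rw [mul_sum]
  refine sum_norm_le' zero_le_one fun i hi => ?_
  have : (∏ j ∈ range k, c j) * (c i)⁻¹ = ∏ j ∈ (range k).erase i, c j := by
    rw [← Finset.prod_erase_mul (range k) c hi]
    field_simp [hc0 i]
  rw [this, norm_prod]
  exact Finset.prod_le_one (fun _ _ => norm_nonneg _) (fun j _ => hc j)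

lemma prod_expand' {c : ℕ → ℚ_[p]} {u : ℚ_[p]} (hc : ∀ i, ‖c i‖ ≤ 1)
    (hc0 : ∀ i, c i ≠ 0) (hu : ‖u‖ ≤ 1) (k : ℕ) :
    ‖∏ i ∈ range k, (c i + u)
      - (∏ i ∈ range k, c i) * (1 + u * ∑ i ∈ range k, (c i)⁻¹)‖ ≤ ‖u‖^2 := by
  induction k with
  | zero => simp
  | succ n ih =>
    have hck := mul_inv_cancel₀ (hc0 n)
    have key : ∏ i ∈ range (n+1), (c i + u)
        - (∏ i ∈ range (n+1), c i) * (1 + u * ∑ i ∈ range (n+1), (c i)⁻¹)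
        = (∏ i ∈ range n, (c i + u)
            - (∏ i ∈ range n, c i) * (1 + u * ∑ i ∈ range n, (c i)⁻¹)) * (c n + u)
          + u^2 * ((∏ i ∈ range n, c i) * ∑ i ∈ range n, (c i)⁻¹) := by
      rw [prod_range_succ, prod_range_succ, sum_range_succ]
      linear_combination (-(u * ∏ i ∈ range n, c i)) * hck
    rw [key]
    refine (IsUltrametricDist.norm_add_le_max _ _).trans (max_le ?_ ?_)
    · rw [norm_mul]
      calc _ ≤ ‖u‖^2 * 1 := by
              refine mul_le_mul ih ?_ (norm_nonneg _) (by positivity)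
              exact (IsUltrametricDist.norm_add_le_max _ _).trans (max_le (hc n) hu)
           _ = ‖u‖^2 := mul_one _
    · rw [norm_mul, norm_pow]
      calc _ ≤ ‖u‖^2 * 1 :=
              mul_le_mul le_rfl (B_bound' hc hc0 n) (norm_nonneg _) (by positivity)
           _ = ‖u‖^2 := mul_one _

lemma p_dvd_choose' {k : ℕ} (hk : k < p) (h2 : p ≤ 2 * k) : p ∣ (2 * k).choose k := by
  have hle : k ≤ 2 * k := by omega
  have hfac := Nat.choose_mul_factorial_mul_factorial hle
  have h2k : 2 * k - k = k := by omega
  rw [h2k] at hfac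
  have hdvd : p ∣ (2 * k).factorial := Nat.dvd_factorial hp.out.pos h2
  rw [← hfac] at hdvd
  have hnk : ¬ p ∣ k.factorial := fun h =>
    absurd ((Nat.Prime.dvd_factorial hp.out).mp h) (not_le.mpr hk)
  rcases (Nat.Prime.dvd_mul hp.out).mp hdvd with h | h
  · rcases (Nat.Prime.dvd_mul hp.out).mp h with h | h
    · exact h
    · exact absurd h hnk
  · exact absurd h hnk

lemma CH_bound' {k : ℕ} (hk : k < p) :
    ‖((2 * k).choose k : ℚ_[p]) *
      (((harmonic (2 * k) : ℚ) : ℚ_[p]) - ((harmonic k : ℚ) : ℚ_[p]))‖ ≤ 1 := by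
  have hq : (harmonic (2 * k) : ℚ) - harmonic k
      = ∑ i ∈ Ico k (2 * k), ((i + 1 : ℕ) : ℚ)⁻¹ := by
    rw [Finset.sum_Ico_eq_sub _ (by omega : k ≤ 2 * k)]
    simp [harmonic]
  have hcast : (((harmonic (2 * k) : ℚ) : ℚ_[p]) - ((harmonic k : ℚ) : ℚ_[p]))
      = ∑ i ∈ Ico k (2 * k), ((i + 1 : ℕ) : ℚ_[p])⁻¹ := by
    rw [← Rat.cast_sub, hq]
    push_cast
    rfl
  rw [hcast, mul_sum]
  refine sum_norm_le' zero_le_one fun i hi => ?_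
  rw [mem_Ico] at hi
  by_cases hdvd : p ∣ (i + 1)
  · have hip : i + 1 = p := by
      rcases hdvd with ⟨m, hm⟩
      have hm2 : m < 2 := by
        have : p * m < p * 2 := by omega
        exact Nat.lt_of_mul_lt_mul_left this
      interval_cases m <;> omega
    have hple : p ≤ 2 * k := by omega
    obtain ⟨m, hm⟩ := p_dvd_choose' hk hple
    have hp0 : ((p : ℕ) : ℚ_[p]) ≠ 0 := Nat.cast_ne_zero.mpr hp.out.pos.ne'
    have : ((2 * k).choose k : ℚ_[p]) * ((i + 1 : ℕ) : ℚ_[p])⁻¹ = (m : ℚ_[p]) := by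
      rw [hm, hip]
      push_cast
      field_simp
    rw [this]
    exact natnorm_le' m
  · rw [norm_mul, norm_inv, natnorm_eq_one' hdvd, inv_one, mul_one]
    exact natnorm_le' ((2 * k).choose k)

lemma term_bound {p : ℕ} [hp : Fact p.Prime] (hp3 : 3 < p) (t z : ℤ_[p])
    {k : ℕ} (hk : k < p) :
    ‖(ascPochhammer ℚ_[p] k).eval ((1 + (p : ℚ_[p]) * (t : ℚ_[p])) / 2) *
        (ascPochhammer ℚ_[p] k).eval (1 - (p : ℚ_[p]) * (t : ℚ_[p]) / 2) /
          ((k.factorial : ℚ_[p]))^2 * (z : ℚ_[p])^k -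
      (Nat.choose (2 * k) k : ℚ_[p]) *
        (1 + (p : ℚ_[p]) * (t : ℚ_[p]) * ((harmonic (2 * k) : ℚ) : ℚ_[p])
           - (p : ℚ_[p]) * (t : ℚ_[p]) * ((harmonic k : ℚ) : ℚ_[p])) *
          ((z : ℚ_[p]) / 4)^k‖ ≤ (p : ℝ) ^ (-2 : ℤ) := by
  set a : ℚ_[p] := (p : ℚ_[p]) * (t : ℚ_[p]) with ha_def
  set c : ℕ → ℚ_[p] := fun i => ((i : ℚ_[p]) + 1/2) * ((i : ℚ_[p]) + 1) with hc_def
  set u : ℚ_[p] := (a - a^2) / 4 with hu_def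
  have hpodd : ¬ (p ∣ 2) := fun h => by
    have := Nat.le_of_dvd (by norm_num) h; omega
  have hp4 : ¬ (p ∣ 4) := fun h => by
    have := Nat.le_of_dvd (by norm_num) h
    have hp4' : p = 4 := by omega
    rw [hp4'] at hp
    exact absurd hp.out (by norm_num)
  have h2norm : ‖(2 : ℚ_[p])‖ = 1 := by
    have := natnorm_eq_one' (p := p) hpodd; simpa using this
  have h4norm : ‖(4 : ℚ_[p])‖ = 1 := by
    have := natnorm_eq_one' (p := p) hp4; simpa using this
  have h2ne : (2 : ℚ_[p]) ≠ 0 := by norm_num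
  have h4ne : (4 : ℚ_[p]) ≠ 0 := by norm_num
  -- norm facts about c
  have hc : ∀ i, ‖c i‖ ≤ 1 := by
    intro i
    rw [hc_def]
    simp only [norm_mul]
    have hhalf : ‖(i : ℚ_[p]) + 1/2‖ ≤ 1 := by
      refine (IsUltrametricDist.norm_add_le_max _ _).trans (max_le (natnorm_le' i) ?_)
      rw [norm_div, h2norm, norm_one]
      norm_num
    have hone : ‖(i : ℚ_[p]) + 1‖ ≤ 1 := by
      refine (IsUltrametricDist.norm_add_le_max _ _).trans (max_le (natnorm_le' i) ?_)
      simp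
    calc ‖(i : ℚ_[p]) + 1/2‖ * ‖(i : ℚ_[p]) + 1‖ ≤ 1 * 1 :=
          mul_le_mul hhalf hone (norm_nonneg _) zero_le_one
      _ = 1 := by norm_num
  have hc0 : ∀ i, c i ≠ 0 := by
    intro i
    have e1 : c i = ((2*i+1 : ℕ) : ℚ_[p]) / 2 * ((i+1 : ℕ) : ℚ_[p]) := by
      rw [hc_def]; push_cast; ring
    rw [e1]
    have n1 : ((2*i+1 : ℕ) : ℚ_[p]) ≠ 0 := Nat.cast_ne_zero.mpr (by omega)
    have n2 : ((i+1 : ℕ) : ℚ_[p]) ≠ 0 := Nat.cast_ne_zero.mpr (by omega)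
    exact mul_ne_zero (div_ne_zero n1 h2ne) n2
  -- norm facts about a and u
  have htnorm : ‖(t : ℚ_[p])‖ ≤ 1 := by
    rw [PadicInt.padic_norm_e_of_padicInt]; exact t.norm_le_one
  have hpinv_le : (p : ℝ)⁻¹ ≤ 1 := by
    rw [inv_le_one_iff₀]
    right; exact_mod_cast hp.out.one_lt.le
  have ha : ‖a‖ ≤ (p : ℝ)⁻¹ := by
    rw [ha_def, norm_mul, Padic.norm_p]
    calc (p:ℝ)⁻¹ * ‖(t : ℚ_[p])‖ ≤ (p:ℝ)⁻¹ * 1 :=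
          mul_le_mul le_rfl htnorm (norm_nonneg _) (by positivity)
      _ = (p:ℝ)⁻¹ := mul_one _
  have ha1 : ‖a‖ ≤ 1 := ha.trans hpinv_le
  have hu : ‖u‖ ≤ (p : ℝ)⁻¹ := by
    rw [hu_def, norm_div, h4norm, div_one]
    rw [sub_eq_add_neg]
    refine (IsUltrametricDist.norm_add_le_max _ _).trans (max_le ha ?_)
    rw [norm_neg, norm_pow]
    calc ‖a‖^2 ≤ ‖a‖ * 1 := by nlinarith [norm_nonneg a]
      _ = ‖a‖ := mul_one _
      _ ≤ _ := ha
  have hu1 : ‖u‖ ≤ 1 := hu.trans hpinv_le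
  -- factorization of the Pochhammer product
  have key1 : (ascPochhammer ℚ_[p] k).eval ((1 + a) / 2) *
      (ascPochhammer ℚ_[p] k).eval (1 - a / 2) = ∏ i ∈ range k, (c i + u) := by
    rw [asc_prod', asc_prod', ← prod_mul_distrib]
    refine prod_congr rfl fun j _ => ?_
    rw [hc_def, hu_def]
    ring
  -- cast the central binomial identity
  have key2 : (Nat.choose (2 * k) k : ℚ_[p]) * (k.factorial : ℚ_[p])^2
      = 4 ^ k * ∏ i ∈ range k, c i := by
    have := congrArg (fun q : ℚ => (q : ℚ_[p])) (central_q' k)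
    push_cast at this
    simpa [hc_def] using this
  -- cast the harmonic identity
  have key3 : ∑ i ∈ range k, (c i)⁻¹
      = 4 * (((harmonic (2 * k) : ℚ) : ℚ_[p]) - ((harmonic k : ℚ) : ℚ_[p])) := by
    have := congrArg (fun q : ℚ => (q : ℚ_[p])) (harm_q' k)
    push_cast at this
    simpa [hc_def] using this
  have hfacne : (k.factorial : ℚ_[p]) ≠ 0 := Nat.cast_ne_zero.mpr k.factorial_pos.ne'
  have h4kne : (4 : ℚ_[p])^k ≠ 0 := pow_ne_zero _ h4ne
  have hE := prod_expand' hc hc0 hu1 k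
  set H2 : ℚ_[p] := ((harmonic (2 * k) : ℚ) : ℚ_[p]) with hH2_def
  set H1 : ℚ_[p] := ((harmonic k : ℚ) : ℚ_[p]) with hH1_def
  set A : ℚ_[p] := ∏ i ∈ range k, c i with hA_def
  set S : ℚ_[p] := ∑ i ∈ range k, (c i)⁻¹ with hS_def
  set E : ℚ_[p] := ∏ i ∈ range k, (c i + u) - A * (1 + u * S) with hE_def
  set C : ℚ_[p] := (Nat.choose (2 * k) k : ℚ_[p]) with hC_def
  set F : ℚ_[p] := (k.factorial : ℚ_[p]) with hF_def
  have hprod : ∏ i ∈ range k, (c i + u) = E + A * (1 + u * S) := by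
    rw [hE_def]; ring
  have hA : A = C * F^2 / 4^k := by
    field_simp
    linear_combination -key2
  have keyalg :
      (ascPochhammer ℚ_[p] k).eval ((1 + a) / 2) *
        (ascPochhammer ℚ_[p] k).eval (1 - a / 2) / F^2 * (z : ℚ_[p])^k -
      C * (1 + a * H2 - a * H1) * ((z : ℚ_[p]) / 4)^k
      = E * (z : ℚ_[p])^k / F^2
        - (C * (H2 - H1)) * ((z : ℚ_[p]) / 4)^k * a^2 := by
    rw [key1, hprod, hA, key3, hu_def, div_pow]
    field_simp
    ring
  rw [keyalg]
  -- norms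
  have hzn : ‖(z : ℚ_[p])‖ ≤ 1 := by
    rw [PadicInt.padic_norm_e_of_padicInt]; exact z.norm_le_one
  have hz4 : ‖((z : ℚ_[p]) / 4)^k‖ ≤ 1 := by
    rw [norm_pow, norm_div, h4norm, div_one]
    exact pow_le_one₀ (norm_nonneg _) hzn
  have hFnorm : ‖F‖ = 1 := by
    rw [hF_def]
    refine natnorm_eq_one' fun h => ?_
    exact absurd ((Nat.Prime.dvd_factorial hp.out).mp h) (not_le.mpr hk)
  have hpow : (p : ℝ) ^ (-2 : ℤ) = ((p : ℝ)⁻¹)^2 := by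
    rw [show (-2 : ℤ) = -(2 : ℕ) by norm_num, zpow_neg, zpow_natCast, inv_pow]
  have hu2 : ‖u‖^2 ≤ ((p : ℝ)⁻¹)^2 := pow_le_pow_left₀ (norm_nonneg _) hu 2
  have ha2 : ‖a‖^2 ≤ ((p : ℝ)⁻¹)^2 := pow_le_pow_left₀ (norm_nonneg _) ha 2
  have hterm1 : ‖E * (z : ℚ_[p])^k / F^2‖ ≤ ((p : ℝ)⁻¹)^2 := by
    rw [norm_div, norm_mul, norm_pow, norm_pow, hFnorm, one_pow, div_one]
    calc ‖E‖ * ‖(z : ℚ_[p])‖^k ≤ ‖u‖^2 * 1 :=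
          mul_le_mul hE (pow_le_one₀ (norm_nonneg _) hzn) (by positivity) (by positivity)
      _ = ‖u‖^2 := mul_one _
      _ ≤ _ := hu2
  have hterm2 : ‖(C * (H2 - H1)) * ((z : ℚ_[p]) / 4)^k * a^2‖ ≤ ((p : ℝ)⁻¹)^2 := by
    rw [norm_mul, norm_mul, norm_pow (a := a)]
    calc ‖C * (H2 - H1)‖ * ‖((z : ℚ_[p]) / 4)^k‖ * ‖a‖^2
        ≤ 1 * 1 * ((p : ℝ)⁻¹)^2 := by
          refine mul_le_mul (mul_le_mul (CH_bound' hk) hz4 (norm_nonneg _) zero_le_one)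
            ha2 (by positivity) (by norm_num)
      _ = ((p : ℝ)⁻¹)^2 := by ring
  rw [hpow, sub_eq_add_neg]
  refine (IsUltrametricDist.norm_add_le_max _ _).trans (max_le hterm1 ?_)
  rw [norm_neg]
  exact hterm2

end Aux

/-- **Congruence (2.2).** For a prime `p > 3` and `t, z ∈ ℤ_p`,
`Σ_{k=0}^{p-1} ((1+pt)/2)_k (1 - pt/2)_k / k!² · z^k
  ≡ Σ_{k=0}^{p-1} C(2k,k)(1 + pt H_{2k} - pt H_k)(z/4)^k (mod p²)` in `ℤ_p`. -/
theorem congr_2F1_three_halves (p : ℕ) [Fact p.Prime] (hp : 3 < p) (t z : ℤ_[p]) :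
    ‖(∑ k ∈ Finset.range p,
          (ascPochhammer ℚ_[p] k).eval ((1 + (p : ℚ_[p]) * (t : ℚ_[p])) / 2) *
            (ascPochhammer ℚ_[p] k).eval (1 - (p : ℚ_[p]) * (t : ℚ_[p]) / 2) /
              ((k.factorial : ℚ_[p]))^2 * (z : ℚ_[p])^k) -
      ∑ k ∈ Finset.range p,
          (Nat.choose (2 * k) k : ℚ_[p]) *
            (1 + (p : ℚ_[p]) * (t : ℚ_[p]) * ((harmonic (2 * k) : ℚ) : ℚ_[p])
               - (p : ℚ_[p]) * (t : ℚ_[p]) * ((harmonic k : ℚ) : ℚ_[p])) *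
              ((z : ℚ_[p]) / 4)^k‖
      ≤ (p : ℝ) ^ (-2 : ℤ) := by
  have hp0 : (0 : ℝ) < (p : ℝ) := by
    exact_mod_cast (Fact.out : p.Prime).pos
  rw [← Finset.sum_sub_distrib]
  refine sum_norm_le' (le_of_lt (zpow_pos hp0 _)) fun k hk => ?_
  exact term_bound hp t z (Finset.mem_range.mp hk)
end

section
/- Let p > 3 be a prime and let t, z be p-adic integers. Then Σ_{k=0}^{p−1} ((1+pt)/2)_k (−pt/2)_k / (k!)² · z^k ≡ 1 − (pt/2) Σ_{k=1}^{p−1} (C(2k,k)/k) (z/4)^k (mod p²), a congruence in ℤ_p. -/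
open Finset

section aux

variable {p : ℕ} [Fact p.Prime]

private lemma asc_eval_prod (x : ℚ_[p]) (n : ℕ) :
    (ascPochhammer ℚ_[p] n).eval x = ∏ j ∈ Finset.range n, (x + j) := by
  induction n with
  | zero => simp
  | succ n ih => rw [ascPochhammer_succ_eval, ih, Finset.prod_range_succ]

private lemma norm_sum_le_max {ι : Type*} (s : Finset ι) (f : ι → ℚ_[p]) (C : ℝ)
    (hC : 0 ≤ C) (h : ∀ i ∈ s, ‖f i‖ ≤ C) : ‖∑ i ∈ s, f i‖ ≤ C := by
  classical
  induction s using Finset.induction_on with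
  | empty => simpa using hC
  | @insert a s hx ih =>
    rw [Finset.sum_insert hx]
    refine le_trans (Padic.nonarchimedean _ _) (max_le ?_ ?_)
    · exact h a (Finset.mem_insert_self a s)
    · exact ih fun i hi => h i (Finset.mem_insert_of_mem hi)

private lemma norm_prod_le_one {ι : Type*} (s : Finset ι) (f : ι → ℚ_[p])
    (hf : ∀ i ∈ s, ‖f i‖ ≤ 1) : ‖∏ i ∈ s, f i‖ ≤ 1 := by
  rw [norm_prod]
  exact Finset.prod_le_one (fun i _ => norm_nonneg _) hf

private lemma norm_mul_sub_mul (a b c d : ℚ_[p]) (ε : ℝ)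
    (ha : ‖a‖ ≤ 1) (hd : ‖d‖ ≤ 1) (hac : ‖a - c‖ ≤ ε) (hbd : ‖b - d‖ ≤ ε) :
    ‖a * b - c * d‖ ≤ ε := by
  have h : a * b - c * d = a * (b - d) + (a - c) * d := by ring
  rw [h]
  refine le_trans (Padic.nonarchimedean _ _) (max_le ?_ ?_)
  · rw [norm_mul]
    calc ‖a‖ * ‖b - d‖ ≤ 1 * ε := by
          exact mul_le_mul ha hbd (norm_nonneg _) zero_le_one
      _ = ε := one_mul ε
  · rw [norm_mul]
    calc ‖a - c‖ * ‖d‖ ≤ ε * 1 := by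
          exact mul_le_mul hac hd (norm_nonneg _) (le_trans (norm_nonneg _) hac)
      _ = ε := mul_one ε

private lemma norm_prod_sub_prod {ι : Type*} (s : Finset ι) (f g : ι → ℚ_[p]) (ε : ℝ)
    (hε : 0 ≤ ε)
    (hf : ∀ i ∈ s, ‖f i‖ ≤ 1) (hg : ∀ i ∈ s, ‖g i‖ ≤ 1)
    (hd : ∀ i ∈ s, ‖f i - g i‖ ≤ ε) :
    ‖∏ i ∈ s, f i - ∏ i ∈ s, g i‖ ≤ ε := by
  classical
  induction s using Finset.induction_on with
  | empty => simpa using hε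
  | @insert a s hx ih =>
    rw [Finset.prod_insert hx, Finset.prod_insert hx]
    refine norm_mul_sub_mul _ _ _ _ ε (hf a (Finset.mem_insert_self a s))
      (norm_prod_le_one s g fun i hi => hg i (Finset.mem_insert_of_mem hi))
      (hd a (Finset.mem_insert_self a s))
      (ih (fun i hi => hf i (Finset.mem_insert_of_mem hi))
        (fun i hi => hg i (Finset.mem_insert_of_mem hi))
        (fun i hi => hd i (Finset.mem_insert_of_mem hi)))

/-- `(1/2)_n · 4^n · n! = (2n)!` in `ℚ_p`. -/
private lemma asc_half_factorial (n : ℕ) :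
    (ascPochhammer ℚ_[p] n).eval (2⁻¹ : ℚ_[p]) * 4 ^ n * (n.factorial : ℚ_[p])
      = ((2 * n).factorial : ℚ_[p]) := by
  induction n with
  | zero => simp
  | succ n ih =>
    rw [ascPochhammer_succ_eval]
    have h2 : (2 * (n + 1)) = (2 * n + 1) + 1 := by ring
    rw [h2, Nat.factorial_succ, Nat.factorial_succ]
    have h3 : ((2 * n + 1).factorial : ℚ_[p]) = (2 * n + 1 : ℚ_[p]) * ((2 * n).factorial : ℚ_[p]) := by
      rw [Nat.factorial_succ]; push_cast; ring
    push_cast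
    linear_combination ((2⁻¹ + (n : ℚ_[p])) * 4 * ((n : ℚ_[p]) + 1)) * ih
      - (2 * (n : ℚ_[p]) + 2) * h3

end aux

/-- **Congruence (2.3).** For a prime `p > 3` and `t, z ∈ ℤ_p`,
`Σ_{k=0}^{p-1} ((1+pt)/2)_k (-pt/2)_k / k!² · z^k
  ≡ 1 - (pt/2) Σ_{k=1}^{p-1} (C(2k,k)/k)(z/4)^k (mod p²)` in `ℤ_p`. -/
theorem congr_2F1_one_half (p : ℕ) [Fact p.Prime] (hp : 3 < p) (t z : ℤ_[p]) :
    ‖(∑ k ∈ Finset.range p,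
          (ascPochhammer ℚ_[p] k).eval ((1 + (p : ℚ_[p]) * (t : ℚ_[p])) / 2) *
            (ascPochhammer ℚ_[p] k).eval (-((p : ℚ_[p]) * (t : ℚ_[p])) / 2) /
              ((k.factorial : ℚ_[p]))^2 * (z : ℚ_[p])^k) -
      (1 - (p : ℚ_[p]) * (t : ℚ_[p]) / 2 *
        ∑ k ∈ Finset.Icc 1 (p - 1),
          (((Nat.choose (2 * k) k : ℚ) / k : ℚ) : ℚ_[p]) * ((z : ℚ_[p]) / 4)^k)‖
      ≤ (p : ℝ) ^ (-2 : ℤ) := by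
  have hprime : p.Prime := Fact.out
  set u : ℚ_[p] := (p : ℚ_[p]) * (t : ℚ_[p]) with hu
  -- basic norm facts
  have hppos : (0:ℝ) < (p:ℝ) := by exact_mod_cast hprime.pos
  have hεnn : (0:ℝ) ≤ (p:ℝ)⁻¹ := by positivity
  have hεle1 : (p:ℝ)⁻¹ ≤ 1 := by
    rw [inv_le_one_iff₀]; right; exact_mod_cast hprime.one_lt.le
  have hnat : ∀ n : ℕ, ‖(n : ℚ_[p])‖ ≤ 1 := by
    intro n
    have := Padic.norm_int_le_one (p := p) (n : ℤ)
    push_cast at this; exact this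
  have htwo : ‖(2 : ℚ_[p])‖ = 1 := by
    have h1 : ‖((2:ℤ) : ℚ_[p])‖ ≤ 1 := Padic.norm_int_le_one _
    have h2 : ¬ ‖((2:ℤ) : ℚ_[p])‖ < 1 := by
      rw [Padic.norm_intCast_lt_one_iff]
      intro h
      have h3 : (p : ℤ) ≤ 2 := Int.le_of_dvd (by norm_num) h
      omega
    push_cast at h1 h2
    linarith [lt_or_ge (‖(2:ℚ_[p])‖) 1]
  have ht1 : ‖(t : ℚ_[p])‖ ≤ 1 := by
    have := PadicInt.norm_le_one t
    rwa [PadicInt.norm_def] at this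
  have hz1 : ‖(z : ℚ_[p])‖ ≤ 1 := by
    have := PadicInt.norm_le_one z
    rwa [PadicInt.norm_def] at this
  have hu2 : ‖u / 2‖ ≤ (p:ℝ)⁻¹ := by
    rw [norm_div, htwo, div_one, hu, norm_mul, Padic.norm_p]
    calc (p:ℝ)⁻¹ * ‖(t:ℚ_[p])‖ ≤ (p:ℝ)⁻¹ * 1 := by
          exact mul_le_mul_of_nonneg_left ht1 hεnn
      _ = (p:ℝ)⁻¹ := mul_one _
  have hu1 : ‖u‖ ≤ 1 := by
    rw [hu, norm_mul, Padic.norm_p]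
    calc (p:ℝ)⁻¹ * ‖(t:ℚ_[p])‖ ≤ 1 * 1 :=
          mul_le_mul hεle1 ht1 (norm_nonneg _) zero_le_one
      _ = 1 := one_mul 1
  -- norms of the individual product factors
  have hhalf : ‖((1:ℚ_[p]) + u) / 2‖ ≤ 1 := by
    rw [norm_div, htwo, div_one]
    exact le_trans (Padic.nonarchimedean _ _) (max_le (by simp) hu1)
  have hA1 : ∀ j : ℕ, ‖((1:ℚ_[p]) + u) / 2 + (j : ℚ_[p])‖ ≤ 1 := fun j =>
    le_trans (Padic.nonarchimedean _ _) (max_le hhalf (hnat j))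
  have hinv2 : ‖(2⁻¹ : ℚ_[p])‖ ≤ 1 := by rw [norm_inv, htwo]; norm_num
  have hH1 : ∀ j : ℕ, ‖(2⁻¹ : ℚ_[p]) + (j : ℚ_[p])‖ ≤ 1 := fun j =>
    le_trans (Padic.nonarchimedean _ _) (max_le hinv2 (hnat j))
  have hB1 : ∀ x : ℚ_[p], ‖x‖ ≤ 1 → ‖-u / 2 + x‖ ≤ 1 := by
    intro x hx
    refine le_trans (Padic.nonarchimedean _ _) (max_le ?_ hx)
    have : ‖-u / 2‖ = ‖u / 2‖ := by rw [neg_div, norm_neg]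
    rw [this]; exact le_trans hu2 hεle1
  -- reindex the sums
  set q := p - 1 with hq
  have hpq : p = q + 1 := by omega
  have hIcc : Finset.Icc 1 q = Finset.Ico 1 p := by
    rw [← Finset.Ico_add_one_right_eq_Icc]; congr 1; omega
  have hrange : Finset.range p = Finset.range (q + 1) := by rw [← hpq]
  rw [hIcc, Finset.sum_Ico_eq_sum_range, hrange, Finset.sum_range_succ']
  have hzero : (ascPochhammer ℚ_[p] 0).eval ((1 + u) / 2) *
      (ascPochhammer ℚ_[p] 0).eval (-u / 2) /
        ((Nat.factorial 0 : ℚ_[p]))^2 * (z : ℚ_[p])^0 = 1 := by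
    simp
  rw [hzero]
  have hpq' : p - 1 = q := rfl
  rw [hpq']
  have hre : (∑ i ∈ Finset.range q,
        (ascPochhammer ℚ_[p] (i+1)).eval ((1 + u) / 2) *
          (ascPochhammer ℚ_[p] (i+1)).eval (-u / 2) /
            (((i+1).factorial : ℚ_[p]))^2 * (z : ℚ_[p])^(i+1)) + 1 -
      (1 - u / 2 * ∑ i ∈ Finset.range q,
        (((Nat.choose (2 * (1+i)) (1+i) : ℚ) / ((1+i : ℕ)) : ℚ) : ℚ_[p]) * ((z : ℚ_[p]) / 4)^(1+i))
      = ∑ i ∈ Finset.range q,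
        ((ascPochhammer ℚ_[p] (i+1)).eval ((1 + u) / 2) *
          (ascPochhammer ℚ_[p] (i+1)).eval (-u / 2) /
            (((i+1).factorial : ℚ_[p]))^2 * (z : ℚ_[p])^(i+1) +
         u / 2 * ((((Nat.choose (2 * (1+i)) (1+i) : ℚ) / ((1+i : ℕ)) : ℚ) : ℚ_[p]) *
            ((z : ℚ_[p]) / 4)^(1+i))) := by
    rw [Finset.sum_add_distrib, Finset.mul_sum]; ring
  rw [hre]
  apply norm_sum_le_max _ _ _ (by positivity)
  intro i hi
  have him : i + 1 < p := by
    have := Finset.mem_range.mp hi; omega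
  set m := i + 1 with hm
  have h1i : 1 + i = m := by omega
  rw [h1i]
  -- norm of m! is 1
  have hfacnorm : ‖(m.factorial : ℚ_[p])‖ = 1 := by
    have h1 : ‖((m.factorial : ℤ) : ℚ_[p])‖ ≤ 1 := Padic.norm_int_le_one _
    have h2 : ¬ ‖((m.factorial : ℤ) : ℚ_[p])‖ < 1 := by
      rw [Padic.norm_intCast_lt_one_iff]
      intro h
      have h3 : p ∣ m.factorial := by exact_mod_cast h
      have h4 := (Nat.Prime.dvd_factorial hprime).mp h3
      omega
    push_cast at h1 h2
    linarith [lt_or_ge (‖(m.factorial : ℚ_[p])‖) 1]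
  have hfac0 : (m.factorial : ℚ_[p]) ≠ 0 := by
    exact_mod_cast m.factorial_ne_zero
  have hi1 : ((i : ℚ_[p]) + 1) ≠ 0 := by
    have h : (((i + 1 : ℕ)) : ℚ_[p]) ≠ 0 := Nat.cast_ne_zero.mpr (by omega)
    push_cast at h; exact h
  -- the pochhammer products
  set P : ℚ_[p] := ∏ j ∈ Finset.range i, (-u / 2 + ((j : ℚ_[p]) + 1)) with hP
  have hB : (ascPochhammer ℚ_[p] m).eval (-u / 2)
      = P * (-u / 2) := by
    rw [asc_eval_prod, hm, Finset.prod_range_succ']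
    push_cast
    simp [hP]
  -- key combinatorial identity
  have hC : ((Nat.choose (2 * m) m : ℚ_[p])) * ((m.factorial : ℚ_[p]))^2
      = (((2 * m).factorial : ℚ_[p])) := by
    have h := Nat.choose_mul_factorial_mul_factorial (show m ≤ 2 * m by omega)
    rw [show 2 * m - m = m by omega] at h
    rw [pow_two, ← mul_assoc]
    exact_mod_cast h
  have hF := asc_half_factorial (p := p) m
  have hms : (m.factorial : ℚ_[p]) = ((i : ℚ_[p]) + 1) * (i.factorial : ℚ_[p]) := by
    rw [hm, Nat.factorial_succ]; push_cast; ring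
  have hc : (((Nat.choose (2 * m) m : ℚ) / ((m : ℕ)) : ℚ) : ℚ_[p])
      = (ascPochhammer ℚ_[p] m).eval (2⁻¹ : ℚ_[p]) * (i.factorial : ℚ_[p]) * 4 ^ m /
          ((m.factorial : ℚ_[p]))^2 := by
    push_cast
    rw [show ((m : ℕ) : ℚ_[p]) = (i : ℚ_[p]) + 1 by simp [hm]]
    rw [div_eq_div_iff hi1 (pow_ne_zero 2 hfac0)]
    linear_combination hC - hF + (ascPochhammer ℚ_[p] m).eval (2⁻¹ : ℚ_[p]) * 4 ^ m * hms
  -- rewrite the whole term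
  have hterm : (ascPochhammer ℚ_[p] m).eval ((1 + u) / 2) *
        (ascPochhammer ℚ_[p] m).eval (-u / 2) /
          ((m.factorial : ℚ_[p]))^2 * (z : ℚ_[p])^m +
      u / 2 * ((((Nat.choose (2 * m) m : ℚ) / ((m : ℕ)) : ℚ) : ℚ_[p]) * ((z : ℚ_[p]) / 4)^m)
      = u / 2 * ((z : ℚ_[p])^m *
          ((ascPochhammer ℚ_[p] m).eval (2⁻¹ : ℚ_[p]) * (i.factorial : ℚ_[p]) -
            (ascPochhammer ℚ_[p] m).eval ((1 + u) / 2) * P) /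
          ((m.factorial : ℚ_[p]))^2) := by
    rw [hB, hc, div_pow]
    have h4m : ((4 : ℚ_[p])) ^ m ≠ 0 := pow_ne_zero _ (by norm_num)
    field_simp [hfac0, h4m]
    ring
  rw [hterm, norm_mul]
  -- bound the second factor
  have hΔ : ‖(ascPochhammer ℚ_[p] m).eval (2⁻¹ : ℚ_[p]) * (i.factorial : ℚ_[p]) -
      (ascPochhammer ℚ_[p] m).eval ((1 + u) / 2) * P‖
      ≤ (p:ℝ)⁻¹ := by
    rw [asc_eval_prod, asc_eval_prod]
    have hbfac : ((i.factorial : ℚ_[p])) = ∏ j ∈ Finset.range i, ((j : ℚ_[p]) + 1) := by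
      rw [← Finset.prod_range_add_one_eq_factorial]
      push_cast
      rfl
    rw [hbfac]
    refine norm_mul_sub_mul _ _ _ _ _ ?_ ?_ ?_ ?_
    · exact norm_prod_le_one _ _ fun j _ => hH1 j
    · refine norm_prod_le_one _ _ fun j _ => hB1 _ ?_
      have := hnat (j + 1); push_cast at this; exact this
    · refine norm_prod_sub_prod _ _ _ _ hεnn (fun j _ => hH1 j) (fun j _ => hA1 j) ?_
      intro j _
      have hd : (2⁻¹ : ℚ_[p]) + (j : ℚ_[p]) -
          ((1 + (p : ℚ_[p]) * (t : ℚ_[p])) / 2 + (j : ℚ_[p])) = -(u / 2) := by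
        rw [hu]; field_simp; ring
      rw [hd, norm_neg]; exact hu2
    · refine norm_prod_sub_prod _ _ _ _ hεnn ?_ ?_ ?_
      · intro j _
        have := hnat (j + 1); push_cast at this; exact this
      · intro j _
        refine hB1 _ ?_
        have := hnat (j + 1); push_cast at this; exact this
      · intro j _
        have hd : ((j : ℚ_[p]) + 1) - (-u / 2 + ((j : ℚ_[p]) + 1)) = u / 2 := by ring
        rw [hd]; exact hu2
  have hsecond : ‖(z : ℚ_[p])^m *
      ((ascPochhammer ℚ_[p] m).eval (2⁻¹ : ℚ_[p]) * (i.factorial : ℚ_[p]) -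
        (ascPochhammer ℚ_[p] m).eval ((1 + u) / 2) * P) /
      ((m.factorial : ℚ_[p]))^2‖ ≤ (p:ℝ)⁻¹ := by
    rw [norm_div, norm_mul, norm_pow, norm_pow, hfacnorm, one_pow, div_one]
    calc ‖(z : ℚ_[p])‖ ^ m * ‖_‖ ≤ 1 * (p:ℝ)⁻¹ :=
          mul_le_mul (pow_le_one₀ (norm_nonneg _) hz1) hΔ (norm_nonneg _) zero_le_one
      _ = (p:ℝ)⁻¹ := one_mul _
  calc ‖u / 2‖ * ‖_‖ ≤ (p:ℝ)⁻¹ * (p:ℝ)⁻¹ :=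
        mul_le_mul hu2 hsecond (norm_nonneg _) hεnn
    _ = (p : ℝ) ^ (-2 : ℤ) := by
        rw [zpow_neg, zpow_two, mul_inv]
end

section
/- Let a be an even nonnegative integer and let z ∈ ℚ. Then (Σ_{k=0}^{a/2} (−a/2)_k ((a+3)/2)_k / (k!)² · z^k) · (Σ_{l=0}^{a/2} (−a/2)_l ((a+1)/2)_l / (l!)² · z^l) = Σ_{j=0}^{a} (−a)_j (a+2)_j (1/2)_j / (j!)³ · z^j. -/
open Finset Polynomial

noncomputable section OrrAux

/-- Pochhammer evaluation shorthand. -/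
def pp (n : ℕ) (x : ℚ) : ℚ := (ascPochhammer ℚ n).eval x

lemma pp_succ (n : ℕ) (x : ℚ) : pp (n+1) x = pp n x * (x + n) :=
  ascPochhammer_succ_eval n x

lemma pp_succ_left (n : ℕ) (x : ℚ) : pp (n+1) x = x * pp n (x+1) := by
  unfold pp
  rw [ascPochhammer_succ_left, Polynomial.eval_mul, Polynomial.eval_X, Polynomial.eval_comp]
  simp

lemma pp_zero (x : ℚ) : pp 0 x = 1 := by simp [pp]
lemma pp_one (x : ℚ) : pp 1 x = x := by simp [pp]
lemma pp_neg_zero {m k : ℕ} (h : m < k) : pp k (-(m:ℚ)) = 0 :=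
  ascPochhammer_eval_neg_coe_nat_of_lt h

def ff (m : ℕ) (k : ℕ) : ℚ := pp k (-(m:ℚ)) * pp k ((m:ℚ) + 3/2) / ((k.factorial : ℚ))^2
def gg (m : ℕ) (n : ℕ) : ℚ := pp n (-(m:ℚ)) * pp n ((m:ℚ) + 1/2) / ((n.factorial : ℚ))^2
def hh (m : ℕ) (n : ℕ) : ℚ := pp n (-(m:ℚ) - 1) * pp n ((m:ℚ) - 1/2) / ((n.factorial : ℚ))^2

lemma ff_succ (m k : ℕ) : ff m (k+1)
    = ff m k * (((k:ℚ) - m) * ((m:ℚ) + 3/2 + k)) / ((k:ℚ)+1)^2 := by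
  unfold ff; rw [pp_succ, pp_succ, Nat.factorial_succ]; push_cast
  have h1 : ((k:ℚ)+1) ≠ 0 := by positivity
  field_simp; ring

lemma gg_succ (m n : ℕ) : gg m (n+1)
    = gg m n * (((n:ℚ) - m) * ((m:ℚ) + 1/2 + n)) / ((n:ℚ)+1)^2 := by
  unfold gg; rw [pp_succ, pp_succ, Nat.factorial_succ]; push_cast
  have h1 : ((n:ℚ)+1) ≠ 0 := by positivity
  field_simp; ring

lemma hh_succ (m n : ℕ) : hh m (n+1)
    = hh m n * (((n:ℚ) - m - 1) * ((m:ℚ) - 1/2 + n)) / ((n:ℚ)+1)^2 := by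
  unfold hh; rw [pp_succ, pp_succ, Nat.factorial_succ]; push_cast
  have h1 : ((n:ℚ)+1) ≠ 0 := by positivity
  field_simp; ring

lemma hh_one_gg (m n : ℕ) : hh m (n+1)
    = (-(m:ℚ) - 1) * ((m:ℚ) - 1/2) * gg m n / ((n:ℚ)+1)^2 := by
  unfold hh gg
  rw [pp_succ_left, pp_succ_left, Nat.factorial_succ]
  have e1 : (-(m:ℚ) - 1 + 1) = -(m:ℚ) := by ring
  have e2 : ((m:ℚ) - 1/2 + 1) = (m:ℚ) + 1/2 := by ring
  rw [e1, e2]; push_cast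
  have h1 : ((n:ℚ)+1) ≠ 0 := by positivity
  field_simp

/-- Zeilberger certificate polynomials. -/
def qA0 (m j : ℚ) : ℚ := (2*j+1)*(2*j+3)*(2*m-j)*(2*m+j+2)
def qA1 (m j : ℚ) : ℚ := 4*(j+1)*(2*j+3)*((j+1)*(j+2)-2*m*(m+1))
def qA2 (j : ℚ) : ℚ := -4*(j+1)*(j+2)^3
def qC (m j k : ℚ) : ℚ := k^2*( -(j+2)*(8*j^2+16*j+6+2*m*(j-1)+12*m^2*(j+1))
    + (8+22*j+10*j^2-12*m-4*m*j+8*m^2+8*m^2*j)*k + (4*m-2*j)*k^2 )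
def qD (m : ℚ) : ℚ := (m+1)*(m-1/2)

lemma qD_ne (m : ℕ) : qD (m:ℚ) ≠ 0 := by
  unfold qD
  have h1 : ((m:ℚ)+1) ≠ 0 := by positivity
  have h2 : ((m:ℚ) - 1/2) ≠ 0 := by
    intro h
    have h3 : ((2*m : ℕ) : ℚ) = ((1:ℕ):ℚ) := by push_cast; linarith
    have : (2*m : ℕ) = 1 := Nat.cast_inj.mp h3
    omega
  exact mul_ne_zero h1 h2

set_option maxHeartbeats 2000000 in
lemma id1 (m k n : ℕ) :
    qA0 (m:ℚ) ((k:ℚ)+(n:ℚ)) * (ff m k * gg m n)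
      + qA1 (m:ℚ) ((k:ℚ)+(n:ℚ)) * (ff m k * gg m (n+1))
      + qA2 ((k:ℚ)+(n:ℚ)) * (ff m k * gg m (n+2))
    = -qC (m:ℚ) ((k:ℚ)+(n:ℚ)) ((k:ℚ)+1) * ff m (k+1) * hh m (n+1) / qD (m:ℚ)
      - (-qC (m:ℚ) ((k:ℚ)+(n:ℚ)) (k:ℚ) * ff m k * hh m (n+2) / qD (m:ℚ)) := by
  rw [show n+2 = (n+1)+1 from rfl, gg_succ m (n+1), gg_succ m n,
      hh_succ m (n+1), hh_one_gg m n, ff_succ m k]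
  push_cast
  have h1 : ((k:ℚ)+1) ≠ 0 := by positivity
  have h2 : ((n:ℚ)+1) ≠ 0 := by positivity
  have h3 : ((n:ℚ)+1+1) ≠ 0 := by positivity
  have h4 : qD (m:ℚ) ≠ 0 := qD_ne m
  field_simp
  unfold qA0 qA1 qA2 qC qD
  ring

def Sc (m j : ℕ) : ℚ := ∑ k ∈ Finset.range (j+1), ff m k * gg m (j - k)
def Tc (m j : ℕ) : ℚ :=
  pp j (-(m:ℚ)-(m:ℚ)) * pp j ((m:ℚ)+(m:ℚ)+2) * pp j (1/2) / ((j.factorial : ℚ))^3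

def Psi (m j k : ℕ) : ℚ := -qC (m:ℚ) (j:ℚ) (k:ℚ) * ff m k * hh m (j+2-k) / qD (m:ℚ)

lemma gg_zero (m : ℕ) : gg m 0 = 1 := by simp [gg, pp_zero]
lemma gg_one (m : ℕ) : gg m 1 = -(m:ℚ) * ((m:ℚ)+1/2) := by
  simp [gg, pp_one]
lemma hh_one (m : ℕ) : hh m 1 = (-(m:ℚ)-1) * ((m:ℚ)-1/2) := by
  simp [hh, pp_one]
lemma ff_zero_eval (m : ℕ) : ff m 0 = 1 := by simp [ff, pp_zero]

set_option maxHeartbeats 1000000 in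
lemma id23 (m j : ℕ) :
    -qC (m:ℚ) (j:ℚ) ((j:ℚ)+1) * ff m (j+1) * hh m 1 / qD (m:ℚ)
      + (qA1 (m:ℚ) (j:ℚ) * (ff m (j+1) * gg m 0)
        + qA2 (j:ℚ) * (ff m (j+1) * gg m 1)
        + qA2 (j:ℚ) * (ff m (j+2) * gg m 0)) = 0 := by
  rw [gg_zero, gg_one, hh_one, ff_succ m (j+1)]
  push_cast
  have h1 : ((j:ℚ)+1+1) ≠ 0 := by positivity
  have h4 : qD (m:ℚ) ≠ 0 := qD_ne m
  field_simp
  unfold qA1 qA2 qC qD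
  ring

lemma rec_S (m j : ℕ) :
    qA0 (m:ℚ) (j:ℚ) * Sc m j + qA1 (m:ℚ) (j:ℚ) * Sc m (j+1) + qA2 (j:ℚ) * Sc m (j+2) = 0 := by
  have peel1 : Sc m (j+1)
      = (∑ k ∈ Finset.range (j+1), ff m k * gg m (j+1-k)) + ff m (j+1) * gg m 0 := by
    rw [Sc, Finset.sum_range_succ, Nat.sub_self]
  have peel2 : Sc m (j+2)
      = (∑ k ∈ Finset.range (j+1), ff m k * gg m (j+2-k))
        + ff m (j+1) * gg m 1 + ff m (j+2) * gg m 0 := by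
    rw [Sc, Finset.sum_range_succ, Finset.sum_range_succ, Nat.sub_self,
      show j+2-(j+1) = 1 by omega]
  have step : ∀ k ∈ Finset.range (j+1),
      (qA0 (m:ℚ) (j:ℚ) * (ff m k * gg m (j-k))
        + qA1 (m:ℚ) (j:ℚ) * (ff m k * gg m (j+1-k))
        + qA2 (j:ℚ) * (ff m k * gg m (j+2-k)))
      = Psi m j (k+1) - Psi m j k := by
    intro k hk
    have hkj : k ≤ j := by simpa [Nat.lt_succ_iff] using hk
    obtain ⟨n, rfl⟩ := Nat.exists_eq_add_of_le hkj
    have e1 : k + n - k = n := by omega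
    have e2 : k + n + 1 - k = n + 1 := by omega
    have e3 : k + n + 2 - k = n + 2 := by omega
    have e4 : k + n + 2 - (k + 1) = n + 1 := by omega
    rw [e1, e2, e3, Psi, Psi, e4, e3]
    have ecast : ((k + n : ℕ) : ℚ) = (k:ℚ) + (n:ℚ) := by push_cast; ring
    have ecast2 : ((k + 1 : ℕ) : ℚ) = (k:ℚ) + 1 := by push_cast; ring
    rw [ecast, ecast2]
    exact id1 m k n
  have hsum : (∑ k ∈ Finset.range (j+1),
      (qA0 (m:ℚ) (j:ℚ) * (ff m k * gg m (j-k))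
        + qA1 (m:ℚ) (j:ℚ) * (ff m k * gg m (j+1-k))
        + qA2 (j:ℚ) * (ff m k * gg m (j+2-k))))
      = Psi m j (j+1) - Psi m j 0 := by
    rw [Finset.sum_congr rfl step]
    exact Finset.sum_range_sub (fun k => Psi m j k) (j+1)
  have hsplit : (∑ k ∈ Finset.range (j+1),
      (qA0 (m:ℚ) (j:ℚ) * (ff m k * gg m (j-k))
        + qA1 (m:ℚ) (j:ℚ) * (ff m k * gg m (j+1-k))
        + qA2 (j:ℚ) * (ff m k * gg m (j+2-k))))
      = qA0 (m:ℚ) (j:ℚ) * (∑ k ∈ Finset.range (j+1), ff m k * gg m (j-k))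
        + qA1 (m:ℚ) (j:ℚ) * (∑ k ∈ Finset.range (j+1), ff m k * gg m (j+1-k))
        + qA2 (j:ℚ) * (∑ k ∈ Finset.range (j+1), ff m k * gg m (j+2-k)) := by
    simp only [Finset.sum_add_distrib]
    simp only [← Finset.mul_sum]
  have psi0 : Psi m j 0 = 0 := by simp [Psi, qC]
  have psij1 : Psi m j (j+1) = -qC (m:ℚ) (j:ℚ) ((j:ℚ)+1) * ff m (j+1) * hh m 1 / qD (m:ℚ) := by
    rw [Psi, show j + 2 - (j+1) = 1 by omega]
    push_cast
    ring
  have h23 := id23 m j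
  rw [peel1, peel2, Sc]
  linear_combination hsum - hsplit + psij1 - psi0 + h23

lemma Tc_succ (m j : ℕ) : Tc m (j+1)
    = Tc m j * (((j:ℚ) - m - m) * ((m:ℚ)+(m:ℚ)+2+j) * (1/2+(j:ℚ))) / ((j:ℚ)+1)^3 := by
  unfold Tc
  rw [pp_succ, pp_succ, pp_succ, Nat.factorial_succ]
  push_cast
  have h1 : ((j:ℚ)+1) ≠ 0 := by positivity
  field_simp
  ring

lemma rec_T (m j : ℕ) :
    qA0 (m:ℚ) (j:ℚ) * Tc m j + qA1 (m:ℚ) (j:ℚ) * Tc m (j+1) + qA2 (j:ℚ) * Tc m (j+2) = 0 := by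
  rw [show j+2 = (j+1)+1 from rfl, Tc_succ m (j+1), Tc_succ m j]
  push_cast
  have h1 : ((j:ℚ)+1) ≠ 0 := by positivity
  have h2 : ((j:ℚ)+1+1) ≠ 0 := by positivity
  field_simp
  unfold qA0 qA1 qA2
  ring

lemma qA2_ne (j : ℕ) : qA2 (j:ℚ) ≠ 0 := by
  unfold qA2
  have h1 : (0:ℚ) < ((j:ℚ)+1) * ((j:ℚ)+2)^3 := by positivity
  intro h
  nlinarith

lemma Sc_eq_Tc (m : ℕ) : ∀ j, Sc m j = Tc m j := by
  have base0 : Sc m 0 = Tc m 0 := by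
    simp [Sc, Tc, ff, gg, pp_zero]
  have base1 : Sc m 1 = Tc m 1 := by
    rw [Sc, Tc]
    rw [Finset.sum_range_succ, Finset.sum_range_succ]
    norm_num [ff_zero_eval, gg_zero, gg_one]
    rw [show (1:ℕ) = 0 + 1 from rfl, ff_succ, ff_zero_eval, pp_one, pp_one, pp_one]
    norm_num
    ring
  have key : ∀ j, Sc m j = Tc m j ∧ Sc m (j+1) = Tc m (j+1) := by
    intro j
    induction j with
    | zero => exact ⟨base0, base1⟩
    | succ i ih =>
      refine ⟨ih.2, ?_⟩
      have hS := rec_S m i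
      have hT := rec_T m i
      rw [ih.1, ih.2] at hS
      have : qA2 (i:ℚ) * Sc m (i+2) = qA2 (i:ℚ) * Tc m (i+2) := by linarith
      exact mul_left_cancel₀ (qA2_ne i) this
  exact fun j => (key j).1

/-- Vanishing of `ff`, `gg` beyond `m`. -/
lemma ff_vanish {m k : ℕ} (h : m < k) : ff m k = 0 := by
  simp [ff, pp_neg_zero h]
lemma gg_vanish {m k : ℕ} (h : m < k) : gg m k = 0 := by
  simp [gg, pp_neg_zero h]

end OrrAux



/-- **Terminating case of Orr's identity (α = -a, β = a+3).** For an even `a ∈ ℕ` and `z ∈ ℚ`,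
`(Σ_{k=0}^{a/2} (-a/2)_k ((a+3)/2)_k / k!² z^k)(Σ_{l=0}^{a/2} (-a/2)_l ((a+1)/2)_l / l!² z^l)
  = Σ_{j=0}^{a} (-a)_j (a+2)_j (1/2)_j / j!³ z^j`. -/
theorem orr_terminating_nonneg (a : ℕ) (ha : Even a) (z : ℚ) :
    (∑ k ∈ Finset.range (a / 2 + 1),
        (ascPochhammer ℚ k).eval (-(a : ℚ) / 2) *
          (ascPochhammer ℚ k).eval (((a : ℚ) + 3) / 2) / ((k.factorial : ℚ))^2 * z^k) *
      (∑ l ∈ Finset.range (a / 2 + 1),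
        (ascPochhammer ℚ l).eval (-(a : ℚ) / 2) *
          (ascPochhammer ℚ l).eval (((a : ℚ) + 1) / 2) / ((l.factorial : ℚ))^2 * z^l)
    = ∑ j ∈ Finset.range (a + 1),
        (ascPochhammer ℚ j).eval (-(a : ℚ)) * (ascPochhammer ℚ j).eval ((a : ℚ) + 2) *
          (ascPochhammer ℚ j).eval (1 / 2) / ((j.factorial : ℚ))^3 * z^j := by
  obtain ⟨m, rfl⟩ := ha
  have hdiv : (m + m) / 2 = m := by omega
  rw [hdiv]
  have ea : -((m + m : ℕ) : ℚ) / 2 = -(m:ℚ) := by push_cast; ring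
  have eb : (((m + m : ℕ) : ℚ) + 3) / 2 = (m:ℚ) + 3/2 := by push_cast; ring
  have ec : (((m + m : ℕ) : ℚ) + 1) / 2 = (m:ℚ) + 1/2 := by push_cast; ring
  have ed : -((m + m : ℕ) : ℚ) = -(m:ℚ) - (m:ℚ) := by push_cast; ring
  have ee : ((m + m : ℕ) : ℚ) + 2 = (m:ℚ) + (m:ℚ) + 2 := by push_cast; ring
  have L1 : (∑ k ∈ Finset.range (m + 1),
      (ascPochhammer ℚ k).eval (-((m + m : ℕ) : ℚ) / 2) *
        (ascPochhammer ℚ k).eval ((((m + m : ℕ) : ℚ) + 3) / 2) / ((k.factorial : ℚ))^2 * z^k)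
      = ∑ k ∈ Finset.range (m + 1), ff m k * z^k := by
    refine Finset.sum_congr rfl fun k _ => ?_
    rw [ea, eb]; rfl
  have L2 : (∑ l ∈ Finset.range (m + 1),
      (ascPochhammer ℚ l).eval (-((m + m : ℕ) : ℚ) / 2) *
        (ascPochhammer ℚ l).eval ((((m + m : ℕ) : ℚ) + 1) / 2) / ((l.factorial : ℚ))^2 * z^l)
      = ∑ l ∈ Finset.range (m + 1), gg m l * z^l := by
    refine Finset.sum_congr rfl fun l _ => ?_
    rw [ea, ec]; rfl
  have R1 : (∑ j ∈ Finset.range (m + m + 1),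
      (ascPochhammer ℚ j).eval (-((m + m : ℕ) : ℚ)) *
        (ascPochhammer ℚ j).eval (((m + m : ℕ) : ℚ) + 2) *
        (ascPochhammer ℚ j).eval (1 / 2) / ((j.factorial : ℚ))^3 * z^j)
      = ∑ j ∈ Finset.range (m + m + 1), Tc m j * z^j := by
    refine Finset.sum_congr rfl fun j _ => ?_
    rw [ed, ee]; rfl
  rw [L1, L2, R1]
  -- Cauchy product via polynomials
  set P : Polynomial ℚ := ∑ k ∈ Finset.range (m + 1), Polynomial.C (ff m k) * Polynomial.X ^ k with hP
  set Q : Polynomial ℚ := ∑ k ∈ Finset.range (m + 1), Polynomial.C (gg m k) * Polynomial.X ^ k with hQ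
  have hPeval : P.eval z = ∑ k ∈ Finset.range (m + 1), ff m k * z^k := by
    rw [hP]; simp [Polynomial.eval_finset_sum]
  have hQeval : Q.eval z = ∑ k ∈ Finset.range (m + 1), gg m k * z^k := by
    rw [hQ]; simp [Polynomial.eval_finset_sum]
  have hPco : ∀ n, P.coeff n = ff m n := by
    intro n
    rw [hP, Polynomial.finset_sum_coeff]
    simp only [Polynomial.coeff_C_mul, Polynomial.coeff_X_pow, mul_ite, mul_one, mul_zero]
    rw [Finset.sum_ite_eq (Finset.range (m+1)) n (fun k => ff m k)]
    by_cases h : n ∈ Finset.range (m + 1)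
    · simp [h]
    · simp only [h, if_false]
      exact (ff_vanish (by simpa [Nat.lt_succ_iff, not_lt] using h)).symm
  have hQco : ∀ n, Q.coeff n = gg m n := by
    intro n
    rw [hQ, Polynomial.finset_sum_coeff]
    simp only [Polynomial.coeff_C_mul, Polynomial.coeff_X_pow, mul_ite, mul_one, mul_zero]
    rw [Finset.sum_ite_eq (Finset.range (m+1)) n (fun k => gg m k)]
    by_cases h : n ∈ Finset.range (m + 1)
    · simp [h]
    · simp only [h, if_false]
      exact (gg_vanish (by simpa [Nat.lt_succ_iff, not_lt] using h)).symm
  have hdegP : P.natDegree ≤ m := by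
    rw [hP]
    refine Polynomial.natDegree_sum_le_of_forall_le _ _ fun k hk => ?_
    exact le_trans (Polynomial.natDegree_C_mul_X_pow_le _ _) (by simpa [Nat.lt_succ_iff] using hk)
  have hdegQ : Q.natDegree ≤ m := by
    rw [hQ]
    refine Polynomial.natDegree_sum_le_of_forall_le _ _ fun k hk => ?_
    exact le_trans (Polynomial.natDegree_C_mul_X_pow_le _ _) (by simpa [Nat.lt_succ_iff] using hk)
  have hdegPQ : (P * Q).natDegree < m + m + 1 :=
    lt_of_le_of_lt (le_trans (Polynomial.natDegree_mul_le) (add_le_add hdegP hdegQ)) (by omega)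
  have hco : ∀ j, (P * Q).coeff j = Sc m j := by
    intro j
    rw [Polynomial.coeff_mul, Finset.Nat.sum_antidiagonal_eq_sum_range_succ_mk]
    exact Finset.sum_congr rfl fun k _ => by rw [hPco, hQco]
  calc (∑ k ∈ Finset.range (m + 1), ff m k * z^k) * (∑ l ∈ Finset.range (m + 1), gg m l * z^l)
      = (P * Q).eval z := by rw [Polynomial.eval_mul, hPeval, hQeval]
    _ = ∑ j ∈ Finset.range (m + m + 1), (P * Q).coeff j * z^j :=
        Polynomial.eval_eq_sum_range' hdegPQ z
    _ = ∑ j ∈ Finset.range (m + m + 1), Tc m j * z^j := by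
        refine Finset.sum_congr rfl fun j _ => ?_
        rw [hco, Sc_eq_Tc]
end

section
/- Let m ≥ 3 be an odd integer and let z ∈ ℚ. Then (Σ_{k=0}^{(m−3)/2} (m/2)_k ((3−m)/2)_k / (k!)² · z^k) · (Σ_{l=0}^{(m−1)/2} (m/2)_l ((1−m)/2)_l / (l!)² · z^l) = Σ_{j=0}^{m−2} (m)_j (2−m)_j (1/2)_j / (j!)³ · z^j. -/
open Finset

namespace OrrAux

noncomputable def aq (v : ℚ) (k : ℕ) : ℚ :=
  (ascPochhammer ℚ k).eval (v + 1/2) * (ascPochhammer ℚ k).eval (1 - v) / ((k.factorial : ℚ))^2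

noncomputable def bq (v : ℚ) (l : ℕ) : ℚ :=
  (ascPochhammer ℚ l).eval (v + 1/2) * (ascPochhammer ℚ l).eval (-v) / ((l.factorial : ℚ))^2

noncomputable def cq (v : ℚ) (j : ℕ) : ℚ :=
  (ascPochhammer ℚ j).eval (2*v + 1) * (ascPochhammer ℚ j).eval (1 - 2*v) *
    (ascPochhammer ℚ j).eval (1/2) / ((j.factorial : ℚ))^3

noncomputable def Sq (v : ℚ) (j : ℕ) : ℚ := ∑ k ∈ range (j+1), aq v k * bq v (j - k)

def Mq (v x y : ℚ) : ℚ :=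
  y^2*((5)*x + (43/2)*x^2 + (63/2)*x^3 + (19)*x^4 + (4)*x^5 + (-5)*v + (-9/2)*v*x + (14)*v*x^2 + (35/2)*v*x^3 + (5)*v*x^4 + (-17)*v^2 + (-51/2)*v^2*x + (3/2)*v^2*x^2 + (17)*v^2*x^3 + (6)*v^2*x^4 + (-20)*v^3 + (-26)*v^3*x + (-8)*v^3*x^2 + (-12)*v^4 + (-18)*v^4*x + (-6)*v^4*x^2)
  + y^3*((-5) + (-71/2)*x + (-69)*x^2 + (-103/2)*x^3 + (-13)*x^4 + (-3)*v + (-35)*v*x + (-47)*v*x^2 + (-16)*v*x^3 + (7)*v^2 + (-19)*v^2*x + (-40)*v^2*x^2 + (-16)*v^2*x^3 + (12)*v^3 + (8)*v^3*x + (4)*v^4 + (4)*v^4*x)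
  + y^4*((14) + (46)*x + (47)*x^2 + (15)*x^3 + (37/2)*v + (81/2)*v*x + (19)*v*x^2 + (12)*v^2 + (27)*v^2*x + (14)*v^2*x^2 + (-2)*v^3)
  + y^5*((-17/2) + (-31/2)*x + (-7)*x^2 + (-11)*v + (-10)*v*x + (-4)*v^2 + (-4)*v^2*x)
  + y^6*((1) + (1)*x + (2)*v)

def Qq (v x : ℚ) : ℚ := (2*v + 1 + x) * (1 - 2*v + x) * (x + 1/2)

def P0 (v x : ℚ) : ℚ := (2*x + 3) * Qq v x

def P1 (v x : ℚ) : ℚ := -(2*x + 3)*(x + 1)^3 - (2*x + 2) * Qq v (x + 1)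

def P2 (x : ℚ) : ℚ := 2*(x + 1)*(x + 2)^3

noncomputable def gq (v : ℚ) (j k : ℕ) : ℚ :=
  if k ≤ j then
    Mq v j k * aq v k * bq v (j - k) / (((j - k : ℕ) : ℚ) + 1)^2 / (((j - k : ℕ) : ℚ) + 2)^2
  else if k = j + 1 then
    -(P2 j * (aq v (j+1) * bq v 1 + aq v (j+2)) + P1 v j * aq v (j+1))
  else if k = j + 2 then
    -(P2 j * aq v (j+2))
  else 0

lemma fact_ne (k : ℕ) : ((k.factorial : ℚ)) ≠ 0 := by
  exact_mod_cast k.factorial_ne_zero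

lemma pe_succ (k : ℕ) (x : ℚ) :
    (ascPochhammer ℚ (k+1)).eval x = (ascPochhammer ℚ k).eval x * (x + k) := by
  rw [ascPochhammer_succ_right]
  simp

lemma aq_succ (v : ℚ) (k : ℕ) :
    aq v (k+1) = aq v k * ((v + 1/2 + k) * (1 - v + k)) / ((k : ℚ) + 1)^2 := by
  unfold aq
  rw [pe_succ, pe_succ, Nat.factorial_succ]
  push_cast
  field_simp

lemma bq_succ (v : ℚ) (l : ℕ) :
    bq v (l+1) = bq v l * ((v + 1/2 + l) * ((l : ℚ) - v)) / ((l : ℚ) + 1)^2 := by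
  unfold bq
  rw [pe_succ, pe_succ, Nat.factorial_succ]
  push_cast
  field_simp
  ring

lemma aq_zero (v : ℚ) : aq v 0 = 1 := by simp [aq]

lemma bq_zero (v : ℚ) : bq v 0 = 1 := by simp [bq]

lemma cq_zero (v : ℚ) : cq v 0 = 1 := by simp [cq]

lemma c_step (v : ℚ) (j : ℕ) :
    ((j : ℚ) + 1)^3 * cq v (j+1) = Qq v j * cq v j := by
  unfold cq Qq
  rw [pe_succ, pe_succ, pe_succ, Nat.factorial_succ]
  push_cast
  field_simp
  ring

lemma bq_one (v : ℚ) : bq v 1 = (v + 1/2) * (-v) := by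
  simp [bq, ascPochhammer_one]

lemma aq_one (v : ℚ) : aq v 1 = (v + 1/2) * (1 - v) := by
  simp [aq, ascPochhammer_one]

lemma bq_two (v : ℚ) : bq v 2 = ((v + 1/2) * (v + 3/2)) * ((-v) * (1 - v)) / 4 := by
  have h : bq v (1+1) = bq v 1 * ((v + 1/2 + 1) * ((1 : ℚ) - v)) / ((1 : ℚ) + 1)^2 := by
    have := bq_succ v 1
    push_cast at this
    exact this
  rw [show (2:ℕ) = 1 + 1 from rfl, h, bq_one]
  ring

set_option maxHeartbeats 1000000 in
lemma tele (v : ℚ) (k l j : ℕ) (hj : j = k + l + 1) :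
    P2 j * (aq v k * bq v (l+3))
      + P1 v j * (aq v k * bq v (l+2))
      + P0 v j * (aq v k * bq v (l+1))
    = Mq v j ((k:ℚ)+1) * aq v (k+1) * bq v l / (((l:ℚ)+1)^2) / (((l:ℚ)+2)^2)
      - Mq v j (k:ℚ) * aq v k * bq v (l+1) / (((l:ℚ)+2)^2) / (((l:ℚ)+3)^2) := by
  subst hj
  rw [show l+3 = l+2+1 from rfl, show l+2 = l+1+1 from rfl]
  rw [bq_succ v (l+1+1), bq_succ v (l+1), bq_succ v l, aq_succ v k]
  simp only [Mq, P0, P1, P2, Qq]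
  have h1 : ((l:ℚ)+1) ≠ 0 := by positivity
  have h2 : ((l:ℚ)+2) ≠ 0 := by positivity
  have h3 : ((l:ℚ)+3) ≠ 0 := by positivity
  have h4 : ((k:ℚ)+1) ≠ 0 := by positivity
  push_cast
  field_simp
  ring

set_option maxHeartbeats 1000000 in
lemma bdy (v : ℚ) (j : ℕ) :
    P2 j * (aq v j * bq v 2) + P1 v j * (aq v j * bq v 1) + P0 v j * (aq v j * bq v 0)
    = -(P2 j * (aq v (j+1) * bq v 1 + aq v (j+2)) + P1 v j * aq v (j+1))
      - Mq v j j * aq v j * bq v 0 / ((0:ℚ)+1)^2 / ((0:ℚ)+2)^2 := by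
  rw [show j+2 = j+1+1 from rfl, aq_succ v (j+1), aq_succ v j, bq_two, bq_one, bq_zero]
  simp only [Mq, P0, P1, P2, Qq]
  have h1 : ((j:ℚ)+1) ≠ 0 := by positivity
  have h2 : ((j:ℚ)+2) ≠ 0 := by positivity
  push_cast
  field_simp
  ring

lemma gq_of_le (v : ℚ) {j k : ℕ} (h : k ≤ j) :
    gq v j k = Mq v j k * aq v k * bq v (j - k) / (((j - k : ℕ) : ℚ) + 1)^2
      / (((j - k : ℕ) : ℚ) + 2)^2 := by
  rw [gq, if_pos h]

lemma gq_j1 (v : ℚ) (j : ℕ) :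
    gq v j (j+1) = -(P2 j * (aq v (j+1) * bq v 1 + aq v (j+2)) + P1 v j * aq v (j+1)) := by
  rw [gq, if_neg (by omega), if_pos rfl]

lemma gq_j2 (v : ℚ) (j : ℕ) : gq v j (j+2) = -(P2 j * aq v (j+2)) := by
  rw [gq, if_neg (by omega), if_neg (by omega), if_pos rfl]

lemma gq_j3 (v : ℚ) (j : ℕ) : gq v j (j+3) = 0 := by
  rw [gq, if_neg (by omega), if_neg (by omega), if_neg (by omega)]

lemma Mq_zero (v x : ℚ) : Mq v x 0 = 0 := by simp [Mq]

lemma gq_zero (v : ℚ) (j : ℕ) : gq v j 0 = 0 := by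
  rw [gq_of_le v (Nat.zero_le j)]
  norm_num [Mq]

lemma gq_succ_sub (v : ℚ) (j : ℕ) : ∀ k ∈ range (j+3),
    P2 j * (aq v k * bq v (j+2-k))
      + P1 v j * (if k ≤ j+1 then aq v k * bq v (j+1-k) else 0)
      + P0 v j * (if k ≤ j then aq v k * bq v (j-k) else 0)
    = gq v j (k+1) - gq v j k := by
  intro k hk
  simp only [mem_range] at hk
  rcases lt_trichotomy k j with hkj | rfl | hkj
  · obtain ⟨l, rfl⟩ : ∃ l, j = k + l + 1 := ⟨j - k - 1, by omega⟩
    rw [if_pos (by omega), if_pos (by omega)]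
    rw [gq_of_le v (show k+1 ≤ k+l+1 by omega), gq_of_le v (show k ≤ k+l+1 by omega)]
    rw [show k+l+1 - (k+1) = l from by omega, show k+l+1 - k = l+1 from by omega,
        show k+l+1+2 - k = l+3 from by omega, show k+l+1+1 - k = l+2 from by omega]
    have t := tele v k l (k+l+1) rfl
    push_cast at t ⊢
    linear_combination t
  · rw [if_pos (by omega), if_pos (by omega)]
    rw [gq_j1 v k, gq_of_le v (le_refl k)]
    rw [show k+2 - k = 2 from by omega, show k+1 - k = 1 from by omega, Nat.sub_self]
    push_cast
    linear_combination bdy v k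
  · have : k = j+1 ∨ k = j+2 := by omega
    rcases this with rfl | rfl
    · rw [if_pos (by omega), if_neg (by omega)]
      rw [show j+1+1 = j+2 from rfl, gq_j2 v j, gq_j1 v j]
      rw [show j+2 - (j+1) = 1 from by omega, show j+1 - (j+1) = 0 from by omega, bq_zero]
      ring
    · rw [if_neg (by omega), if_neg (by omega)]
      rw [show j+2+1 = j+3 from rfl, gq_j3 v j, gq_j2 v j]
      rw [Nat.sub_self, bq_zero]
      ring

lemma key (v : ℚ) (j : ℕ) :
    P2 j * Sq v (j+2) + P1 v j * Sq v (j+1) + P0 v j * Sq v j = 0 := by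
  have hsum := Finset.sum_congr rfl (gq_succ_sub v j)
  rw [Finset.sum_range_sub (gq v j) (j+3), gq_j3, gq_zero, sub_zero] at hsum
  have e2 : ∑ k ∈ range (j+3), P2 j * (aq v k * bq v (j+2-k)) = P2 j * Sq v (j+2) := by
    rw [← Finset.mul_sum]; rfl
  have e1 : ∑ k ∈ range (j+3),
      P1 v j * (if k ≤ j+1 then aq v k * bq v (j+1-k) else 0) = P1 v j * Sq v (j+1) := by
    rw [← Finset.mul_sum]
    congr 1
    rw [Finset.sum_range_succ, if_neg (by omega), add_zero]
    exact Finset.sum_congr rfl fun k hk => if_pos (by simp only [mem_range] at hk; omega)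
  have e0 : ∑ k ∈ range (j+3),
      P0 v j * (if k ≤ j then aq v k * bq v (j-k) else 0) = P0 v j * Sq v j := by
    rw [← Finset.mul_sum]
    congr 1
    rw [Finset.sum_range_succ, if_neg (by omega), add_zero,
        Finset.sum_range_succ, if_neg (by omega), add_zero]
    exact Finset.sum_congr rfl fun k hk => if_pos (by simp only [mem_range] at hk; omega)
  rw [Finset.sum_add_distrib, Finset.sum_add_distrib, e2, e1, e0] at hsum
  exact hsum

lemma key_c (v : ℚ) (j : ℕ) :
    P2 j * cq v (j+2) + P1 v j * cq v (j+1) + P0 v j * cq v j = 0 := by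
  have e1 := c_step v j
  have e2 := c_step v (j+1)
  push_cast at e2
  rw [show j+1+1 = j+2 from rfl] at e2
  have hne : (((j:ℚ)+1)^3 * ((j:ℚ)+2)^3) ≠ 0 := by positivity
  have H : ((j:ℚ)+1)^3 * ((j:ℚ)+2)^3 *
      (P2 j * cq v (j+2) + P1 v j * cq v (j+1) + P0 v j * cq v j) = 0 := by
    simp only [P0, P1, P2, Qq] at *
    linear_combination (((j:ℚ)+1)^3 * (2*((j:ℚ)+1)*((j:ℚ)+2)^3)) * e2
      + ((2*((j:ℚ)+1)*((j:ℚ)+2)^3) * ((2*v+1+((j:ℚ)+1))*(1-2*v+((j:ℚ)+1))*(((j:ℚ)+1)+1/2))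
        + ((j:ℚ)+2)^3 * (-(2*(j:ℚ)+3)*((j:ℚ)+1)^3
          - (2*(j:ℚ)+2)*((2*v+1+((j:ℚ)+1))*(1-2*v+((j:ℚ)+1))*(((j:ℚ)+1)+1/2)))) * e1
  exact (mul_eq_zero.mp H).resolve_left hne

lemma Sq_zero (v : ℚ) : Sq v 0 = 1 := by
  simp [Sq, aq_zero, bq_zero]

lemma Sq_one (v : ℚ) : Sq v 1 = cq v 1 := by
  have h : Sq v 1 = aq v 0 * bq v 1 + aq v 1 * bq v 0 := by
    simp [Sq, Finset.sum_range_succ]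
  rw [h, aq_zero, bq_zero, bq_one, aq_one]
  simp [cq, ascPochhammer_one]
  ring

lemma S_eq_c (v : ℚ) (j : ℕ) : Sq v j = cq v j := by
  suffices h : ∀ j, Sq v j = cq v j ∧ Sq v (j+1) = cq v (j+1) from (h j).1
  intro j
  induction j with
  | zero => exact ⟨by rw [Sq_zero, cq_zero], Sq_one v⟩
  | succ p ih =>
    refine ⟨ih.2, ?_⟩
    have hk := key v p
    have hc := key_c v p
    have hp2 : P2 (p:ℚ) ≠ 0 := by simp only [P2]; positivity
    have h2 : P2 (p:ℚ) * (Sq v (p+2) - cq v (p+2)) = 0 := by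
      linear_combination hk - hc - P1 v p * ih.2 - P0 v p * ih.1
    have h3 := (mul_eq_zero.mp h2).resolve_left hp2
    have h4 : Sq v (p+2) = cq v (p+2) := by linarith [h3]
    exact h4

lemma pe_eq_prod (k : ℕ) (x : ℚ) :
    (ascPochhammer ℚ k).eval x = ∏ i ∈ range k, (x + i) := by
  induction k with
  | zero => simp
  | succ p ih => rw [pe_succ, ih, Finset.prod_range_succ]

lemma aq_vanish (n k : ℕ) (hn : 1 ≤ n) (h : n ≤ k) : aq (n:ℚ) k = 0 := by
  have hz : (ascPochhammer ℚ k).eval (1 - (n:ℚ)) = 0 := by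
    rw [pe_eq_prod]
    apply Finset.prod_eq_zero (Finset.mem_range.mpr (show n-1 < k by omega))
    rw [Nat.cast_sub hn]
    push_cast
    ring
  unfold aq
  rw [hz]
  simp

lemma bq_vanish (n l : ℕ) (h : n+1 ≤ l) : bq (n:ℚ) l = 0 := by
  have hz : (ascPochhammer ℚ l).eval (-(n:ℚ)) = 0 := by
    rw [pe_eq_prod]
    apply Finset.prod_eq_zero (Finset.mem_range.mpr (show n < l by omega))
    ring
  unfold bq
  rw [hz]
  simp

lemma cauchy (f g : ℕ → ℚ) (z : ℚ) (Nf Ng D : ℕ) (hD1 : 1 ≤ D)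
    (hf : ∀ k, Nf ≤ k → f k = 0) (hg : ∀ k, Ng ≤ k → g k = 0) (hD : Nf + Ng ≤ D + 1) :
    (∑ k ∈ range Nf, f k * z ^ k) * (∑ l ∈ range Ng, g l * z ^ l)
      = ∑ j ∈ range D, (∑ i ∈ range (j+1), f i * g (j - i)) * z ^ j := by
  classical
  set P : Polynomial ℚ := ∑ k ∈ range Nf, Polynomial.C (f k) * Polynomial.X ^ k with hP
  set Q : Polynomial ℚ := ∑ k ∈ range Ng, Polynomial.C (g k) * Polynomial.X ^ k with hQ
  have hPc : ∀ i, P.coeff i = f i := by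
    intro i
    rw [hP, Polynomial.finset_sum_coeff]
    simp only [Polynomial.coeff_C_mul, Polynomial.coeff_X_pow, mul_ite, mul_one, mul_zero]
    rw [Finset.sum_ite_eq (range Nf) i f]
    by_cases h : i ∈ range Nf
    · rw [if_pos h]
    · rw [if_neg h]
      exact (hf i (by simpa [Finset.mem_range, not_lt] using h)).symm
  have hQc : ∀ i, Q.coeff i = g i := by
    intro i
    rw [hQ, Polynomial.finset_sum_coeff]
    simp only [Polynomial.coeff_C_mul, Polynomial.coeff_X_pow, mul_ite, mul_one, mul_zero]
    rw [Finset.sum_ite_eq (range Ng) i g]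
    by_cases h : i ∈ range Ng
    · rw [if_pos h]
    · rw [if_neg h]
      exact (hg i (by simpa [Finset.mem_range, not_lt] using h)).symm
  have hcoeff : ∀ j, (P*Q).coeff j = ∑ i ∈ range (j+1), f i * g (j - i) := by
    intro j
    rw [Polynomial.coeff_mul, Finset.Nat.sum_antidiagonal_eq_sum_range_succ_mk]
    exact Finset.sum_congr rfl fun i _ => by rw [hPc, hQc]
  have hdeg : (P*Q).natDegree < D := by
    have hle : (P*Q).natDegree ≤ D - 1 := by
      rw [Polynomial.natDegree_le_iff_coeff_eq_zero]
      intro N hN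
      rw [hcoeff]
      apply Finset.sum_eq_zero
      intro i hi
      simp only [Finset.mem_range] at hi
      rcases le_or_gt Nf i with h | h
      · rw [hf i h, zero_mul]
      · rw [hg (N - i) (by omega), mul_zero]
    omega
  have heP : P.eval z = ∑ k ∈ range Nf, f k * z ^ k := by
    rw [hP, Polynomial.eval_finset_sum]
    exact Finset.sum_congr rfl fun k _ => by simp
  have heQ : Q.eval z = ∑ l ∈ range Ng, g l * z ^ l := by
    rw [hQ, Polynomial.eval_finset_sum]
    exact Finset.sum_congr rfl fun k _ => by simp
  calc (∑ k ∈ range Nf, f k * z ^ k) * (∑ l ∈ range Ng, g l * z ^ l)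
      = P.eval z * Q.eval z := by rw [heP, heQ]
    _ = (P*Q).eval z := (Polynomial.eval_mul).symm
    _ = ∑ j ∈ range D, (P*Q).coeff j * z ^ j := Polynomial.eval_eq_sum_range' hdeg z
    _ = ∑ j ∈ range D, (∑ i ∈ range (j+1), f i * g (j - i)) * z ^ j :=
        Finset.sum_congr rfl fun j _ => by rw [hcoeff]

end OrrAux

/-- **Terminating case of Orr's identity (α = m, β = 3-m), m ≥ 3 odd.** For `z ∈ ℚ`,
`(Σ_{k=0}^{(m-3)/2} (m/2)_k ((3-m)/2)_k / k!² z^k)(Σ_{l=0}^{(m-1)/2} (m/2)_l ((1-m)/2)_l / l!² z^l)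
  = Σ_{j=0}^{m-2} (m)_j (2-m)_j (1/2)_j / j!³ z^j`. -/
theorem orr_terminating_odd (m : ℕ) (hm3 : 3 ≤ m) (hm : Odd m) (z : ℚ) :
    (∑ k ∈ Finset.range ((m - 3) / 2 + 1),
        (ascPochhammer ℚ k).eval ((m : ℚ) / 2) *
          (ascPochhammer ℚ k).eval ((3 - (m : ℚ)) / 2) / ((k.factorial : ℚ))^2 * z^k) *
      (∑ l ∈ Finset.range ((m - 1) / 2 + 1),
        (ascPochhammer ℚ l).eval ((m : ℚ) / 2) *
          (ascPochhammer ℚ l).eval ((1 - (m : ℚ)) / 2) / ((l.factorial : ℚ))^2 * z^l)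
    = ∑ j ∈ Finset.range (m - 2 + 1),
        (ascPochhammer ℚ j).eval (m : ℚ) * (ascPochhammer ℚ j).eval (2 - (m : ℚ)) *
          (ascPochhammer ℚ j).eval (1 / 2) / ((j.factorial : ℚ))^3 * z^j := by
  obtain ⟨n, rfl⟩ := hm
  have hn1 : 1 ≤ n := by omega
  rw [show (2*n+1-3)/2+1 = n from by omega, show (2*n+1-1)/2+1 = n+1 from by omega,
      show 2*n+1-2+1 = 2*n from by omega]
  rw [show ((2*n+1 : ℕ):ℚ)/2 = (n:ℚ)+1/2 from by push_cast; ring,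
      show (3-((2*n+1 : ℕ):ℚ))/2 = 1-(n:ℚ) from by push_cast; ring,
      show (1-((2*n+1 : ℕ):ℚ))/2 = -(n:ℚ) from by push_cast; ring,
      show 2-((2*n+1 : ℕ):ℚ) = 1-2*(n:ℚ) from by push_cast; ring,
      show ((2*n+1 : ℕ):ℚ) = 2*(n:ℚ)+1 from by push_cast; ring]
  have hf : ∀ k, n ≤ k → OrrAux.aq (n:ℚ) k = 0 := fun k hk => OrrAux.aq_vanish n k hn1 hk
  have hg : ∀ l, n+1 ≤ l → OrrAux.bq (n:ℚ) l = 0 := fun l hl => OrrAux.bq_vanish n l hl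
  have hC := OrrAux.cauchy (OrrAux.aq (n:ℚ)) (OrrAux.bq (n:ℚ)) z n (n+1) (2*n)
    (by omega) hf hg (by omega)
  have hS : ∀ j, (∑ i ∈ Finset.range (j+1), OrrAux.aq (n:ℚ) i * OrrAux.bq (n:ℚ) (j - i))
      = OrrAux.cq (n:ℚ) j := fun j => OrrAux.S_eq_c (n:ℚ) j
  show (∑ k ∈ Finset.range n, OrrAux.aq (n:ℚ) k * z^k) *
      (∑ l ∈ Finset.range (n+1), OrrAux.bq (n:ℚ) l * z^l)
    = ∑ j ∈ Finset.range (2*n), OrrAux.cq (n:ℚ) j * z^j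
  rw [hC]
  exact Finset.sum_congr rfl fun j _ => by rw [hS j]
end

section
/- For every nonnegative integer k, the following identity holds in ℚ: C(−1/3, k) · C(−2/3, k) = C(2k,k) C(3k,k) / 27^k. -/
open Finset

lemma poch_third (k : ℕ) :
    (descPochhammer ℚ k).eval (-1 / 3) * (descPochhammer ℚ k).eval (-2 / 3)
      = ((3 * k).factorial : ℚ) / ((k.factorial : ℚ) * 27 ^ k) := by
  induction k with
  | zero => simp
  | succ k ih =>
    rw [descPochhammer_succ_eval, descPochhammer_succ_eval]
    have h1 : (3 * (k + 1)).factorial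
        = (3 * k + 3) * ((3 * k + 2) * ((3 * k + 1) * (3 * k).factorial)) := by
      have : 3 * (k + 1) = (3 * k + 2) + 1 := by ring
      rw [this, Nat.factorial_succ, show 3 * k + 2 = (3 * k + 1) + 1 from rfl,
        Nat.factorial_succ, show 3 * k + 1 = (3 * k) + 1 from rfl, Nat.factorial_succ]
    have hf : ((3 * k).factorial : ℚ) ≠ 0 := Nat.cast_ne_zero.mpr (Nat.factorial_ne_zero _)
    have hkf : (k.factorial : ℚ) ≠ 0 := Nat.cast_ne_zero.mpr (Nat.factorial_ne_zero _)
    have h27 : (27 : ℚ) ^ k ≠ 0 := pow_ne_zero _ (by norm_num)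
    rw [Nat.factorial_succ, h1]
    push_cast
    rw [mul_mul_mul_comm, ih]
    field_simp
    ring

/-- For every `k ∈ ℕ`, `C(-1/3, k) · C(-2/3, k) = C(2k,k) C(3k,k) / 27^k` in `ℚ`. -/
theorem genBinom_third (k : ℕ) :
    genBinom (-1 / 3) k * genBinom (-2 / 3) k
      = (Nat.choose (2 * k) k : ℚ) * (Nat.choose (3 * k) k : ℚ) / 27 ^ k := by
  have h2 : (2 * k).choose k * k.factorial * k.factorial = (2 * k).factorial := by
    have := Nat.choose_mul_factorial_mul_factorial (show k ≤ 2 * k by omega)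
    simpa [show 2 * k - k = k by omega] using this
  have h3 : (3 * k).choose k * k.factorial * (2 * k).factorial = (3 * k).factorial := by
    have := Nat.choose_mul_factorial_mul_factorial (show k ≤ 3 * k by omega)
    simpa [show 3 * k - k = 2 * k by omega] using this
  have hkf : (k.factorial : ℚ) ≠ 0 := Nat.cast_ne_zero.mpr (Nat.factorial_ne_zero _)
  have h27 : (27 : ℚ) ^ k ≠ 0 := pow_ne_zero _ (by norm_num)
  have h2' : ((2 * k).choose k : ℚ) * k.factorial * k.factorial = (2 * k).factorial := by
    exact_mod_cast congrArg (Nat.cast : ℕ → ℚ) h2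
  have h3' : ((3 * k).choose k : ℚ) * k.factorial * (2 * k).factorial = (3 * k).factorial := by
    exact_mod_cast congrArg (Nat.cast : ℕ → ℚ) h3
  have key : ((3 * k).factorial : ℚ)
      = ((2 * k).choose k : ℚ) * ((3 * k).choose k : ℚ) * (k.factorial : ℚ) ^ 3 := by
    linear_combination -(((3 * k).choose k : ℚ) * (k.factorial : ℚ) * h2') - h3'
  unfold genBinom
  rw [div_mul_div_comm, poch_third, key]
  field_simp
end

section
/- For every nonnegative integer k, the following identity holds in ℚ: C(−1/4, k) · C(−3/4, k) = C(2k,k) C(4k,2k) / 64^k. -/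
open Finset

lemma key_poch (k : ℕ) :
    (descPochhammer ℚ k).eval (-1 / 4) * (descPochhammer ℚ k).eval (-3 / 4)
      * 64 ^ k * (Nat.factorial (2 * k) : ℚ) = (Nat.factorial (4 * k) : ℚ) := by
  induction k with
  | zero => simp
  | succ n ih =>
    have e4 : Nat.factorial (4 * (n + 1))
        = (4*n+4) * ((4*n+3) * ((4*n+2) * ((4*n+1) * Nat.factorial (4*n)))) := by
      rw [show 4 * (n + 1) = 4*n+1+1+1+1 by ring]
      simp [Nat.factorial_succ]
    have e2 : Nat.factorial (2 * (n + 1))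
        = (2*n+2) * ((2*n+1) * Nat.factorial (2*n)) := by
      rw [show 2 * (n + 1) = 2*n+1+1 by ring]
      simp [Nat.factorial_succ]
    rw [descPochhammer_succ_eval, descPochhammer_succ_eval, e4, e2]
    push_cast
    linear_combination ((-1/4 - (n:ℚ)) * (-3/4 - (n:ℚ)) * 64 * ((2*n+2) * (2*n+1))) * ih

/-- For every `k ∈ ℕ`, `C(-1/4, k) · C(-3/4, k) = C(2k,k) C(4k,2k) / 64^k` in `ℚ`. -/
theorem genBinom_quarter (k : ℕ) :
    genBinom (-1 / 4) k * genBinom (-3 / 4) k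
      = (Nat.choose (2 * k) k : ℚ) * (Nat.choose (4 * k) (2 * k) : ℚ) / 64 ^ k := by
  have h1 : (2*k).choose k * k.factorial * k.factorial = (2*k).factorial := by
    have := Nat.choose_mul_factorial_mul_factorial (show k ≤ 2*k by omega)
    simpa [show 2*k - k = k by omega] using this
  have h2 : (4*k).choose (2*k) * (2*k).factorial * (2*k).factorial = (4*k).factorial := by
    have := Nat.choose_mul_factorial_mul_factorial (show 2*k ≤ 4*k by omega)
    simpa [show 4*k - 2*k = 2*k by omega] using this
  have hk : (Nat.factorial k : ℚ) ≠ 0 := Nat.cast_ne_zero.mpr k.factorial_ne_zero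
  have h2k : (Nat.factorial (2*k) : ℚ) ≠ 0 := Nat.cast_ne_zero.mpr (2*k).factorial_ne_zero
  have h64 : (64 : ℚ) ^ k ≠ 0 := by positivity
  have key := key_poch k
  have h1' : ((2*k).choose k : ℚ) * k.factorial * k.factorial = (2*k).factorial := by
    exact_mod_cast congrArg (Nat.cast : ℕ → ℚ) h1
  have h2' : ((4*k).choose (2*k) : ℚ) * (2*k).factorial * (2*k).factorial = (4*k).factorial := by
    exact_mod_cast congrArg (Nat.cast : ℕ → ℚ) h2
  unfold genBinom
  field_simp
  apply mul_right_cancel₀ (mul_ne_zero h2k h2k)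
  simp only [neg_div] at key
  linear_combination ((2*k).factorial : ℚ) * key - ((4*k).factorial : ℚ) * h1'
    - (((2*k).choose k : ℚ) * (k.factorial : ℚ) * (k.factorial : ℚ)) * h2'
end

section
/- For every nonnegative integer k, the following identity holds in ℚ: C(−1/6, k) · C(−5/6, k) = C(6k,3k) C(3k,k) / 432^k. -/
open Finset

lemma genBinom_sixth_aux (k : ℕ) : genBinom (-1/6) k * genBinom (-5/6) k *
    (((3*k).factorial : ℚ) * k.factorial * (2*k).factorial * 432^k)
    = ((6*k).factorial : ℚ) := by
  induction k with
  | zero => simp [genBinom]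
  | succ k ih =>
    have hf : (k.factorial : ℚ) ≠ 0 := by exact_mod_cast k.factorial_ne_zero
    have hk : ((k:ℚ)+1) ≠ 0 := by positivity
    have h1 : ∀ x : ℚ, genBinom x (k+1) = genBinom x k * (x - k) / (k+1) := by
      intro x
      simp only [genBinom, descPochhammer_succ_eval, Nat.factorial_succ]
      push_cast
      rw [div_mul_eq_mul_div, div_div]
      ring_nf
    have e3 : 3*(k+1) = (3*k+2)+1 := by ring
    have e2 : 2*(k+1) = (2*k+1)+1 := by ring
    have e6 : 6*(k+1) = (6*k+5)+1 := by ring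
    rw [h1, h1, e3, e2, e6]
    simp only [Nat.factorial_succ]
    push_cast
    field_simp
    rw [neg_div, neg_div] at ih
    linear_combination (432*(-1-6*(k:ℚ))*(-5-6*(k:ℚ))*(3*(k:ℚ)+1)*(3*(k:ℚ)+2)*(3*(k:ℚ)+3)*((k:ℚ)+1)*(2*(k:ℚ)+1)*(2*(k:ℚ)+2) - (25920*(k:ℚ) + 406944*(k:ℚ)^2 + 2485728*(k:ℚ)^3 + 7820064*(k:ℚ)^4 + 13880160*(k:ℚ)^5 + 14043456*(k:ℚ)^6 + 7558272*(k:ℚ)^7 + 1679616*(k:ℚ)^8)) * ih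

/-- For every `k ∈ ℕ`, `C(-1/6, k) · C(-5/6, k) = C(6k,3k) C(3k,k) / 432^k` in `ℚ`. -/
theorem genBinom_sixth (k : ℕ) :
    genBinom (-1 / 6) k * genBinom (-5 / 6) k
      = (Nat.choose (6 * k) (3 * k) : ℚ) * (Nat.choose (3 * k) k : ℚ) / 432 ^ k := by
  have h1 : (3*k) ≤ 6*k := by omega
  have h2 : k ≤ 3*k := by omega
  rw [Nat.cast_choose ℚ h1, Nat.cast_choose ℚ h2]
  have e1 : 6*k - 3*k = 3*k := by omega
  have e2 : 3*k - k = 2*k := by omega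
  rw [e1, e2]
  have hf : ∀ n : ℕ, (n.factorial : ℚ) ≠ 0 := fun n => by exact_mod_cast n.factorial_ne_zero
  have h432 : ((432:ℚ)^k) ≠ 0 := by positivity
  have := genBinom_sixth_aux k
  field_simp at this ⊢
  linear_combination this
end
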